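/- arXiv:1112.3304 — 6 statements merged into one kernel-verified Lean document; each statement's English description precedes it below -/
import Mathlib

section
/- For every s with 0 ≤ s < 1/3, there is no avoidance coupling of two s-lazy walkers on the looped three-vertex complete graph K_3^*. -/
open MeasureTheory ProbabilityTheory

/-- `X` is a faithful `s`-lazy walk on the looped complete graph `K_3^*`: at
each step it stays put with probability `s` and moves to each of the other two
vertices with probability `(1 - s)/2`. -/
def IsLazyWalk3 {Ω : Type} [MeasurableSpace Ω] (μ : Measure Ω) (s : ℝ)
    (X : ℕ → Ω → Fin 3) : Prop :=
  ∀ (t : ℕ) (v : ℕ → Fin 3),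
    μ {ω | ∀ u ≤ t + 1, X u ω = v u} =
      μ {ω | ∀ u ≤ t, X u ω = v u} *
        ENNReal.ofReal (if v (t + 1) = v t then s else (1 - s) / 2)

/-- The two walkers `X` (moving first in each round) and `Y` almost surely
never collide: for every `t`, `X t ≠ Y t` and `X (t+1) ≠ Y t`. -/
def AvoidsPairAE {Ω : Type} [MeasurableSpace Ω] (μ : Measure Ω)
    (X Y : ℕ → Ω → Fin 3) : Prop :=
  ∀ᵐ ω ∂μ, ∀ t : ℕ, X t ω ≠ Y t ω ∧ X (t + 1) ω ≠ Y t ω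

/-- The coupling of the two walkers `X, Y` (moving alternately in the order
`X 0, Y 0, X 1, Y 1, …`) is Markovian: there are transition rules `f, g` such
that conditionally on the history, `X (t+1)` is distributed as `f (X t, Y t)`
and `Y (t+1)` is distributed as `g (X (t+1), Y t)`. -/
def IsMarkovianPair {Ω : Type} [MeasurableSpace Ω] (μ : Measure Ω)
    (X Y : ℕ → Ω → Fin 3) : Prop :=
  ∃ f g : Fin 3 × Fin 3 → PMF (Fin 3),
    (∀ (t : ℕ) (v u : ℕ → Fin 3) (w : Fin 3),
      μ {ω | (∀ r ≤ t, X r ω = v r ∧ Y r ω = u r) ∧ X (t + 1) ω = w} =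
        μ {ω | ∀ r ≤ t, X r ω = v r ∧ Y r ω = u r} * f (v t, u t) w) ∧
    (∀ (t : ℕ) (v u : ℕ → Fin 3) (x w : Fin 3),
      μ {ω | ((∀ r ≤ t, X r ω = v r ∧ Y r ω = u r) ∧ X (t + 1) ω = x) ∧
             Y (t + 1) ω = w} =
        μ {ω | (∀ r ≤ t, X r ω = v r ∧ Y r ω = u r) ∧ X (t + 1) ω = x} *
          g (x, u t) w)

namespace NoAvoid
variable {Ω : Type} [MeasurableSpace Ω]

def cylE (X : ℕ → Ω → Fin 3) (t : ℕ) (p : Fin (t + 1) → Fin 3) : Set Ω :=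
  {ω | ∀ u : Fin (t + 1), X u ω = p u}

lemma measurableSet_cylE {X : ℕ → Ω → Fin 3} (hXm : ∀ t, Measurable (X t)) (t : ℕ)
    (p : Fin (t + 1) → Fin 3) : MeasurableSet (cylE X t p) := by
  have : cylE X t p = ⋂ u : Fin (t + 1), (X u) ⁻¹' {p u} := by
    ext ω; simp [cylE, Set.mem_iInter]
  rw [this]
  exact MeasurableSet.iInter fun u => (hXm u) (measurableSet_singleton _)

/-- The event `Y t = X t + e`. -/
def Dev (X Y : ℕ → Ω → Fin 3) (t : ℕ) (e : Fin 3) : Set Ω :=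
  {ω | Y t ω = X t ω + e}

/-- The event that `Y` stays at round `t`. -/
def Stay (Y : ℕ → Ω → Fin 3) (t : ℕ) : Set Ω := {ω | Y (t + 1) ω = Y t ω}

/-- Full avoidance event. -/
def Good (X Y : ℕ → Ω → Fin 3) : Set Ω :=
  {ω | ∀ t : ℕ, X t ω ≠ Y t ω ∧ X (t + 1) ω ≠ Y t ω}

lemma measurableSet_eqF {f g : Ω → Fin 3} (hf : Measurable f) (hg : Measurable g) :
    MeasurableSet {ω | f ω = g ω} := by
  have : {ω | f ω = g ω} = ⋃ v : Fin 3, f ⁻¹' {v} ∩ g ⁻¹' {v} := by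
    ext ω
    simp only [Set.mem_setOf_eq, Set.mem_iUnion, Set.mem_inter_iff, Set.mem_preimage,
      Set.mem_singleton_iff]
    constructor
    · intro h; exact ⟨g ω, h, rfl⟩
    · rintro ⟨v, h1, h2⟩; rw [h1, h2]
  rw [this]
  exact MeasurableSet.iUnion fun v =>
    (hf (measurableSet_singleton _)).inter (hg (measurableSet_singleton _))

lemma measurableSet_Dev {X Y : ℕ → Ω → Fin 3} (hXm : ∀ t, Measurable (X t))
    (hYm : ∀ t, Measurable (Y t)) (t : ℕ) (e : Fin 3) : MeasurableSet (Dev X Y t e) := by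
  have : Dev X Y t e = ⋃ v : Fin 3, (X t) ⁻¹' {v} ∩ (Y t) ⁻¹' {v + e} := by
    ext ω
    simp only [Dev, Set.mem_setOf_eq, Set.mem_iUnion, Set.mem_inter_iff, Set.mem_preimage,
      Set.mem_singleton_iff]
    constructor
    · intro h; exact ⟨X t ω, rfl, h⟩
    · rintro ⟨v, h1, h2⟩; rw [h1, h2]
  rw [this]
  exact MeasurableSet.iUnion fun v =>
    ((hXm t) (measurableSet_singleton _)).inter ((hYm t) (measurableSet_singleton _))

lemma measurableSet_Stay {Y : ℕ → Ω → Fin 3} (hYm : ∀ t, Measurable (Y t)) (t : ℕ) :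
    MeasurableSet (Stay Y t) := measurableSet_eqF (hYm (t + 1)) (hYm t)

lemma measurableSet_Good {X Y : ℕ → Ω → Fin 3} (hXm : ∀ t, Measurable (X t))
    (hYm : ∀ t, Measurable (Y t)) : MeasurableSet (Good X Y) := by
  have : Good X Y = ⋂ t : ℕ, ({ω | X t ω = Y t ω}ᶜ ∩ {ω | X (t + 1) ω = Y t ω}ᶜ) := by
    ext ω; simp [Good, Set.mem_iInter]
  rw [this]
  exact MeasurableSet.iInter fun t =>
    ((measurableSet_eqF (hXm t) (hYm t)).compl).inter
      ((measurableSet_eqF (hXm (t + 1)) (hYm t)).compl)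


def pad (t : ℕ) (p : Fin (t + 1) → Fin 3) : ℕ → Fin 3 :=
  fun u => if h : u < t + 1 then p ⟨u, h⟩ else 0

lemma cylE_eq (X : ℕ → Ω → Fin 3) (t : ℕ) (p : Fin (t + 1) → Fin 3) :
    {ω | ∀ u ≤ t, X u ω = pad t p u} = cylE X t p := by
  ext ω
  simp only [Set.mem_setOf_eq, cylE]
  constructor
  · intro H u
    have hu : (u : ℕ) ≤ t := Nat.lt_succ_iff.mp u.isLt
    have h2 := H u hu
    rwa [pad, dif_pos u.isLt, Fin.eta] at h2
  · intro H u hu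
    have hu' : u < t + 1 := Nat.lt_succ_of_le hu
    rw [pad, dif_pos hu']
    exact H ⟨u, hu'⟩

def IsLazyWalk3' (μ : Measure Ω) (s : ℝ) (X : ℕ → Ω → Fin 3) : Prop :=
  ∀ (t : ℕ) (v : ℕ → Fin 3),
    μ {ω | ∀ u ≤ t + 1, X u ω = v u} =
      μ {ω | ∀ u ≤ t, X u ω = v u} *
        ENNReal.ofReal (if v (t + 1) = v t then s else (1 - s) / 2)

lemma cyl_step {μ : Measure Ω} {s : ℝ} {X : ℕ → Ω → Fin 3} (hX : IsLazyWalk3' μ s X)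
    (t : ℕ) (p : Fin (t + 1) → Fin 3) (w : Fin 3) :
    μ (cylE X (t + 1) (Fin.snoc p w)) =
      μ (cylE X t p) * ENNReal.ofReal (if w = p (Fin.last t) then s else (1 - s) / 2) := by
  have h := hX t (pad (t + 1) (Fin.snoc p w))
  have e1 : {ω | ∀ u ≤ t + 1, X u ω = pad (t + 1) (Fin.snoc p w) u} =
      cylE X (t + 1) (Fin.snoc p w) := cylE_eq X (t + 1) (Fin.snoc p w)
  have e2 : {ω | ∀ u ≤ t, X u ω = pad (t + 1) (Fin.snoc p w) u} = cylE X t p := by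
    ext ω
    simp only [Set.mem_setOf_eq, cylE]
    constructor
    · intro H u
      have hu : (u : ℕ) ≤ t := Nat.lt_succ_iff.mp u.isLt
      have h2 := H u hu
      rw [pad, dif_pos (by omega : (u : ℕ) < t + 2)] at h2
      have h3 : (⟨(u : ℕ), by omega⟩ : Fin (t + 2)) = Fin.castSucc u := rfl
      rwa [h3, Fin.snoc_castSucc] at h2
    · intro H u hu
      have hu' : (u : ℕ) < t + 2 := by omega
      rw [pad, dif_pos hu']
      have h3 : (⟨(u : ℕ), hu'⟩ : Fin (t + 2)) = Fin.castSucc ⟨u, by omega⟩ := rfl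
      rw [h3, Fin.snoc_castSucc]
      exact H ⟨u, by omega⟩
  have hv1 : pad (t + 1) (Fin.snoc p w) (t + 1) = w := by
    rw [pad, dif_pos (by omega : t + 1 < t + 2)]
    exact Fin.snoc_last ..
  have hv0 : pad (t + 1) (Fin.snoc p w) t = p (Fin.last t) := by
    rw [pad, dif_pos (by omega : t < t + 2)]
    have h3 : (⟨t, by omega⟩ : Fin (t + 2)) = Fin.castSucc (Fin.last t) := rfl
    rw [h3]
    exact Fin.snoc_castSucc ..
  rw [e1, e2, hv1, hv0] at h
  exact h

lemma cyl_succ (X : ℕ → Ω → Fin 3) (t : ℕ) (p : Fin (t + 1) → Fin 3) (w : Fin 3) :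
    cylE X (t + 1) (Fin.snoc p w) = cylE X t p ∩ {ω | X (t + 1) ω = w} := by
  ext ω
  simp only [cylE, Set.mem_setOf_eq, Set.mem_inter_iff]
  constructor
  · intro H
    refine ⟨fun u => ?_, ?_⟩
    · have h2 := H (Fin.castSucc u)
      rwa [Fin.snoc_castSucc] at h2
    · have h2 := H (Fin.last (t + 1))
      rwa [Fin.snoc_last] at h2
  · rintro ⟨H1, H2⟩ u
    refine Fin.lastCases ?_ (fun i => ?_) u
    · rw [Fin.snoc_last]; exact H2
    · rw [Fin.snoc_castSucc]; exact H1 i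

lemma memC {X : ℕ → Ω → Fin 3} {t : ℕ} {p : Fin (t + 1) → Fin 3} {w : Fin 3} {ω : Ω}
    (hω : ω ∈ cylE X (t + 1) (Fin.snoc p w)) :
    X t ω = p (Fin.last t) ∧ X (t + 1) ω = w := by
  constructor
  · have h2 := hω (Fin.castSucc (Fin.last t))
    rwa [Fin.snoc_castSucc] at h2
  · have h2 := hω (Fin.last (t + 1))
    rwa [Fin.snoc_last] at h2

lemma sum_cyl_inter {μ : Measure Ω} {X : ℕ → Ω → Fin 3} (hXm : ∀ t, Measurable (X t))
    (t : ℕ) {E : Set Ω} (hE : MeasurableSet E) :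
    ∑ p : Fin (t + 1) → Fin 3, μ (cylE X t p ∩ E) = μ E := by
  have hcov : ⋃ p ∈ (Finset.univ : Finset (Fin (t + 1) → Fin 3)), (cylE X t p ∩ E) = E := by
    ext ω
    simp only [Set.mem_iUnion, Finset.mem_univ, Set.mem_inter_iff, exists_prop, true_and]
    constructor
    · rintro ⟨p, _, hω⟩; exact hω
    · intro hω; exact ⟨fun u => X u ω, fun u => rfl, hω⟩
  have hd : Set.PairwiseDisjoint (↑(Finset.univ : Finset (Fin (t + 1) → Fin 3)))
      (fun p => cylE X t p ∩ E) := by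
    intro p _ q _ hpq
    refine Set.disjoint_left.mpr ?_
    rintro ω ⟨h1, _⟩ ⟨h2, _⟩
    exact hpq (funext fun u => (h1 u).symm.trans (h2 u))
  have hm : ∀ p ∈ (Finset.univ : Finset (Fin (t + 1) → Fin 3)),
      MeasurableSet (cylE X t p ∩ E) := fun p _ => (measurableSet_cylE hXm t p).inter hE
  have key := measure_biUnion_finset (μ := μ) hd hm
  rw [hcov] at key
  exact key.symm

lemma child_split {μ : Measure Ω} {X : ℕ → Ω → Fin 3} (hXm : ∀ t, Measurable (X t))
    (t : ℕ) (p : Fin (t + 1) → Fin 3) {E : Set Ω} (hE : MeasurableSet E) :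
    μ (cylE X t p ∩ E) = ∑ w : Fin 3, μ (cylE X (t + 1) (Fin.snoc p w) ∩ E) := by
  have hcov : ⋃ w ∈ (Finset.univ : Finset (Fin 3)), (cylE X (t + 1) (Fin.snoc p w) ∩ E) =
      cylE X t p ∩ E := by
    ext ω
    simp only [Set.mem_iUnion, Finset.mem_univ, Set.mem_inter_iff, exists_prop, true_and]
    constructor
    · rintro ⟨w, h1, h2⟩
      rw [cyl_succ] at h1
      exact ⟨h1.1, h2⟩
    · rintro ⟨h1, h2⟩
      refine ⟨X (t + 1) ω, ?_, h2⟩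
      rw [cyl_succ]
      exact ⟨h1, rfl⟩
  have hd : Set.PairwiseDisjoint (↑(Finset.univ : Finset (Fin 3)))
      (fun w => cylE X (t + 1) (Fin.snoc p w) ∩ E) := by
    intro w _ w' _ hww
    refine Set.disjoint_left.mpr ?_
    rintro ω ⟨h1, _⟩ ⟨h2, _⟩
    exact hww (((memC h1).2).symm.trans (memC h2).2)
  have hm : ∀ w ∈ (Finset.univ : Finset (Fin 3)),
      MeasurableSet (cylE X (t + 1) (Fin.snoc p w) ∩ E) :=
    fun w _ => (measurableSet_cylE hXm (t + 1) _).inter hE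
  have key := measure_biUnion_finset (μ := μ) hd hm
  rw [hcov] at key
  exact key


section NullHelpers
variable {μ : Measure Ω} {X Y : ℕ → Ω → Fin 3}

lemma mu_inter_good (hAv : μ (Good X Y)ᶜ = 0) (E : Set Ω) : μ (E ∩ Good X Y) = μ E := by
  refine le_antisymm (measure_mono Set.inter_subset_left) ?_
  calc μ E ≤ μ (E ∩ Good X Y ∪ (Good X Y)ᶜ) := by
        refine measure_mono fun ω hω => ?_
        by_cases h : ω ∈ Good X Y
        · exact Or.inl ⟨hω, h⟩
        · exact Or.inr h
    _ ≤ μ (E ∩ Good X Y) + μ (Good X Y)ᶜ := measure_union_le _ _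
    _ = μ (E ∩ Good X Y) := by rw [hAv, add_zero]

lemma meas_eq_good (hAv : μ (Good X Y)ᶜ = 0) {E F : Set Ω}
    (h : E ∩ Good X Y = F ∩ Good X Y) : μ E = μ F := by
  rw [← mu_inter_good hAv E, h, mu_inter_good hAv F]

lemma meas_zero_good (hAv : μ (Good X Y)ᶜ = 0) {E : Set Ω}
    (h : E ∩ Good X Y = ∅) : μ E = 0 := by
  rw [← mu_inter_good hAv E, h, measure_empty]

end NullHelpers

lemma mu_stay {μ : Measure Ω} {s : ℝ} {Y : ℕ → Ω → Fin 3} [IsProbabilityMeasure μ]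
    (hYm : ∀ t, Measurable (Y t)) (hY : IsLazyWalk3' μ s Y) (t : ℕ) :
    μ (Stay Y t) = ENNReal.ofReal s := by
  have h1 : ∀ u : Fin (t + 1) → Fin 3,
      cylE Y t u ∩ Stay Y t = cylE Y (t + 1) (Fin.snoc u (u (Fin.last t))) := by
    intro u
    rw [cyl_succ]
    ext ω
    simp only [Set.mem_inter_iff, Stay, Set.mem_setOf_eq]
    constructor
    · rintro ⟨hc, hs⟩
      exact ⟨hc, by rw [hs]; exact hc (Fin.last t)⟩
    · rintro ⟨hc, hs⟩
      exact ⟨hc, by rw [hs]; exact (hc (Fin.last t)).symm⟩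
  have hsum : ∑ u : Fin (t + 1) → Fin 3, μ (cylE Y t u) = 1 := by
    have := sum_cyl_inter (μ := μ) hYm t MeasurableSet.univ
    simpa [Set.inter_univ] using this
  calc μ (Stay Y t) = ∑ u : Fin (t + 1) → Fin 3, μ (cylE Y t u ∩ Stay Y t) :=
        (sum_cyl_inter hYm t (measurableSet_Stay hYm t)).symm
    _ = ∑ u : Fin (t + 1) → Fin 3, μ (cylE Y t u) * ENNReal.ofReal s := by
        refine Finset.sum_congr rfl fun u _ => ?_
        rw [h1 u, cyl_step hY, if_pos rfl]
    _ = (∑ u : Fin (t + 1) → Fin 3, μ (cylE Y t u)) * ENNReal.ofReal s := by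
        rw [Finset.sum_mul]
    _ = ENNReal.ofReal s := by rw [hsum, one_mul]

lemma fin3A : ∀ x y : Fin 3, y ≠ x → y = x + 1 ∨ y = x + 2 := by decide
lemma fin3B : ∀ x y : Fin 3, y ≠ x → y ≠ x + 2 → y = x + 1 := by decide
lemma fin3C : ∀ x y : Fin 3, y ≠ x → y ≠ x + 1 → y = x + 2 := by decide
lemma fin3D : ∀ a : Fin 3, a + 2 + 2 = a + 1 := by decide
lemma fin3E : ∀ a : Fin 3, a + 1 + 1 = a + 2 := by decide
lemma fin3F : ∀ a : Fin 3, a + 2 ≠ a := by decide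
lemma fin3G : ∀ a : Fin 3, a + 1 ≠ a := by decide
lemma fin3H : ∀ a : Fin 3, a + 1 ≠ a + 2 := by decide

lemma sum3 (g : Fin 3 → ENNReal) (a : Fin 3) :
    ∑ w : Fin 3, g w = g a + g (a + 1) + g (a + 2) := by
  fin_cases a <;> rw [Fin.sum_univ_three] <;>
    simp only [show ((0 : Fin 3) + 1) = 1 from rfl, show ((0 : Fin 3) + 2) = 2 from rfl,
      show ((1 : Fin 3) + 1) = 2 from rfl, show ((1 : Fin 3) + 2) = 0 from rfl,
      show ((2 : Fin 3) + 1) = 0 from rfl, show ((2 : Fin 3) + 2) = 1 from rfl] <;>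
    simp only [Fin.reduceFinMk, Fin.isValue, Fin.reduceAdd] <;>
    abel

noncomputable def Sq (μ : Measure Ω) (X Y : ℕ → Ω → Fin 3) (t : ℕ) : ENNReal :=
  ∑ p : Fin (t + 1) → Fin 3,
    min (μ (cylE X t p ∩ Dev X Y t 1)) (μ (cylE X t p ∩ Dev X Y t 2))

lemma Sq_succ (μ : Measure Ω) (X Y : ℕ → Ω → Fin 3) (t : ℕ) :
    Sq μ X Y (t + 1) = ∑ p : Fin (t + 1) → Fin 3, ∑ w : Fin 3,
      min (μ (cylE X (t + 1) (Fin.snoc p w) ∩ Dev X Y (t + 1) 1))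
        (μ (cylE X (t + 1) (Fin.snoc p w) ∩ Dev X Y (t + 1) 2)) := by
  rw [Sq]
  have h := Fintype.sum_equiv (Fin.snocEquiv (fun _ : Fin (t + 2) => Fin 3))
    (fun x : Fin 3 × (Fin (t + 1) → Fin 3) =>
      min (μ (cylE X (t + 1) (Fin.snoc x.2 x.1) ∩ Dev X Y (t + 1) 1))
        (μ (cylE X (t + 1) (Fin.snoc x.2 x.1) ∩ Dev X Y (t + 1) 2)))
    (fun q => min (μ (cylE X (t + 1) q ∩ Dev X Y (t + 1) 1))
      (μ (cylE X (t + 1) q ∩ Dev X Y (t + 1) 2)))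
    (fun x => by
      congr 2 <;> · congr 1; funext i; simp [Fin.snocEquiv])
  rw [← h, Fintype.sum_prod_type]
  rw [Finset.sum_comm]


lemma factsC {X Y : ℕ → Ω → Fin 3} {t : ℕ} {p : Fin (t + 1) → Fin 3} {w : Fin 3} {ω : Ω}
    (hc : ω ∈ cylE X (t + 1) (Fin.snoc p w)) (hg : ω ∈ Good X Y) :
    X t ω = p (Fin.last t) ∧ X (t + 1) ω = w ∧ Y t ω ≠ p (Fin.last t) ∧ Y t ω ≠ w ∧
      Y (t + 1) ω ≠ w := by
  obtain ⟨hx, hx'⟩ := memC hc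
  refine ⟨hx, hx', ?_, ?_, ?_⟩
  · intro h; exact (hg t).1 (hx.trans h.symm)
  · intro h; exact (hg t).2 (hx'.trans h.symm)
  · intro h; exact (hg (t + 1)).1 (hx'.trans h.symm)

lemma min_lem (T1 T2 R1 R2 : ENNReal) :
    min (T1 + R2) (T2 + R1) ≤ T1 + T2 + min (T1 + R1) (T2 + R2) := by
  rcases le_total (T1 + R1) (T2 + R2) with hc | hc
  · rw [min_eq_left hc]
    calc min (T1 + R2) (T2 + R1) ≤ T2 + R1 := min_le_right _ _
      _ ≤ (T1 + T2) + (T1 + R1) := add_le_add le_add_self le_add_self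
      _ = T1 + T2 + (T1 + R1) := rfl
  · rw [min_eq_right hc]
    calc min (T1 + R2) (T2 + R1) ≤ T1 + R2 := min_le_left _ _
      _ ≤ (T1 + T2) + (T2 + R2) := add_le_add le_self_add le_add_self
      _ = T1 + T2 + (T2 + R2) := rfl

lemma key {μ : Measure Ω} {s : ℝ} {X Y : ℕ → Ω → Fin 3}
    (hXm : ∀ t, Measurable (X t)) (hYm : ∀ t, Measurable (Y t))
    (hX : IsLazyWalk3' μ s X) (hG : μ (Good X Y)ᶜ = 0) (t : ℕ) (p : Fin (t + 1) → Fin 3) :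
    min (μ (cylE X (t + 1) (Fin.snoc p (p (Fin.last t))) ∩ Dev X Y (t + 1) 1))
        (μ (cylE X (t + 1) (Fin.snoc p (p (Fin.last t))) ∩ Dev X Y (t + 1) 2))
    + min (μ (cylE X (t + 1) (Fin.snoc p (p (Fin.last t) + 1)) ∩ Dev X Y (t + 1) 1))
        (μ (cylE X (t + 1) (Fin.snoc p (p (Fin.last t) + 1)) ∩ Dev X Y (t + 1) 2))
    + min (μ (cylE X (t + 1) (Fin.snoc p (p (Fin.last t) + 2)) ∩ Dev X Y (t + 1) 1))
        (μ (cylE X (t + 1) (Fin.snoc p (p (Fin.last t) + 2)) ∩ Dev X Y (t + 1) 2))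
    + μ (cylE X t p) * ENNReal.ofReal ((1 - s) / 2)
    ≤ μ (cylE X t p ∩ Stay Y t)
      + min (μ (cylE X t p ∩ Dev X Y t 1)) (μ (cylE X t p ∩ Dev X Y t 2)) := by
  set a := p (Fin.last t) with ha
  set C : Fin 3 → Set Ω := fun w => cylE X (t + 1) (Fin.snoc p w) with hC
  set T1 : Set Ω := (C a ∩ Dev X Y t 1) ∩ Stay Y t with hT1
  set T2 : Set Ω := (C a ∩ Dev X Y t 2) ∩ Stay Y t with hT2
  set R1 : Set Ω := (C a ∩ Dev X Y t 1) \ Stay Y t with hR1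
  set R2 : Set Ω := (C a ∩ Dev X Y t 2) \ Stay Y t with hR2
  have hCm : ∀ w, MeasurableSet (C w) := fun w => measurableSet_cylE hXm (t + 1) _
  have hD1m := measurableSet_Dev hXm hYm t 1
  have hD2m := measurableSet_Dev hXm hYm t 2
  have hStm := measurableSet_Stay hYm t
  -- K1
  have K1 : μ (C (a + 2) ∩ Dev X Y (t + 1) 2) = μ (C (a + 2) ∩ Stay Y t) := by
    refine meas_eq_good hG ?_
    ext ω
    simp only [Set.mem_inter_iff, Dev, Stay, Set.mem_setOf_eq, hC]
    constructor
    · rintro ⟨⟨hc, hd⟩, hg⟩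
      obtain ⟨hx, hx', hy1, hy2, _⟩ := factsC hc hg
      have hyt : Y t ω = a + 1 := fin3B a _ hy1 hy2
      refine ⟨⟨hc, ?_⟩, hg⟩
      rw [hd, hx', fin3D, hyt]
    · rintro ⟨⟨hc, hst⟩, hg⟩
      obtain ⟨hx, hx', hy1, hy2, _⟩ := factsC hc hg
      have hyt : Y t ω = a + 1 := fin3B a _ hy1 hy2
      refine ⟨⟨hc, ?_⟩, hg⟩
      rw [hst, hyt, hx', fin3D]
  -- K2
  have K2 : μ (C (a + 1) ∩ Dev X Y (t + 1) 1) = μ (C (a + 1) ∩ Stay Y t) := by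
    refine meas_eq_good hG ?_
    ext ω
    simp only [Set.mem_inter_iff, Dev, Stay, Set.mem_setOf_eq, hC]
    constructor
    · rintro ⟨⟨hc, hd⟩, hg⟩
      obtain ⟨hx, hx', hy1, hy2, _⟩ := factsC hc hg
      have hyt : Y t ω = a + 2 := fin3C a _ hy1 hy2
      refine ⟨⟨hc, ?_⟩, hg⟩
      rw [hd, hx', fin3E, hyt]
    · rintro ⟨⟨hc, hst⟩, hg⟩
      obtain ⟨hx, hx', hy1, hy2, _⟩ := factsC hc hg
      have hyt : Y t ω = a + 2 := fin3C a _ hy1 hy2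
      refine ⟨⟨hc, ?_⟩, hg⟩
      rw [hst, hyt, hx', fin3E]
  -- K3
  have K3 : μ (C a ∩ Dev X Y (t + 1) 1) = μ T1 + μ R2 := by
    have hid : (C a ∩ Dev X Y (t + 1) 1) ∩ Good X Y = (T1 ∪ R2) ∩ Good X Y := by
      ext ω
      simp only [Set.mem_inter_iff, Set.mem_union, Set.mem_diff, Dev, Stay, Set.mem_setOf_eq,
        hT1, hT2, hR1, hR2, hC]
      constructor
      · rintro ⟨⟨hc, hd⟩, hg⟩
        obtain ⟨hx, hx', hy1, hy2, _⟩ := factsC hc hg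
        rw [hx'] at hd
        rcases fin3A a _ hy1 with h1 | h2
        · exact ⟨Or.inl ⟨⟨hc, by rw [hx]; exact h1⟩, by rw [hd, h1]⟩, hg⟩
        · refine ⟨Or.inr ⟨⟨hc, by rw [hx]; exact h2⟩, ?_⟩, hg⟩
          rw [hd, h2]; exact fin3H a
      · rintro ⟨hmem, hg⟩
        rcases hmem with ⟨⟨hc, hdev⟩, hst⟩ | ⟨⟨hc, hdev⟩, hnst⟩
        · obtain ⟨hx, hx', _, _, _⟩ := factsC hc hg
          refine ⟨⟨hc, ?_⟩, hg⟩
          rw [hst, hdev, hx, hx']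
        · obtain ⟨hx, hx', _, _, hy3⟩ := factsC hc hg
          refine ⟨⟨hc, ?_⟩, hg⟩
          have hne2 : Y (t + 1) ω ≠ a + 2 := by
            intro h
            exact hnst (by rw [h, hdev, hx])
          rw [hx']
          exact fin3B a _ hy3 hne2
    rw [meas_eq_good hG hid]
    refine measure_union ?_ ((((hCm a).inter hD2m).diff hStm))
    exact Set.disjoint_left.mpr fun ω h1 h2 => h2.2 h1.2
  -- K4
  have K4 : μ (C a ∩ Dev X Y (t + 1) 2) = μ T2 + μ R1 := by
    have hid : (C a ∩ Dev X Y (t + 1) 2) ∩ Good X Y = (T2 ∪ R1) ∩ Good X Y := by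
      ext ω
      simp only [Set.mem_inter_iff, Set.mem_union, Set.mem_diff, Dev, Stay, Set.mem_setOf_eq,
        hT1, hT2, hR1, hR2, hC]
      constructor
      · rintro ⟨⟨hc, hd⟩, hg⟩
        obtain ⟨hx, hx', hy1, hy2, _⟩ := factsC hc hg
        rw [hx'] at hd
        rcases fin3A a _ hy1 with h1 | h2
        · refine ⟨Or.inr ⟨⟨hc, by rw [hx]; exact h1⟩, ?_⟩, hg⟩
          rw [hd, h1]
          intro hcon
          exact fin3H a hcon.symm
        · exact ⟨Or.inl ⟨⟨hc, by rw [hx]; exact h2⟩, by rw [hd, h2]⟩, hg⟩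
      · rintro ⟨hmem, hg⟩
        rcases hmem with ⟨⟨hc, hdev⟩, hst⟩ | ⟨⟨hc, hdev⟩, hnst⟩
        · obtain ⟨hx, hx', _, _, _⟩ := factsC hc hg
          refine ⟨⟨hc, ?_⟩, hg⟩
          rw [hst, hdev, hx, hx']
        · obtain ⟨hx, hx', _, _, hy3⟩ := factsC hc hg
          refine ⟨⟨hc, ?_⟩, hg⟩
          have hne1 : Y (t + 1) ω ≠ a + 1 := by
            intro h
            exact hnst (by rw [h, hdev, hx])
          rw [hx']
          exact fin3C a _ hy3 hne1
    rw [meas_eq_good hG hid]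
    refine measure_union ?_ ((((hCm a).inter hD1m).diff hStm))
    exact Set.disjoint_left.mpr fun ω h1 h2 => h2.2 h1.2
  -- K5
  have K5 : μ (C a ∩ Stay Y t) = μ T1 + μ T2 := by
    have hid : (C a ∩ Stay Y t) ∩ Good X Y = (T1 ∪ T2) ∩ Good X Y := by
      ext ω
      simp only [Set.mem_inter_iff, Set.mem_union, Dev, Stay, Set.mem_setOf_eq,
        hT1, hT2, hC]
      constructor
      · rintro ⟨⟨hc, hst⟩, hg⟩
        obtain ⟨hx, hx', hy1, hy2, _⟩ := factsC hc hg
        rcases fin3A a _ hy1 with h1 | h2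
        · exact ⟨Or.inl ⟨⟨hc, by rw [hx]; exact h1⟩, hst⟩, hg⟩
        · exact ⟨Or.inr ⟨⟨hc, by rw [hx]; exact h2⟩, hst⟩, hg⟩
      · rintro ⟨hmem, hg⟩
        rcases hmem with ⟨⟨hc, _⟩, hst⟩ | ⟨⟨hc, _⟩, hst⟩ <;> exact ⟨⟨hc, hst⟩, hg⟩
    rw [meas_eq_good hG hid]
    refine measure_union ?_ (((hCm a).inter hD2m).inter hStm)
    refine Set.disjoint_left.mpr fun ω h1 h2 => ?_
    exact fin3H (X t ω) ((h1.1.2).symm.trans h2.1.2)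
  -- K6 K7
  have K6 : μ (C a ∩ Dev X Y t 1) = μ T1 + μ R1 :=
    (measure_inter_add_diff (C a ∩ Dev X Y t 1) hStm).symm
  have K7 : μ (C a ∩ Dev X Y t 2) = μ T2 + μ R2 :=
    (measure_inter_add_diff (C a ∩ Dev X Y t 2) hStm).symm
  -- K8 K9
  have K8 : μ (C (a + 2)) = μ (cylE X t p) * ENNReal.ofReal ((1 - s) / 2) := by
    rw [hC]
    rw [cyl_step hX, if_neg (fin3F a)]
  have K9 : μ (C (a + 1)) = μ (cylE X t p) * ENNReal.ofReal ((1 - s) / 2) := by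
    rw [hC]
    rw [cyl_step hX, if_neg (fin3G a)]
  -- K10-K13
  have K10 : μ (C (a + 2) ∩ Dev X Y t 1) = μ (C (a + 2)) := by
    refine meas_eq_good hG ?_
    ext ω
    simp only [Set.mem_inter_iff, Dev, Set.mem_setOf_eq, hC]
    constructor
    · rintro ⟨⟨hc, _⟩, hg⟩; exact ⟨hc, hg⟩
    · rintro ⟨hc, hg⟩
      obtain ⟨hx, hx', hy1, hy2, _⟩ := factsC hc hg
      refine ⟨⟨hc, ?_⟩, hg⟩
      rw [hx]
      exact fin3B a _ hy1 hy2
  have K12 : μ (C (a + 1) ∩ Dev X Y t 2) = μ (C (a + 1)) := by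
    refine meas_eq_good hG ?_
    ext ω
    simp only [Set.mem_inter_iff, Dev, Set.mem_setOf_eq, hC]
    constructor
    · rintro ⟨⟨hc, _⟩, hg⟩; exact ⟨hc, hg⟩
    · rintro ⟨hc, hg⟩
      obtain ⟨hx, hx', hy1, hy2, _⟩ := factsC hc hg
      refine ⟨⟨hc, ?_⟩, hg⟩
      rw [hx]
      exact fin3C a _ hy1 hy2
  have K11 : μ (C (a + 1) ∩ Dev X Y t 1) = 0 := by
    refine meas_zero_good hG ?_
    refine Set.eq_empty_iff_forall_notMem.mpr fun ω hω => ?_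
    obtain ⟨⟨hc, hd⟩, hg⟩ := hω
    obtain ⟨hx, hx', hy1, hy2, _⟩ := factsC hc hg
    have hyt : Y t ω = a + 2 := fin3C a _ hy1 hy2
    have hd' : Y t ω = X t ω + 1 := hd
    rw [hx] at hd'
    exact fin3H a (hd'.symm.trans hyt)
  have K13 : μ (C (a + 2) ∩ Dev X Y t 2) = 0 := by
    refine meas_zero_good hG ?_
    refine Set.eq_empty_iff_forall_notMem.mpr fun ω hω => ?_
    obtain ⟨⟨hc, hd⟩, hg⟩ := hω
    obtain ⟨hx, hx', hy1, hy2, _⟩ := factsC hc hg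
    have hyt : Y t ω = a + 1 := fin3B a _ hy1 hy2
    have hd' : Y t ω = X t ω + 2 := hd
    rw [hx] at hd'
    exact fin3H a (hyt.symm.trans hd')
  -- K14 K15 K16
  have K14 : μ (cylE X t p ∩ Dev X Y t 1) =
      μ (C a ∩ Dev X Y t 1) + μ (C (a + 1) ∩ Dev X Y t 1) + μ (C (a + 2) ∩ Dev X Y t 1) := by
    rw [child_split hXm t p hD1m, sum3 _ a]
  have K15 : μ (cylE X t p ∩ Dev X Y t 2) =
      μ (C a ∩ Dev X Y t 2) + μ (C (a + 1) ∩ Dev X Y t 2) + μ (C (a + 2) ∩ Dev X Y t 2) := by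
    rw [child_split hXm t p hD2m, sum3 _ a]
  have K16 : μ (cylE X t p ∩ Stay Y t) =
      μ (C a ∩ Stay Y t) + μ (C (a + 1) ∩ Stay Y t) + μ (C (a + 2) ∩ Stay Y t) := by
    rw [child_split hXm t p hStm, sum3 _ a]
  -- assembly
  rw [K3, K4, K16, K5, K14, K15, K11, K13, K10, K12, K8, K9, K6, K7]
  simp only [add_zero]
  rw [min_add_add_right]
  calc min (μ T1 + μ R2) (μ T2 + μ R1)
        + min (μ (C (a + 1) ∩ Dev X Y (t + 1) 1)) (μ (C (a + 1) ∩ Dev X Y (t + 1) 2))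
        + min (μ (C (a + 2) ∩ Dev X Y (t + 1) 1)) (μ (C (a + 2) ∩ Dev X Y (t + 1) 2))
        + μ (cylE X t p) * ENNReal.ofReal ((1 - s) / 2)
      ≤ (μ T1 + μ T2 + min (μ T1 + μ R1) (μ T2 + μ R2)) + μ (C (a + 1) ∩ Stay Y t)
        + μ (C (a + 2) ∩ Stay Y t) + μ (cylE X t p) * ENNReal.ofReal ((1 - s) / 2) := by
        exact add_le_add (add_le_add (add_le_add (min_lem _ _ _ _)
          ((min_le_left _ _).trans (le_of_eq K2)))
          ((min_le_right _ _).trans (le_of_eq K1))) le_rfl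
    _ = μ T1 + μ T2 + μ (C (a + 1) ∩ Stay Y t) + μ (C (a + 2) ∩ Stay Y t)
        + (min (μ T1 + μ R1) (μ T2 + μ R2) + μ (cylE X t p) * ENNReal.ofReal ((1 - s) / 2)) := by
        ring


lemma lower1 {μ : Measure Ω} {s : ℝ} {X Y : ℕ → Ω → Fin 3}
    (hXm : ∀ t, Measurable (X t)) (hYm : ∀ t, Measurable (Y t))
    (hX : IsLazyWalk3' μ s X) (hG : μ (Good X Y)ᶜ = 0) (t : ℕ) (p : Fin (t + 1) → Fin 3) :
    μ (cylE X t p) * ENNReal.ofReal ((1 - s) / 2) ≤ μ (cylE X t p ∩ Dev X Y t 1) := by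
  set a := p (Fin.last t) with ha
  have K8 : μ (cylE X (t + 1) (Fin.snoc p (a + 2))) =
      μ (cylE X t p) * ENNReal.ofReal ((1 - s) / 2) := by
    rw [cyl_step hX, if_neg (fin3F a)]
  have K10 : μ (cylE X (t + 1) (Fin.snoc p (a + 2)) ∩ Dev X Y t 1) =
      μ (cylE X (t + 1) (Fin.snoc p (a + 2))) := by
    refine meas_eq_good hG ?_
    ext ω
    simp only [Set.mem_inter_iff, Dev, Set.mem_setOf_eq]
    constructor
    · rintro ⟨⟨hc, _⟩, hg⟩; exact ⟨hc, hg⟩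
    · rintro ⟨hc, hg⟩
      obtain ⟨hx, hx', hy1, hy2, _⟩ := factsC hc hg
      refine ⟨⟨hc, ?_⟩, hg⟩
      rw [hx]
      exact fin3B a _ hy1 hy2
  calc μ (cylE X t p) * ENNReal.ofReal ((1 - s) / 2)
      = μ (cylE X (t + 1) (Fin.snoc p (a + 2)) ∩ Dev X Y t 1) := by rw [K10, K8]
    _ ≤ μ (cylE X t p ∩ Dev X Y t 1) := by
        refine measure_mono (Set.inter_subset_inter_left _ ?_)
        rw [cyl_succ]
        exact Set.inter_subset_left

lemma lower2 {μ : Measure Ω} {s : ℝ} {X Y : ℕ → Ω → Fin 3}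
    (hXm : ∀ t, Measurable (X t)) (hYm : ∀ t, Measurable (Y t))
    (hX : IsLazyWalk3' μ s X) (hG : μ (Good X Y)ᶜ = 0) (t : ℕ) (p : Fin (t + 1) → Fin 3) :
    μ (cylE X t p) * ENNReal.ofReal ((1 - s) / 2) ≤ μ (cylE X t p ∩ Dev X Y t 2) := by
  set a := p (Fin.last t) with ha
  have K9 : μ (cylE X (t + 1) (Fin.snoc p (a + 1))) =
      μ (cylE X t p) * ENNReal.ofReal ((1 - s) / 2) := by
    rw [cyl_step hX, if_neg (fin3G a)]
  have K12 : μ (cylE X (t + 1) (Fin.snoc p (a + 1)) ∩ Dev X Y t 2) =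
      μ (cylE X (t + 1) (Fin.snoc p (a + 1))) := by
    refine meas_eq_good hG ?_
    ext ω
    simp only [Set.mem_inter_iff, Dev, Set.mem_setOf_eq]
    constructor
    · rintro ⟨⟨hc, _⟩, hg⟩; exact ⟨hc, hg⟩
    · rintro ⟨hc, hg⟩
      obtain ⟨hx, hx', hy1, hy2, _⟩ := factsC hc hg
      refine ⟨⟨hc, ?_⟩, hg⟩
      rw [hx]
      exact fin3C a _ hy1 hy2
  calc μ (cylE X t p) * ENNReal.ofReal ((1 - s) / 2)
      = μ (cylE X (t + 1) (Fin.snoc p (a + 1)) ∩ Dev X Y t 2) := by rw [K12, K9]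
    _ ≤ μ (cylE X t p ∩ Dev X Y t 2) := by
        refine measure_mono (Set.inter_subset_inter_left _ ?_)
        rw [cyl_succ]
        exact Set.inter_subset_left

lemma Sq_lower {μ : Measure Ω} {s : ℝ} {X Y : ℕ → Ω → Fin 3} [IsProbabilityMeasure μ]
    (hXm : ∀ t, Measurable (X t)) (hYm : ∀ t, Measurable (Y t))
    (hX : IsLazyWalk3' μ s X) (hG : μ (Good X Y)ᶜ = 0) (t : ℕ) :
    ENNReal.ofReal ((1 - s) / 2) ≤ Sq μ X Y t := by
  have hsum1 : ∑ p : Fin (t + 1) → Fin 3, μ (cylE X t p) = 1 := by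
    have := sum_cyl_inter (μ := μ) hXm t MeasurableSet.univ
    simpa [Set.inter_univ] using this
  calc ENNReal.ofReal ((1 - s) / 2)
      = (∑ p : Fin (t + 1) → Fin 3, μ (cylE X t p)) * ENNReal.ofReal ((1 - s) / 2) := by
        rw [hsum1, one_mul]
    _ = ∑ p : Fin (t + 1) → Fin 3, μ (cylE X t p) * ENNReal.ofReal ((1 - s) / 2) := by
        rw [Finset.sum_mul]
    _ ≤ Sq μ X Y t := by
        refine Finset.sum_le_sum fun p _ => ?_
        exact le_min (lower1 hXm hYm hX hG t p) (lower2 hXm hYm hX hG t p)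

lemma Sq_upper {μ : Measure Ω} {X Y : ℕ → Ω → Fin 3} [IsProbabilityMeasure μ]
    (hXm : ∀ t, Measurable (X t)) (hYm : ∀ t, Measurable (Y t)) :
    Sq μ X Y 0 + Sq μ X Y 0 ≤ 1 := by
  have h1 : Sq μ X Y 0 ≤ μ (Dev X Y 0 1) := by
    rw [Sq, ← sum_cyl_inter (μ := μ) hXm 0 (measurableSet_Dev hXm hYm 0 1)]
    exact Finset.sum_le_sum fun p _ => min_le_left _ _
  have h2 : Sq μ X Y 0 ≤ μ (Dev X Y 0 2) := by
    rw [Sq, ← sum_cyl_inter (μ := μ) hXm 0 (measurableSet_Dev hXm hYm 0 2)]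
    exact Finset.sum_le_sum fun p _ => min_le_right _ _
  have hdisj : Disjoint (Dev X Y 0 1) (Dev X Y 0 2) := by
    refine Set.disjoint_left.mpr fun ω ha hb => ?_
    have ha' : Y 0 ω = X 0 ω + 1 := ha
    have hb' : Y 0 ω = X 0 ω + 2 := hb
    exact fin3H (X 0 ω) (ha'.symm.trans hb')
  calc Sq μ X Y 0 + Sq μ X Y 0 ≤ μ (Dev X Y 0 1) + μ (Dev X Y 0 2) := add_le_add h1 h2
    _ = μ (Dev X Y 0 1 ∪ Dev X Y 0 2) :=
        (measure_union hdisj (measurableSet_Dev hXm hYm 0 2)).symm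
    _ ≤ μ Set.univ := measure_mono (Set.subset_univ _)
    _ = 1 := measure_univ

lemma keystep {μ : Measure Ω} {s : ℝ} {X Y : ℕ → Ω → Fin 3} [IsProbabilityMeasure μ]
    (hXm : ∀ t, Measurable (X t)) (hYm : ∀ t, Measurable (Y t))
    (hX : IsLazyWalk3' μ s X) (hY : IsLazyWalk3' μ s Y) (hG : μ (Good X Y)ᶜ = 0) (t : ℕ) :
    Sq μ X Y (t + 1) + ENNReal.ofReal ((1 - s) / 2) ≤ ENNReal.ofReal s + Sq μ X Y t := by
  have hsum1 : ∑ p : Fin (t + 1) → Fin 3, μ (cylE X t p) = 1 := by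
    have := sum_cyl_inter (μ := μ) hXm t MeasurableSet.univ
    simpa [Set.inter_univ] using this
  rw [Sq_succ]
  calc (∑ p : Fin (t + 1) → Fin 3, ∑ w : Fin 3,
        min (μ (cylE X (t + 1) (Fin.snoc p w) ∩ Dev X Y (t + 1) 1))
          (μ (cylE X (t + 1) (Fin.snoc p w) ∩ Dev X Y (t + 1) 2)))
        + ENNReal.ofReal ((1 - s) / 2)
      = ∑ p : Fin (t + 1) → Fin 3, ((∑ w : Fin 3,
          min (μ (cylE X (t + 1) (Fin.snoc p w) ∩ Dev X Y (t + 1) 1))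
            (μ (cylE X (t + 1) (Fin.snoc p w) ∩ Dev X Y (t + 1) 2)))
          + μ (cylE X t p) * ENNReal.ofReal ((1 - s) / 2)) := by
        rw [Finset.sum_add_distrib, ← Finset.sum_mul, hsum1, one_mul]
    _ ≤ ∑ p : Fin (t + 1) → Fin 3, (μ (cylE X t p ∩ Stay Y t)
          + min (μ (cylE X t p ∩ Dev X Y t 1)) (μ (cylE X t p ∩ Dev X Y t 2))) := by
        refine Finset.sum_le_sum fun p _ => ?_
        rw [sum3 _ (p (Fin.last t))]
        exact key hXm hYm hX hG t p
    _ = ENNReal.ofReal s + Sq μ X Y t := by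
        rw [Finset.sum_add_distrib, sum_cyl_inter hXm t (measurableSet_Stay hYm t),
          mu_stay hYm hY t, Sq]

lemma iter {μ : Measure Ω} {s : ℝ} {X Y : ℕ → Ω → Fin 3} [IsProbabilityMeasure μ]
    (hXm : ∀ t, Measurable (X t)) (hYm : ∀ t, Measurable (Y t))
    (hX : IsLazyWalk3' μ s X) (hY : IsLazyWalk3' μ s Y) (hG : μ (Good X Y)ᶜ = 0) (K : ℕ) :
    Sq μ X Y K + (K : ENNReal) * ENNReal.ofReal ((1 - s) / 2)
      ≤ Sq μ X Y 0 + (K : ENNReal) * ENNReal.ofReal s := by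
  induction K with
  | zero => simp
  | succ n ih =>
    have h1 := keystep hXm hYm hX hY hG n
    calc Sq μ X Y (n + 1) + ((n + 1 : ℕ) : ENNReal) * ENNReal.ofReal ((1 - s) / 2)
        = (Sq μ X Y (n + 1) + ENNReal.ofReal ((1 - s) / 2))
          + (n : ENNReal) * ENNReal.ofReal ((1 - s) / 2) := by
          push_cast
          ring
      _ ≤ (ENNReal.ofReal s + Sq μ X Y n) + (n : ENNReal) * ENNReal.ofReal ((1 - s) / 2) :=
          add_le_add_left h1 _
      _ = (Sq μ X Y n + (n : ENNReal) * ENNReal.ofReal ((1 - s) / 2)) + ENNReal.ofReal s := by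
          ring
      _ ≤ (Sq μ X Y 0 + (n : ENNReal) * ENNReal.ofReal s) + ENNReal.ofReal s :=
          add_le_add_left ih _
      _ = Sq μ X Y 0 + ((n + 1 : ℕ) : ENNReal) * ENNReal.ofReal s := by
          push_cast
          ring

end NoAvoid

/-- For every `s` with `0 ≤ s < 1/3`, there is no avoidance coupling of two
`s`-lazy walkers on the looped three-vertex complete graph `K_3^*`. -/
theorem no_avoidance_coupling_K3star (s : ℝ) (hs : 0 ≤ s) (hs1 : s < 1 / 3) :
    ¬ ∃ (Ω : Type) (_ : MeasurableSpace Ω) (μ : Measure Ω) (X Y : ℕ → Ω → Fin 3),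
      IsProbabilityMeasure μ ∧ (∀ t, Measurable (X t)) ∧ (∀ t, Measurable (Y t)) ∧
      IsLazyWalk3 μ s X ∧ IsLazyWalk3 μ s Y ∧ AvoidsPairAE μ X Y := by
  rintro ⟨Ω, mΩ, μ, X, Y, hprob, hXm, hYm, hX, hY, hAv⟩
  haveI := hprob
  have hX' : NoAvoid.IsLazyWalk3' μ s X := hX
  have hY' : NoAvoid.IsLazyWalk3' μ s Y := hY
  have hG : μ (NoAvoid.Good X Y)ᶜ = 0 := ae_iff.mp hAv
  obtain ⟨K, hK⟩ := exists_nat_gt (s / (1 - 3 * s))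
  have h3 : (0 : ℝ) < 1 - 3 * s := by linarith
  have hKs : s < (K : ℝ) * (1 - 3 * s) := by rwa [div_lt_iff₀ h3] at hK
  have hIter := NoAvoid.iter hXm hYm hX' hY' hG K
  have hLow := NoAvoid.Sq_lower hXm hYm hX' hG K
  have hUp := NoAvoid.Sq_upper (μ := μ) hXm hYm
  have hh : (0 : ℝ) ≤ (1 - s) / 2 := by linarith
  have main : ENNReal.ofReal ((1 - s) / 2) + (K : ENNReal) * ENNReal.ofReal ((1 - s) / 2)
      ≤ NoAvoid.Sq μ X Y 0 + (K : ENNReal) * ENNReal.ofReal s :=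
    le_trans (add_le_add_left hLow _) hIter
  have main2 : (ENNReal.ofReal ((1 - s) / 2) + (K : ENNReal) * ENNReal.ofReal ((1 - s) / 2))
      + (ENNReal.ofReal ((1 - s) / 2) + (K : ENNReal) * ENNReal.ofReal ((1 - s) / 2))
      ≤ 1 + ((K : ENNReal) * ENNReal.ofReal s + (K : ENNReal) * ENNReal.ofReal s) := by
    calc (ENNReal.ofReal ((1 - s) / 2) + (K : ENNReal) * ENNReal.ofReal ((1 - s) / 2))
        + (ENNReal.ofReal ((1 - s) / 2) + (K : ENNReal) * ENNReal.ofReal ((1 - s) / 2))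
        ≤ (NoAvoid.Sq μ X Y 0 + (K : ENNReal) * ENNReal.ofReal s)
          + (NoAvoid.Sq μ X Y 0 + (K : ENNReal) * ENNReal.ofReal s) := add_le_add main main
      _ = (NoAvoid.Sq μ X Y 0 + NoAvoid.Sq μ X Y 0)
          + ((K : ENNReal) * ENNReal.ofReal s + (K : ENNReal) * ENNReal.ofReal s) := by ring
      _ ≤ 1 + ((K : ENNReal) * ENNReal.ofReal s + (K : ENNReal) * ENNReal.ofReal s) :=
          add_le_add_left hUp _
  have e1 : (K : ENNReal) * ENNReal.ofReal ((1 - s) / 2)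
      = ENNReal.ofReal ((K : ℝ) * ((1 - s) / 2)) := by
    rw [ENNReal.ofReal_mul (Nat.cast_nonneg K), ENNReal.ofReal_natCast]
  have e2 : (K : ENNReal) * ENNReal.ofReal s = ENNReal.ofReal ((K : ℝ) * s) := by
    rw [ENNReal.ofReal_mul (Nat.cast_nonneg K), ENNReal.ofReal_natCast]
  have hKs0 : (0 : ℝ) ≤ (K : ℝ) * s := mul_nonneg (Nat.cast_nonneg K) hs
  have hKh0 : (0 : ℝ) ≤ (K : ℝ) * ((1 - s) / 2) := mul_nonneg (Nat.cast_nonneg K) hh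
  rw [e1, e2, ← ENNReal.ofReal_add hh hKh0, ← ENNReal.ofReal_add (by linarith) (by linarith),
    ← ENNReal.ofReal_add hKs0 hKs0, ← ENNReal.ofReal_one,
    ← ENNReal.ofReal_add (by norm_num) (by linarith)] at main2
  have hreal := (ENNReal.ofReal_le_ofReal_iff (by linarith)).mp main2
  nlinarith [hreal, hKs]
end

section
/- For every s with 0 ≤ s < 1/2, there is no Markovian avoidance coupling of two s-lazy walkers on the looped three-vertex complete graph K_3^*. -/
open MeasureTheory ProbabilityTheory

open scoped ENNReal

private lemma fin3_master : ∀ p q z w : Fin 3,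
    p = q ∨ p = z ∨ q = z ∨ w = p ∨ w = q ∨ w = z := by decide

private lemma fin3_resolve (p q z w : Fin 3) (h1 : p ≠ q) (h2 : p ≠ z)
    (h3 : q ≠ z) (h4 : w ≠ p) (h5 : w ≠ z) : w = q := by
  rcases fin3_master p q z w with h | h | h | h | h | h <;> tauto

private lemma fin3_or (p q z w : Fin 3) (h1 : p ≠ q) (h2 : p ≠ z)
    (h3 : q ≠ z) (h4 : w ≠ q) : w = p ∨ w = z := by
  rcases fin3_master p q z w with h | h | h | h | h | h <;> tauto

private lemma fin3_third' : ∀ q z : Fin 3, ∃ p, q = z ∨ (p ≠ q ∧ p ≠ z) := by decide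

private lemma fin3_third (q z : Fin 3) (h : q ≠ z) : ∃ p, p ≠ q ∧ p ≠ z := by
  obtain ⟨p, hp⟩ := fin3_third' q z
  exact ⟨p, hp.resolve_left h⟩

private lemma fin3_others : ∀ z : Fin 3, ∃ a b : Fin 3, a ≠ b ∧ a ≠ z ∧ b ≠ z := by
  decide

private def pathA (z p : Fin 3) : ℕ → Fin 3 :=
  fun n => match n with | 0 => z | 1 => p | _ => z

private def constQ (q : Fin 3) : ℕ → Fin 3 := fun _ => q

private def pathYB (q z : Fin 3) : ℕ → Fin 3 :=
  fun n => match n with | 0 => q | 1 => z | 2 => q | _ => z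

private def pathXB (w p : Fin 3) : ℕ → Fin 3 :=
  fun n => match n with | 0 => w | _ => p

private lemma real_contra (c a1 a2 b1 b2 : ℝ) (hc : 1/4 < c)
    (ha : 0 ≤ a1) (ha2 : 0 ≤ a2) (hb : 0 ≤ b1) (hb2 : 0 ≤ b2)
    (hfa : a1 + a2 ≤ 1) (hga : b1 + b2 ≤ 1)
    (h1 : c = b1 * a2) (h2 : c = a1 * b2) : False := by
  have key1 : c ≤ b1 * (1 - a1) := by
    have : b1 * a2 ≤ b1 * (1 - a1) := mul_le_mul_of_nonneg_left (by linarith) hb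
    linarith
  have key2 : c ≤ a1 * (1 - b1) := by
    have : a1 * b2 ≤ a1 * (1 - b1) := mul_le_mul_of_nonneg_left (by linarith) ha
    linarith
  have ha1le : a1 ≤ 1 := by linarith
  have hb1le : b1 ≤ 1 := by linarith
  have hq1 : a1 * (1 - a1) ≤ 1/4 := by nlinarith [sq_nonneg (2*a1 - 1)]
  have hq2 : b1 * (1 - b1) ≤ 1/4 := by nlinarith [sq_nonneg (2*b1 - 1)]
  have hpos2 : 0 ≤ b1 * (1 - b1) := mul_nonneg hb (by linarith)
  have hprod : (b1 * (1 - a1)) * (a1 * (1 - b1)) ≤ 1/4 * (1/4) := by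
    have heq : (b1 * (1 - a1)) * (a1 * (1 - b1)) = (a1 * (1 - a1)) * (b1 * (1 - b1)) := by
      ring
    rw [heq]
    exact mul_le_mul hq1 hq2 hpos2 (by norm_num)
  have hcpos : (0:ℝ) < c := by linarith
  have hcc : c * c ≤ 1/4 * (1/4) :=
    le_trans (mul_le_mul key1 key2 hcpos.le (by nlinarith)) hprod
  nlinarith [hcc, hc, mul_pos (by linarith : (0:ℝ) < c - 1/4)
    (by linarith : (0:ℝ) < c + 1/4)]

/-- For every `s` with `0 ≤ s < 1/2`, there is no Markovian avoidance coupling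
of two `s`-lazy walkers on the looped three-vertex complete graph `K_3^*`. -/
theorem no_markovian_avoidance_coupling_K3star (s : ℝ) (hs : 0 ≤ s)
    (hs1 : s < 1 / 2) :
    ¬ ∃ (Ω : Type) (_ : MeasurableSpace Ω) (μ : Measure Ω) (X Y : ℕ → Ω → Fin 3),
      IsProbabilityMeasure μ ∧ (∀ t, Measurable (X t)) ∧ (∀ t, Measurable (Y t)) ∧
      IsLazyWalk3 μ s X ∧ IsLazyWalk3 μ s Y ∧ AvoidsPairAE μ X Y ∧
      IsMarkovianPair μ X Y := by
  rintro ⟨Ω, mΩ, μ, X, Y, hprob, hmX, hmY, hX, hY, hA, f, g, hf, hg⟩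
  have hcpos : (0:ℝ) < (1 - s) / 2 := by linarith
  set C : ℝ≥0∞ := ENNReal.ofReal ((1 - s) / 2) with hCdef
  have hC0 : C ≠ 0 := (ENNReal.ofReal_pos.mpr hcpos).ne'
  have hCt : C ≠ ⊤ := ENNReal.ofReal_ne_top
  -- step 1 : a starting vertex for `X` with positive probability
  obtain ⟨z, hz0⟩ : ∃ x : Fin 3, μ {ω | X 0 ω = x} ≠ 0 := by
    by_contra h
    push_neg at h
    have hU : (Set.univ : Set Ω) = ⋃ x : Fin 3, {ω | X 0 ω = x} := by
      ext ω; simp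
    have h0 : μ (Set.univ : Set Ω) = 0 := by
      rw [hU]; exact measure_iUnion_null h
    simp [measure_univ] at h0
  -- step 2 : a starting vertex `q ≠ z` for `Y` with positive probability
  obtain ⟨q, hq0, hqz⟩ : ∃ q : Fin 3, μ {ω | Y 0 ω = q} ≠ 0 ∧ q ≠ z := by
    obtain ⟨a, b, hab, haz, hbz⟩ := fin3_others z
    by_contra h
    push_neg at h
    have ha0 : μ {ω | Y 0 ω = a} = 0 := by
      by_contra h'; exact haz (h a h')
    have hb0 : μ {ω | Y 0 ω = b} = 0 := by
      by_contra h'; exact hbz (h b h')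
    have hle : μ {ω | X 0 ω = z} ≤ μ ({ω | Y 0 ω = a} ∪ {ω | Y 0 ω = b}) := by
      apply measure_mono_ae
      filter_upwards [hA] with ω hω hmem
      have h1 : Y 0 ω ≠ z := fun hh => (hω 0).1 (hmem.trans hh.symm)
      exact fin3_or a z b (Y 0 ω) haz hab hbz.symm h1
    rw [measure_union_null ha0 hb0] at hle
    exact hz0 (le_antisymm hle zero_le)
  obtain ⟨p, hpq, hpz⟩ := fin3_third q z hqz

  -- ============ A-side: X-path (z, p, z), forced Y values (q, q) ============
  have e0 : μ {ω | ∀ u ≤ 0, X u ω = pathA z p u} = μ {ω | X 0 ω = z} := by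
    apply congrArg
    ext ω
    constructor
    · intro h; exact h 0 le_rfl
    · intro h u hu; obtain rfl := Nat.le_zero.mp hu; exact h
  have h1 := hX 0 (pathA z p)
  rw [e0, if_neg (show ¬(pathA z p (0+1) = pathA z p 0) from hpz), ← hCdef] at h1
  have e01 : {ω | ∀ u ≤ 0+1, X u ω = pathA z p u}
      = {ω | ∀ u ≤ 1, X u ω = pathA z p u} := by norm_num
  rw [e01] at h1
  -- h1 : μ {∀ u ≤ 1, X = pathA} = μ {X 0 = z} * C
  have h2 := hX 1 (pathA z p)
  rw [if_neg (show ¬(pathA z p (1+1) = pathA z p 1) from Ne.symm hpz), ← hCdef,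
    h1] at h2
  have e12 : {ω | ∀ u ≤ 1+1, X u ω = pathA z p u}
      = {ω | ∀ u ≤ 2, X u ω = pathA z p u} := by norm_num
  rw [e12] at h2
  -- h2 : μ {∀ u ≤ 2, X = pathA} = μ {X 0 = z} * C * C
  have hae1 : {ω | ∀ u ≤ 1, X u ω = pathA z p u} =ᵐ[μ]
      {ω | (∀ r ≤ 0, X r ω = pathA z p r ∧ Y r ω = constQ q r) ∧ X (0+1) ω = p} := by
    rw [Filter.eventuallyEq_set]
    filter_upwards [hA] with ω hω
    constructor
    · intro h
      have hx0 : X 0 ω = z := h 0 (by norm_num)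
      have hx1 : X 1 ω = p := h 1 (by norm_num)
      have hy0 : Y 0 ω = q := by
        refine fin3_resolve p q z _ hpq hpz hqz ?_ ?_
        · exact fun hh => (hω 0).2 (hx1.trans hh.symm)
        · exact fun hh => (hω 0).1 (hx0.trans hh.symm)
      refine ⟨fun r hr => ?_, hx1⟩
      obtain rfl := Nat.le_zero.mp hr
      exact ⟨hx0, hy0⟩
    · rintro ⟨h0, hx1⟩ u hu
      have : u = 0 ∨ u = 1 := by omega
      rcases this with rfl | rfl
      · exact (h0 0 le_rfl).1
      · exact hx1
  have h3 : μ {ω | (∀ r ≤ 0, X r ω = pathA z p r ∧ Y r ω = constQ q r) ∧ X (0+1) ω = p}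
      = μ {ω | X 0 ω = z} * C := by
    rw [← measure_congr hae1, h1]
  have h4 := hg 0 (pathA z p) (constQ q) p q
  rw [h3] at h4
  -- h4 : μ {((∀ r ≤ 0, ..) ∧ X 1 = p) ∧ Y 1 = q} = μ {X 0 = z} * C * g (p, q) q
  have h5 := hf 1 (pathA z p) (constQ q) z
  have e2 : {ω | ∀ r ≤ 1, X r ω = pathA z p r ∧ Y r ω = constQ q r}
      = {ω | ((∀ r ≤ 0, X r ω = pathA z p r ∧ Y r ω = constQ q r) ∧ X (0+1) ω = p)
          ∧ Y (0+1) ω = q} := by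
    ext ω
    simp only [Set.mem_setOf_eq]
    constructor
    · intro h
      refine ⟨⟨fun r hr => ?_, (h 1 le_rfl).1⟩, (h 1 le_rfl).2⟩
      obtain rfl := Nat.le_zero.mp hr
      exact h 0 (by norm_num)
    · rintro ⟨⟨h0, hx1⟩, hy1⟩ r hr
      have : r = 0 ∨ r = 1 := by omega
      rcases this with rfl | rfl
      · exact h0 0 le_rfl
      · exact ⟨hx1, hy1⟩
  rw [e2, h4] at h5
  -- h5 : μ {(∀ r ≤ 1, pair path) ∧ X 2 = z} = μ {X0=z} * C * g (p,q) q * f (p,q) z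
  have hae2 : {ω | ∀ u ≤ 2, X u ω = pathA z p u} =ᵐ[μ]
      {ω | (∀ r ≤ 1, X r ω = pathA z p r ∧ Y r ω = constQ q r) ∧ X (1+1) ω = z} := by
    rw [Filter.eventuallyEq_set]
    filter_upwards [hA] with ω hω
    constructor
    · intro h
      have hx0 : X 0 ω = z := h 0 (by norm_num)
      have hx1 : X 1 ω = p := h 1 (by norm_num)
      have hx2 : X 2 ω = z := h 2 (by norm_num)
      have hy0 : Y 0 ω = q := by
        refine fin3_resolve p q z _ hpq hpz hqz ?_ ?_
        · exact fun hh => (hω 0).2 (hx1.trans hh.symm)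
        · exact fun hh => (hω 0).1 (hx0.trans hh.symm)
      have hy1 : Y 1 ω = q := by
        refine fin3_resolve p q z _ hpq hpz hqz ?_ ?_
        · exact fun hh => (hω 1).1 (hx1.trans hh.symm)
        · exact fun hh => (hω 1).2 (hx2.trans hh.symm)
      refine ⟨fun r hr => ?_, hx2⟩
      have : r = 0 ∨ r = 1 := by omega
      rcases this with rfl | rfl
      · exact ⟨hx0, hy0⟩
      · exact ⟨hx1, hy1⟩
    · rintro ⟨h01, hx2⟩ u hu
      have : u = 0 ∨ u = 1 ∨ u = 2 := by omega
      rcases this with rfl | rfl | rfl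
      · exact (h01 0 (by norm_num)).1
      · exact (h01 1 (by norm_num)).1
      · exact hx2
  have h6 : μ {ω | X 0 ω = z} * C * C
      = μ {ω | X 0 ω = z} * C * (g (p, q) q * f (p, q) z) := by
    rw [← h2, measure_congr hae2, h5, mul_assoc]
    rfl
  have hA1 : C = g (p, q) q * f (p, q) z := by
    have hne : μ {ω | X 0 ω = z} * C ≠ 0 := mul_ne_zero hz0 hC0
    have hnt : μ {ω | X 0 ω = z} * C ≠ ⊤ :=
      ENNReal.mul_ne_top (measure_ne_top μ _) hCt
    exact (ENNReal.mul_right_inj hne hnt).mp h6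

  -- ============ B-side: Y-path (q, z, q, z), forced X values (·, p, p, p) ====
  have f0 : μ {ω | ∀ u ≤ 0, Y u ω = pathYB q z u} = μ {ω | Y 0 ω = q} := by
    apply congrArg
    ext ω
    constructor
    · intro h; exact h 0 le_rfl
    · intro h u hu; obtain rfl := Nat.le_zero.mp hu; exact h
  have k1 := hY 0 (pathYB q z)
  rw [f0, if_neg (show ¬(pathYB q z (0+1) = pathYB q z 0) from Ne.symm hqz),
    ← hCdef] at k1
  have f01 : {ω | ∀ u ≤ 0+1, Y u ω = pathYB q z u}
      = {ω | ∀ u ≤ 1, Y u ω = pathYB q z u} := by norm_num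
  rw [f01] at k1
  have k2 := hY 1 (pathYB q z)
  rw [if_neg (show ¬(pathYB q z (1+1) = pathYB q z 1) from hqz), ← hCdef, k1] at k2
  have f12 : {ω | ∀ u ≤ 1+1, Y u ω = pathYB q z u}
      = {ω | ∀ u ≤ 2, Y u ω = pathYB q z u} := by norm_num
  rw [f12] at k2
  have k3 := hY 2 (pathYB q z)
  rw [if_neg (show ¬(pathYB q z (2+1) = pathYB q z 2) from Ne.symm hqz), ← hCdef,
    k2] at k3
  have f23 : {ω | ∀ u ≤ 2+1, Y u ω = pathYB q z u}
      = {ω | ∀ u ≤ 3, Y u ω = pathYB q z u} := by norm_num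
  rw [f23] at k3
  -- k3 : μ {∀ u ≤ 3, Y = pathYB} = μ {Y 0 = q} * C * C * C
  have haeG : {ω | ∀ u ≤ 2, Y u ω = pathYB q z u} =ᵐ[μ]
      (({ω | ∀ r ≤ 2, X r ω = pathXB p p r ∧ Y r ω = pathYB q z r}
       ∪ {ω | ∀ r ≤ 2, X r ω = pathXB z p r ∧ Y r ω = pathYB q z r} : Set Ω)) := by
    rw [Filter.eventuallyEq_set]
    filter_upwards [hA] with ω hω
    constructor
    · intro h
      have hy0 : Y 0 ω = q := h 0 (by norm_num)
      have hy1 : Y 1 ω = z := h 1 (by norm_num)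
      have hy2 : Y 2 ω = q := h 2 (by norm_num)
      have hx1 : X 1 ω = p := by
        refine fin3_resolve q p z _ hpq.symm hqz hpz ?_ ?_
        · exact fun hh => (hω 0).2 (hh.trans hy0.symm)
        · exact fun hh => (hω 1).1 (hh.trans hy1.symm)
      have hx2 : X 2 ω = p := by
        refine fin3_resolve q p z _ hpq.symm hqz hpz ?_ ?_
        · exact fun hh => (hω 2).1 (hh.trans hy2.symm)
        · exact fun hh => (hω 1).2 (hh.trans hy1.symm)
      have hx0 : X 0 ω = p ∨ X 0 ω = z :=
        fin3_or p q z _ hpq hpz hqz (fun hh => (hω 0).1 (hh.trans hy0.symm))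
      rcases hx0 with hx0 | hx0
      · refine Or.inl (fun r hr => ?_)
        have hc : r = 0 ∨ r = 1 ∨ r = 2 := by omega
        rcases hc with rfl | rfl | rfl
        · exact ⟨hx0, hy0⟩
        · exact ⟨hx1, hy1⟩
        · exact ⟨hx2, hy2⟩
      · refine Or.inr (fun r hr => ?_)
        have hc : r = 0 ∨ r = 1 ∨ r = 2 := by omega
        rcases hc with rfl | rfl | rfl
        · exact ⟨hx0, hy0⟩
        · exact ⟨hx1, hy1⟩
        · exact ⟨hx2, hy2⟩
    · rintro (h | h) u hu <;> exact (h u hu).2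
  have hmeasG : MeasurableSet {ω | ∀ r ≤ 2, X r ω = pathXB z p r ∧ Y r ω = pathYB q z r} := by
    have hEq : {ω | ∀ r ≤ 2, X r ω = pathXB z p r ∧ Y r ω = pathYB q z r}
        = ⋂ (r : ℕ), ⋂ (_ : r ≤ 2),
            ({ω | X r ω = pathXB z p r} ∩ {ω | Y r ω = pathYB q z r}) := by
      ext ω
      simp only [Set.mem_iInter, Set.mem_inter_iff, Set.mem_setOf_eq]
    rw [hEq]
    exact MeasurableSet.iInter fun r => MeasurableSet.iInter fun _ =>
      (hmX r (measurableSet_singleton _)).inter (hmY r (measurableSet_singleton _))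
  have hdisjG : Disjoint {ω | ∀ r ≤ 2, X r ω = pathXB p p r ∧ Y r ω = pathYB q z r}
      {ω | ∀ r ≤ 2, X r ω = pathXB z p r ∧ Y r ω = pathYB q z r} :=
    Set.disjoint_left.mpr fun ω hp' hz' =>
      hpz (((hp' 0 (by norm_num)).1.symm).trans ((hz' 0 (by norm_num)).1))
  have kG : μ {ω | ∀ r ≤ 2, X r ω = pathXB p p r ∧ Y r ω = pathYB q z r}
      + μ {ω | ∀ r ≤ 2, X r ω = pathXB z p r ∧ Y r ω = pathYB q z r}
      = μ {ω | Y 0 ω = q} * C * C := by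
    rw [← measure_union hdisjG hmeasG, ← measure_congr haeG, k2]
  have hbr : ∀ w : Fin 3,
      μ {ω | ((∀ r ≤ 2, X r ω = pathXB w p r ∧ Y r ω = pathYB q z r) ∧ X (2+1) ω = p)
          ∧ Y (2+1) ω = z}
        = μ {ω | ∀ r ≤ 2, X r ω = pathXB w p r ∧ Y r ω = pathYB q z r}
          * (f (p, q) p * g (p, q) z) := by
    intro w
    have hf3 := hf 2 (pathXB w p) (pathYB q z) p
    have hg3 := hg 2 (pathXB w p) (pathYB q z) p z
    rw [hf3] at hg3
    rw [hg3, mul_assoc]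
    rfl
  have haeF : {ω | ∀ u ≤ 3, Y u ω = pathYB q z u} =ᵐ[μ]
      (({ω | ((∀ r ≤ 2, X r ω = pathXB p p r ∧ Y r ω = pathYB q z r) ∧ X (2+1) ω = p)
          ∧ Y (2+1) ω = z}
       ∪ {ω | ((∀ r ≤ 2, X r ω = pathXB z p r ∧ Y r ω = pathYB q z r) ∧ X (2+1) ω = p)
          ∧ Y (2+1) ω = z} : Set Ω)) := by
    rw [Filter.eventuallyEq_set]
    filter_upwards [hA] with ω hω
    constructor
    · intro h
      have hy0 : Y 0 ω = q := h 0 (by norm_num)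
      have hy1 : Y 1 ω = z := h 1 (by norm_num)
      have hy2 : Y 2 ω = q := h 2 (by norm_num)
      have hy3 : Y 3 ω = z := h 3 (by norm_num)
      have hx1 : X 1 ω = p := by
        refine fin3_resolve q p z _ hpq.symm hqz hpz ?_ ?_
        · exact fun hh => (hω 0).2 (hh.trans hy0.symm)
        · exact fun hh => (hω 1).1 (hh.trans hy1.symm)
      have hx2 : X 2 ω = p := by
        refine fin3_resolve q p z _ hpq.symm hqz hpz ?_ ?_
        · exact fun hh => (hω 2).1 (hh.trans hy2.symm)
        · exact fun hh => (hω 1).2 (hh.trans hy1.symm)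
      have hx3 : X 3 ω = p := by
        refine fin3_resolve q p z _ hpq.symm hqz hpz ?_ ?_
        · exact fun hh => (hω 2).2 (hh.trans hy2.symm)
        · exact fun hh => (hω 3).1 (hh.trans hy3.symm)
      have hx0 : X 0 ω = p ∨ X 0 ω = z :=
        fin3_or p q z _ hpq hpz hqz (fun hh => (hω 0).1 (hh.trans hy0.symm))
      rcases hx0 with hx0 | hx0
      · refine Or.inl ⟨⟨fun r hr => ?_, hx3⟩, hy3⟩
        have hc : r = 0 ∨ r = 1 ∨ r = 2 := by omega
        rcases hc with rfl | rfl | rfl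
        · exact ⟨hx0, hy0⟩
        · exact ⟨hx1, hy1⟩
        · exact ⟨hx2, hy2⟩
      · refine Or.inr ⟨⟨fun r hr => ?_, hx3⟩, hy3⟩
        have hc : r = 0 ∨ r = 1 ∨ r = 2 := by omega
        rcases hc with rfl | rfl | rfl
        · exact ⟨hx0, hy0⟩
        · exact ⟨hx1, hy1⟩
        · exact ⟨hx2, hy2⟩
    · rintro (⟨⟨h0, hx3⟩, hy3⟩ | ⟨⟨h0, hx3⟩, hy3⟩) u hu <;>
      · have hc : u = 0 ∨ u = 1 ∨ u = 2 ∨ u = 3 := by omega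
        rcases hc with rfl | rfl | rfl | rfl
        · exact (h0 0 (by norm_num)).2
        · exact (h0 1 (by norm_num)).2
        · exact (h0 2 (by norm_num)).2
        · exact hy3
  have hmeasF : MeasurableSet {ω | ((∀ r ≤ 2, X r ω = pathXB z p r ∧ Y r ω = pathYB q z r)
      ∧ X (2+1) ω = p) ∧ Y (2+1) ω = z} :=
    (hmeasG.inter (hmX 3 (measurableSet_singleton _))).inter
      (hmY 3 (measurableSet_singleton _))
  have hdisjF : Disjoint
      {ω | ((∀ r ≤ 2, X r ω = pathXB p p r ∧ Y r ω = pathYB q z r) ∧ X (2+1) ω = p)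
          ∧ Y (2+1) ω = z}
      {ω | ((∀ r ≤ 2, X r ω = pathXB z p r ∧ Y r ω = pathYB q z r) ∧ X (2+1) ω = p)
          ∧ Y (2+1) ω = z} :=
    Set.disjoint_left.mpr fun ω hp' hz' =>
      hpz (((hp'.1.1 0 (by norm_num)).1.symm).trans ((hz'.1.1 0 (by norm_num)).1))
  have kF : μ {ω | ∀ u ≤ 3, Y u ω = pathYB q z u}
      = μ {ω | Y 0 ω = q} * C * C * (f (p, q) p * g (p, q) z) := by
    rw [measure_congr haeF, measure_union hdisjF hmeasF, hbr p, hbr z, ← add_mul, kG]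
  have hB1 : C = f (p, q) p * g (p, q) z := by
    have hne : μ {ω | Y 0 ω = q} * C * C ≠ 0 :=
      mul_ne_zero (mul_ne_zero hq0 hC0) hC0
    have hnt : μ {ω | Y 0 ω = q} * C * C ≠ ⊤ :=
      ENNReal.mul_ne_top (ENNReal.mul_ne_top (measure_ne_top μ _) hCt) hCt
    refine (ENNReal.mul_right_inj hne hnt).mp ?_
    rw [← k3, kF]
  -- ============ the numerical contradiction ============
  have hfone : ∀ a, f (p, q) a ≠ ⊤ := fun a =>
    (lt_of_le_of_lt ((f (p, q)).coe_le_one a) ENNReal.one_lt_top).ne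
  have hgone : ∀ a, g (p, q) a ≠ ⊤ := fun a =>
    (lt_of_le_of_lt ((g (p, q)).coe_le_one a) ENNReal.one_lt_top).ne
  have hfsum : f (p, q) p + f (p, q) z ≤ 1 := by
    have h := ENNReal.sum_le_tsum (f := fun a => f (p, q) a) ({p, z} : Finset (Fin 3))
    rwa [Finset.sum_pair hpz, (f (p, q)).tsum_coe] at h
  have hgsum : g (p, q) q + g (p, q) z ≤ 1 := by
    have h := ENNReal.sum_le_tsum (f := fun a => g (p, q) a) ({q, z} : Finset (Fin 3))
    rwa [Finset.sum_pair hqz, (g (p, q)).tsum_coe] at h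
  have hA1R : (1 - s) / 2 = (g (p, q) q).toReal * (f (p, q) z).toReal := by
    have h := congrArg ENNReal.toReal hA1
    rwa [hCdef, ENNReal.toReal_ofReal hcpos.le, ENNReal.toReal_mul] at h
  have hB1R : (1 - s) / 2 = (f (p, q) p).toReal * (g (p, q) z).toReal := by
    have h := congrArg ENNReal.toReal hB1
    rwa [hCdef, ENNReal.toReal_ofReal hcpos.le, ENNReal.toReal_mul] at h
  have hfsumR : (f (p, q) p).toReal + (f (p, q) z).toReal ≤ 1 := by
    have h := ENNReal.toReal_mono ENNReal.one_ne_top hfsum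
    rwa [ENNReal.toReal_add (hfone p) (hfone z), ENNReal.toReal_one] at h
  have hgsumR : (g (p, q) q).toReal + (g (p, q) z).toReal ≤ 1 := by
    have h := ENNReal.toReal_mono ENNReal.one_ne_top hgsum
    rwa [ENNReal.toReal_add (hgone q) (hgone z), ENNReal.toReal_one] at h
  exact real_contra ((1 - s) / 2) (f (p, q) p).toReal (f (p, q) z).toReal
    (g (p, q) q).toReal (g (p, q) z).toReal (by linarith)
    ENNReal.toReal_nonneg ENNReal.toReal_nonneg ENNReal.toReal_nonneg
    ENNReal.toReal_nonneg hfsumR hgsumR hA1R hB1R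
end

section
/- If there exists an avoidance coupling of k walkers on the looped complete graph K_n^*, then there exists an avoidance coupling of k walkers on the looped complete graph K_{n+1}^*. -/
open MeasureTheory ProbabilityTheory

/-- `X` is a faithful simple random walk on the loopless complete graph `K_n`:
at each step the walker moves to a uniformly random vertex other than its
current one. -/
def IsWalkLoopless {Ω : Type} [MeasurableSpace Ω] (μ : Measure Ω) {n : ℕ}
    (X : ℕ → Ω → Fin n) : Prop :=
  ∀ (t : ℕ) (v : ℕ → Fin n),
    μ {ω | ∀ s ≤ t + 1, X s ω = v s} =
      μ {ω | ∀ s ≤ t, X s ω = v s} *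
        (if v (t + 1) = v t then 0 else ((n - 1 : ℕ) : ENNReal)⁻¹)

/-- `X` is a faithful simple random walk on the looped complete graph `K_n^*`:
at each step the walker moves to a uniformly random vertex (possibly its
current one). -/
def IsWalkLooped {Ω : Type} [MeasurableSpace Ω] (μ : Measure Ω) {n : ℕ}
    (X : ℕ → Ω → Fin n) : Prop :=
  ∀ (t : ℕ) (v : ℕ → Fin n),
    μ {ω | ∀ s ≤ t + 1, X s ω = v s} =
      μ {ω | ∀ s ≤ t, X s ω = v s} * ((n : ℕ) : ENNReal)⁻¹

/-- The `k` walkers `X 0, …, X (k-1)`, moving in turn in cyclic order, almost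
surely never collide: initially their positions are pairwise distinct, and
whenever a walker moves it never lands on the current position of another
walker (walkers `i < j` having already made their move number `t+1`, walkers
`i > j` still sitting at their position at time `t`). -/
def AvoidsAE {Ω : Type} [MeasurableSpace Ω] (μ : Measure Ω) {n k : ℕ}
    (X : Fin k → ℕ → Ω → Fin n) : Prop :=
  ∀ᵐ ω ∂μ,
    (∀ i j : Fin k, i ≠ j → X i 0 ω ≠ X j 0 ω) ∧
    (∀ (t : ℕ) (i j : Fin k),
      (i < j → X j (t + 1) ω ≠ X i (t + 1) ω) ∧
      (j < i → X j (t + 1) ω ≠ X i t ω))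

/-- The coupling is Markovian: there are transition rules `f j` so that for
every walker `j` and time `t`, conditionally on the whole history (all
positions up to time `t`, together with the moves at time `t+1` of the walkers
`i < j` preceding `j` in the current round), the next position `X j (t+1)` is
distributed according to `f j` applied to the current configuration. -/
def IsMarkovianCoupling {Ω : Type} [MeasurableSpace Ω] (μ : Measure Ω) {n k : ℕ}
    (X : Fin k → ℕ → Ω → Fin n) : Prop :=
  ∃ f : Fin k → (Fin k → Fin n) → PMF (Fin n),
    ∀ (t : ℕ) (j : Fin k) (v : Fin k → ℕ → Fin n) (w : Fin n),
      μ {ω | ((∀ i : Fin k, ∀ s ≤ t, X i s ω = v i s) ∧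
              (∀ i < j, X i (t + 1) ω = v i (t + 1))) ∧ X j (t + 1) ω = w} =
        μ {ω | (∀ i : Fin k, ∀ s ≤ t, X i s ω = v i s) ∧
               (∀ i < j, X i (t + 1) ω = v i (t + 1))} *
          f j (fun i => if i < j then v i (t + 1) else v i t) w

/-- There is an avoidance coupling of `k` walkers on the loopless complete
graph `K_n`. -/
def AvoidanceCouplingLoopless (n k : ℕ) : Prop :=
  ∃ (Ω : Type) (_ : MeasurableSpace Ω) (μ : Measure Ω)
    (X : Fin k → ℕ → Ω → Fin n),
      IsProbabilityMeasure μ ∧ (∀ j t, Measurable (X j t)) ∧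
      (∀ j, IsWalkLoopless μ (X j)) ∧ AvoidsAE μ X

/-- There is an avoidance coupling of `k` walkers on the looped complete
graph `K_n^*`. -/
def AvoidanceCouplingLooped (n k : ℕ) : Prop :=
  ∃ (Ω : Type) (_ : MeasurableSpace Ω) (μ : Measure Ω)
    (X : Fin k → ℕ → Ω → Fin n),
      IsProbabilityMeasure μ ∧ (∀ j t, Measurable (X j t)) ∧
      (∀ j, IsWalkLooped μ (X j)) ∧ AvoidsAE μ X

/-- There is a Markovian avoidance coupling of `k` walkers on `K_n`. -/
def MarkovianAvoidanceCouplingLoopless (n k : ℕ) : Prop :=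
  ∃ (Ω : Type) (_ : MeasurableSpace Ω) (μ : Measure Ω)
    (X : Fin k → ℕ → Ω → Fin n),
      IsProbabilityMeasure μ ∧ (∀ j t, Measurable (X j t)) ∧
      (∀ j, IsWalkLoopless μ (X j)) ∧ AvoidsAE μ X ∧ IsMarkovianCoupling μ X

/-- There is a Markovian avoidance coupling of `k` walkers on `K_n^*`. -/
def MarkovianAvoidanceCouplingLooped (n k : ℕ) : Prop :=
  ∃ (Ω : Type) (_ : MeasurableSpace Ω) (μ : Measure Ω)
    (X : Fin k → ℕ → Ω → Fin n),
      IsProbabilityMeasure μ ∧ (∀ j t, Measurable (X j t)) ∧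
      (∀ j, IsWalkLooped μ (X j)) ∧ AvoidsAE μ X ∧ IsMarkovianCoupling μ X

namespace AvoidanceAux

open Set

variable {n : ℕ}

noncomputable def nu (n : ℕ) : Measure (ℕ → Fin (n + 1)) :=
  Measure.addHaarMeasure ⊤

instance (n : ℕ) : IsProbabilityMeasure (nu n) :=
  ⟨by rw [nu, ← TopologicalSpace.PositiveCompacts.coe_top]
      exact Measure.addHaarMeasure_self⟩

instance (n : ℕ) : (nu n).IsAddLeftInvariant := by
  rw [nu]; infer_instance

def Cyl (t : ℕ) (δ : ℕ → Fin (n + 1)) : Set (ℕ → Fin (n + 1)) :=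
  {c | ∀ s < t, c s = δ s}

lemma measurableSet_Cyl (t : ℕ) (δ : ℕ → Fin (n + 1)) : MeasurableSet (Cyl t δ) := by
  have h : Cyl t δ = ⋂ s ∈ Set.Iio t, (fun c : ℕ → Fin (n + 1) => c s) ⁻¹' {δ s} := by
    ext c; simp [Cyl]
  rw [h]
  exact MeasurableSet.biInter (Set.to_countable _) fun s _ =>
    (measurable_pi_apply s) (measurableSet_singleton _)

lemma Cyl_congr {t : ℕ} {δ δ' : ℕ → Fin (n + 1)} (h : ∀ s < t, δ s = δ' s) :
    Cyl t δ = Cyl t δ' := by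
  ext c; exact forall₂_congr fun s hs => by rw [h s hs]

lemma nu_Cyl_eq (t : ℕ) (δ δ' : ℕ → Fin (n + 1)) : nu n (Cyl t δ) = nu n (Cyl t δ') := by
  have h : Cyl t δ = (fun c => (δ' - δ) + c) ⁻¹' Cyl t δ' := by
    ext c
    simp only [mem_preimage, Cyl, mem_setOf_eq, Pi.add_apply, Pi.sub_apply]
    refine forall₂_congr fun s hs => ?_
    constructor
    · intro h; rw [h]; exact sub_add_cancel _ _
    · intro h; exact add_left_cancel (h.trans (sub_add_cancel _ _).symm)
  rw [h, measure_preimage_add]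

def extW (t : ℕ) (d : Fin t → Fin (n + 1)) : ℕ → Fin (n + 1) :=
  fun s => if h : s < t then d ⟨s, h⟩ else 0

lemma nu_Cyl (t : ℕ) (δ : ℕ → Fin (n + 1)) :
    nu n (Cyl t δ) = (((n + 1 : ℕ)) : ENNReal)⁻¹ ^ t := by
  classical
  have hdisj : Pairwise (Function.onFun Disjoint fun d : Fin t → Fin (n + 1) =>
      Cyl t (extW t d)) := by
    intro d d' hne
    refine Set.disjoint_left.2 fun c hc hc' => hne ?_
    funext i
    have h1 := hc i.1 i.2
    have h2 := hc' i.1 i.2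
    simp only [extW, i.2, dif_pos] at h1 h2
    simpa using h1.symm.trans h2
  have hU : (⋃ d : Fin t → Fin (n + 1), Cyl t (extW t d)) = univ := by
    refine eq_univ_of_forall fun c => mem_iUnion.2 ⟨fun i => c i, fun s hs => ?_⟩
    simp [extW, hs]
  have h1 : (∑' d : Fin t → Fin (n + 1), nu n (Cyl t (extW t d))) = 1 := by
    rw [← measure_iUnion hdisj fun _ => measurableSet_Cyl _ _, hU, measure_univ]
  rw [tsum_fintype] at h1
  have h2 : ∀ d : Fin t → Fin (n + 1), nu n (Cyl t (extW t d)) = nu n (Cyl t δ) :=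
    fun d => nu_Cyl_eq t _ δ
  rw [Finset.sum_congr rfl fun d _ => h2 d, Finset.sum_const, Finset.card_univ,
    Fintype.card_fun, Fintype.card_fin, Fintype.card_fin] at h1
  have hcast : (((n + 1) ^ t : ℕ) : ENNReal) * nu n (Cyl t δ) = 1 := by
    rw [← h1, nsmul_eq_mul]
  have hne : (((n + 1) ^ t : ℕ) : ENNReal) ≠ 0 := by
    simp [pow_ne_zero]
  have hnt : (((n + 1) ^ t : ℕ) : ENNReal) ≠ ⊤ := ENNReal.natCast_ne_top _
  have : nu n (Cyl t δ) = (((n + 1) ^ t : ℕ) : ENNReal)⁻¹ := by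
    calc nu n (Cyl t δ)
        = ((((n + 1) ^ t : ℕ) : ENNReal)⁻¹ * (((n + 1) ^ t : ℕ) : ENNReal)) * nu n (Cyl t δ) := by
          rw [ENNReal.inv_mul_cancel hne hnt, one_mul]
      _ = (((n + 1) ^ t : ℕ) : ENNReal)⁻¹ * ((((n + 1) ^ t : ℕ) : ENNReal) * nu n (Cyl t δ)) := by
          rw [mul_assoc]
      _ = _ := by rw [hcast, mul_one]
  rw [this, Nat.cast_pow, ← ENNReal.inv_pow]

def permProc (c : ℕ → Fin (n + 1)) : ℕ → Equiv.Perm (Fin (n + 1))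
  | 0 => 1
  | t + 1 => Equiv.swap (permProc c t (Fin.last n)) (c t) * permProc c t

lemma permProc_succ (c : ℕ → Fin (n + 1)) (t : ℕ) :
    permProc c (t + 1) = Equiv.swap (permProc c t (Fin.last n)) (c t) * permProc c t := rfl

lemma permProc_congr {c c' : ℕ → Fin (n + 1)} :
    ∀ {t : ℕ}, (∀ s < t, c s = c' s) → permProc c t = permProc c' t
  | 0, _ => rfl
  | t + 1, h => by
    have ih := permProc_congr (c := c) (c' := c')
      fun s hs => h s (hs.trans (Nat.lt_succ_self t))
    rw [permProc_succ, permProc_succ, ih, h t (Nat.lt_succ_self t)]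

lemma permProc_step_ne (c : ℕ → Fin (n + 1)) (t : ℕ) {a b : Fin n} (hab : a ≠ b) :
    permProc c (t + 1) a.castSucc ≠ permProc c t b.castSucc := by
  set π := permProc c t with hπ
  have hy : π a.castSucc ≠ π (Fin.last n) :=
    fun h => (Fin.castSucc_lt_last a).ne (π.injective h)
  have hz : π (Fin.last n) ≠ π b.castSucc :=
    fun h => (Fin.castSucc_lt_last b).ne (π.injective h.symm)
  have hyz : π a.castSucc ≠ π b.castSucc :=
    fun h => hab (Fin.castSucc_injective n (π.injective h))
  rw [permProc_succ, ← hπ, Equiv.Perm.mul_apply]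
  rcases eq_or_ne (π a.castSucc) (c t) with h | h
  · rw [h, Equiv.swap_apply_right]
    exact hz
  · rw [Equiv.swap_apply_of_ne_of_ne hy h]
    exact hyz

lemma swap_cond_iff (π : Equiv.Perm (Fin (n + 1))) (e w y : Fin (n + 1))
    (hy : y ≠ π (Fin.last n)) :
    Equiv.swap (π (Fin.last n)) e y = w ↔
      (if y = e then π (Fin.last n) else y) = w := by
  rw [Equiv.swap_apply_def, if_neg hy]

lemma count_swap (hn : n ≠ 0) (π : Equiv.Perm (Fin (n + 1))) (w : Fin (n + 1)) :
    (Finset.univ.filter fun p : Fin n × Fin (n + 1) =>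
      Equiv.swap (π (Fin.last n)) p.2 (π p.1.castSucc) = w).card = n := by
  classical
  have hy : ∀ a : Fin n, π a.castSucc ≠ π (Fin.last n) :=
    fun a h => (Fin.castSucc_lt_last a).ne (π.injective h)
  rcases eq_or_ne w (π (Fin.last n)) with hw | hw
  · -- w is the hole: condition ⇔ p.2 = π p.1.castSucc
    have hcond : ∀ p : Fin n × Fin (n + 1),
        (Equiv.swap (π (Fin.last n)) p.2 (π p.1.castSucc) = w ↔ p.2 = π p.1.castSucc) := by
      intro p
      rw [swap_cond_iff _ _ _ _ (hy p.1), hw]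
      constructor
      · intro h
        by_contra hne
        rw [if_neg (fun hh : π p.1.castSucc = p.2 => hne hh.symm)] at h
        exact hy p.1 h
      · intro h; rw [if_pos h.symm]
    have : (Finset.univ.filter fun p : Fin n × Fin (n + 1) =>
        Equiv.swap (π (Fin.last n)) p.2 (π p.1.castSucc) = w) =
        Finset.univ.image fun a : Fin n => (a, π a.castSucc) := by
      ext p
      simp only [Finset.mem_filter, Finset.mem_univ, true_and, Finset.mem_image, hcond]
      constructor
      · intro h; exact ⟨p.1, by rw [← h]⟩
      · rintro ⟨a, rfl⟩; rfl
    rw [this, Finset.card_image_of_injective _ (fun a a' h => congrArg Prod.fst h),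
      Finset.card_univ, Fintype.card_fin]
  · -- w is not the hole
    have hlast : π.symm w ≠ Fin.last n := by
      intro h
      exact hw (by rw [← h, Equiv.apply_symm_apply])
    set a₀ : Fin n := (π.symm w).castPred hlast with ha₀
    have ha₀' : π a₀.castSucc = w := by
      rw [ha₀, Fin.castSucc_castPred, Equiv.apply_symm_apply]
    have hcond : ∀ p : Fin n × Fin (n + 1),
        (Equiv.swap (π (Fin.last n)) p.2 (π p.1.castSucc) = w ↔ p.1 = a₀ ∧ p.2 ≠ w) := by
      intro p
      rw [swap_cond_iff _ _ _ _ (hy p.1)]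
      rcases eq_or_ne (π p.1.castSucc) p.2 with h | h
      · rw [if_pos h]
        constructor
        · intro hh; exact absurd hh.symm hw
        · rintro ⟨hp1, hp2⟩
          exact absurd (by rw [← h, hp1, ha₀']) hp2
      · rw [if_neg h]
        constructor
        · intro hh
          have hp1 : p.1 = a₀ := by
            have : π p.1.castSucc = π a₀.castSucc := by rw [hh, ha₀']
            exact Fin.castSucc_injective n (π.injective this)
          exact ⟨hp1, fun hpw => h (hh.trans hpw.symm)⟩
        · rintro ⟨hp1, _⟩; rw [hp1, ha₀']
    have : (Finset.univ.filter fun p : Fin n × Fin (n + 1) =>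
        Equiv.swap (π (Fin.last n)) p.2 (π p.1.castSucc) = w) =
        {a₀} ×ˢ (Finset.univ.erase w) := by
      ext p
      simp only [Finset.mem_filter, Finset.mem_univ, true_and, hcond, Finset.mem_product,
        Finset.mem_singleton, Finset.mem_erase]
      tauto
    rw [this, Finset.card_product, Finset.card_singleton,
      Finset.card_erase_of_mem (Finset.mem_univ _), Finset.card_univ, Fintype.card_fin]
    omega

def extN (t : ℕ) (x : Fin (t + 1) → Fin n) : ℕ → Fin n :=
  fun s => x ⟨min s t, Nat.lt_succ_of_le (min_le_right s t)⟩

lemma extN_eq (t : ℕ) (x : Fin (t + 1) → Fin n) (s : ℕ) (hs : s ≤ t) (h' : s < t + 1) :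
    extN t x s = x ⟨s, h'⟩ := by
  simp only [extN]
  congr 1
  ext
  simp [Nat.min_eq_left hs]

def snocEquiv (T : ℕ) (α : Type*) : ((Fin T → α) × α) ≃ (Fin (T + 1) → α) where
  toFun q := Fin.snoc q.1 q.2
  invFun x := (fun i => x i.castSucc, x (Fin.last T))
  left_inv q := by
    refine Prod.ext ?_ ?_
    · funext i; simp
    · simp
  right_inv x := by
    funext i
    refine Fin.lastCases ?_ (fun i => ?_) i
    · simp
    · simp

lemma snocEquiv_apply (T : ℕ) (α : Type*) (q : (Fin T → α) × α) :
    snocEquiv T α q = Fin.snoc q.1 q.2 := rfl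

lemma extN_snoc_le (t : ℕ) (x : Fin (t + 1) → Fin n) (a : Fin n) {s : ℕ} (hs : s ≤ t) :
    extN (t + 1) (Fin.snoc x a) s = extN t x s := by
  rw [extN_eq (t + 1) _ s (by omega) (by omega), extN_eq t x s hs (by omega)]
  have h : (⟨s, by omega⟩ : Fin (t + 2)) = Fin.castSucc ⟨s, by omega⟩ := rfl
  rw [h, Fin.snoc_castSucc]

lemma extN_snoc_top (t : ℕ) (x : Fin (t + 1) → Fin n) (a : Fin n) :
    extN (t + 1) (Fin.snoc x a) (t + 1) = a := by
  rw [extN_eq (t + 1) _ (t + 1) le_rfl (by omega)]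
  have h : (⟨t + 1, by omega⟩ : Fin (t + 2)) = Fin.last (t + 1) := rfl
  rw [h, Fin.snoc_last]

lemma extW_snoc_lt (t : ℕ) (d : Fin t → Fin (n + 1)) (e : Fin (n + 1)) {s : ℕ} (hs : s < t) :
    extW (t + 1) (Fin.snoc d e) s = extW t d s := by
  simp only [extW, dif_pos hs, dif_pos (show s < t + 1 by omega)]
  have h : (⟨s, show s < t + 1 by omega⟩ : Fin (t + 1)) = Fin.castSucc ⟨s, hs⟩ := rfl
  rw [h, Fin.snoc_castSucc]

lemma extW_snoc_top (t : ℕ) (d : Fin t → Fin (n + 1)) (e : Fin (n + 1)) :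
    extW (t + 1) (Fin.snoc d e) t = e := by
  simp only [extW, dif_pos (show t < t + 1 by omega)]
  have h : (⟨t, show t < t + 1 by omega⟩ : Fin (t + 1)) = Fin.last t := rfl
  rw [h, Fin.snoc_last]

lemma permProc_extW_snoc (t : ℕ) (d : Fin t → Fin (n + 1)) (e : Fin (n + 1)) {s : ℕ}
    (hs : s ≤ t) :
    permProc (extW (t + 1) (Fin.snoc d e)) s = permProc (extW t d) s :=
  permProc_congr fun r hr => extW_snoc_lt t d e (by omega)

theorem walk_lift {Ω : Type} [MeasurableSpace Ω] (μ : Measure Ω) [SFinite μ]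
    (hn : n ≠ 0) (Z : ℕ → Ω → Fin n) (hZm : ∀ s, Measurable (Z s))
    (hZ : IsWalkLooped μ Z) :
    IsWalkLooped (μ.prod (nu n)) fun s p => permProc p.2 s (Z s p.1).castSucc := by
  classical
  have hEm : ∀ (T : ℕ) (χ : ℕ → Fin n), MeasurableSet {ω | ∀ s ≤ T, Z s ω = χ s} := by
    intro T χ
    have h : {ω | ∀ s ≤ T, Z s ω = χ s} = ⋂ s ∈ Set.Iic T, Z s ⁻¹' {χ s} := by
      ext ω; simp
    rw [h]
    exact MeasurableSet.biInter (Set.to_countable _) fun s _ =>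
      (hZm s) (measurableSet_singleton _)
  intro t v
  have key : ∀ T : ℕ,
      (μ.prod (nu n)) {p : Ω × (ℕ → Fin (n + 1)) |
          ∀ s ≤ T, permProc p.2 s (Z s p.1).castSucc = v s} =
        ∑ q : (Fin (T + 1) → Fin n) × (Fin T → Fin (n + 1)),
          if ∀ s ≤ T, permProc (extW T q.2) s (extN T q.1 s).castSucc = v s then
            μ {ω | ∀ s ≤ T, Z s ω = extN T q.1 s} * (((n + 1 : ℕ)) : ENNReal)⁻¹ ^ T
          else 0 := by
    intro T
    have hSm : ∀ q : (Fin (T + 1) → Fin n) × (Fin T → Fin (n + 1)),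
        MeasurableSet (if (∀ s ≤ T, permProc (extW T q.2) s (extN T q.1 s).castSucc = v s) then
          ({ω | ∀ s ≤ T, Z s ω = extN T q.1 s} ×ˢ Cyl T (extW T q.2)) else
          (∅ : Set (Ω × (ℕ → Fin (n + 1))))) := by
      intro q
      split
      · exact (hEm T _).prod (measurableSet_Cyl T _)
      · exact MeasurableSet.empty
    have hdecomp : {p : Ω × (ℕ → Fin (n + 1)) |
          ∀ s ≤ T, permProc p.2 s (Z s p.1).castSucc = v s} =
        ⋃ q : (Fin (T + 1) → Fin n) × (Fin T → Fin (n + 1)),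
          if (∀ s ≤ T, permProc (extW T q.2) s (extN T q.1 s).castSucc = v s) then
            ({ω | ∀ s ≤ T, Z s ω = extN T q.1 s} ×ˢ Cyl T (extW T q.2)) else ∅ := by
      ext p
      simp only [mem_setOf_eq, mem_iUnion]
      constructor
      · intro hp
        refine ⟨(fun i : Fin (T + 1) => Z i.1 p.1, fun i : Fin T => p.2 i.1), ?_⟩
        have hx : ∀ s, s ≤ T → extN T (fun i : Fin (T + 1) => Z i.1 p.1) s = Z s p.1 := by
          intro s hs
          rw [extN_eq T _ s hs (by omega)]
        have hperm : ∀ s, s ≤ T →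
            permProc (extW T fun i : Fin T => p.2 i.1) s = permProc p.2 s := by
          intro s hs
          refine permProc_congr fun r hr => ?_
          simp [extW, show r < T by omega]
        rw [if_pos ?hok]
        case hok =>
          intro s hs
          rw [hperm s hs, hx s hs]
          exact hp s hs
        refine ⟨fun s hs => (hx s hs).symm, fun s hs => ?_⟩
        simp [extW, hs]
      · rintro ⟨q, hq⟩
        by_cases hok : (∀ s ≤ T, permProc (extW T q.2) s (extN T q.1 s).castSucc = v s)
        · rw [if_pos hok] at hq
          obtain ⟨hq1, hq2⟩ := hq
          intro s hs
          have hperm : permProc p.2 s = permProc (extW T q.2) s :=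
            permProc_congr fun r hr => hq2 r (by omega)
          rw [hperm, hq1 s hs]
          exact hok s hs
        · rw [if_neg hok] at hq
          exact absurd hq (notMem_empty p)
    have hdisj : Pairwise (Function.onFun Disjoint
        fun q : (Fin (T + 1) → Fin n) × (Fin T → Fin (n + 1)) =>
        if (∀ s ≤ T, permProc (extW T q.2) s (extN T q.1 s).castSucc = v s) then
          ({ω | ∀ s ≤ T, Z s ω = extN T q.1 s} ×ˢ Cyl T (extW T q.2)) else ∅) := by
      intro q q' hne
      refine Set.disjoint_left.2 fun p hp hp' => hne ?_
      have hmem : ∀ (r : (Fin (T + 1) → Fin n) × (Fin T → Fin (n + 1))),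
          p ∈ (if (∀ s ≤ T, permProc (extW T r.2) s (extN T r.1 s).castSucc = v s) then
            ({ω | ∀ s ≤ T, Z s ω = extN T r.1 s} ×ˢ Cyl T (extW T r.2)) else ∅) →
          r = (fun i : Fin (T + 1) => Z i.1 p.1, fun i : Fin T => p.2 i.1) := by
        intro r hr
        by_cases h1 : (∀ s ≤ T, permProc (extW T r.2) s (extN T r.1 s).castSucc = v s)
        · rw [if_pos h1] at hr
          obtain ⟨hr1, hr2⟩ := hr
          refine Prod.ext ?_ ?_
          · funext i
            have h2 := hr1 i.1 (Nat.lt_succ_iff.mp i.2)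
            rw [extN_eq T _ i.1 (Nat.lt_succ_iff.mp i.2) i.2] at h2
            simpa using h2.symm
          · funext i
            have h2 := hr2 i.1 i.2
            simp only [extW, dif_pos i.2] at h2
            simpa using h2.symm
        · rw [if_neg h1] at hr
          exact absurd hr (notMem_empty p)
      exact (hmem q hp).trans (hmem q' hp').symm
    rw [hdecomp, measure_iUnion hdisj hSm, tsum_fintype]
    refine Finset.sum_congr rfl fun q _ => ?_
    by_cases h : (∀ s ≤ T, permProc (extW T q.2) s (extN T q.1 s).castSucc = v s)
    · rw [if_pos h, if_pos h, Measure.prod_prod, nu_Cyl]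
    · rw [if_neg h, if_neg h, measure_empty]
  have inner : ∀ (x : Fin (t + 1) → Fin n) (d : Fin t → Fin (n + 1)),
      (∑ a : Fin n, ∑ e : Fin (n + 1),
        (if (∀ s ≤ t + 1, permProc (extW (t + 1) (Fin.snoc d e)) s
            (extN (t + 1) (Fin.snoc x a) s).castSucc = v s) then
          μ {ω | ∀ s ≤ t + 1, Z s ω = extN (t + 1) (Fin.snoc x a) s} *
            (((n + 1 : ℕ)) : ENNReal)⁻¹ ^ (t + 1)
        else 0)) =
      (if (∀ s ≤ t, permProc (extW t d) s (extN t x s).castSucc = v s) then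
        μ {ω | ∀ s ≤ t, Z s ω = extN t x s} * (((n + 1 : ℕ)) : ENNReal)⁻¹ ^ t
      else 0) * (((n + 1 : ℕ)) : ENNReal)⁻¹ := by
    intro x d
    have hmeasμ : ∀ a : Fin n,
        μ {ω | ∀ s ≤ t + 1, Z s ω = extN (t + 1) (Fin.snoc x a) s} =
          μ {ω | ∀ s ≤ t, Z s ω = extN t x s} * ((n : ℕ) : ENNReal)⁻¹ := by
      intro a
      rw [hZ t (extN (t + 1) (Fin.snoc x a))]
      congr 2
      ext ω
      refine forall₂_congr fun s hs => ?_
      rw [extN_snoc_le t x a hs]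
    have hcond : ∀ (a : Fin n) (e : Fin (n + 1)),
        (∀ s ≤ t + 1, permProc (extW (t + 1) (Fin.snoc d e)) s
            (extN (t + 1) (Fin.snoc x a) s).castSucc = v s) ↔
        ((∀ s ≤ t, permProc (extW t d) s (extN t x s).castSucc = v s) ∧
          Equiv.swap (permProc (extW t d) t (Fin.last n)) e
            (permProc (extW t d) t a.castSucc) = v (t + 1)) := by
      intro a e
      constructor
      · intro h
        refine ⟨fun s hs => ?_, ?_⟩
        · have h2 := h s (by omega)
          rwa [permProc_extW_snoc t d e hs, extN_snoc_le t x a hs] at h2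
        · have h2 := h (t + 1) le_rfl
          rw [extN_snoc_top, permProc_succ, Equiv.Perm.mul_apply, extW_snoc_top,
            permProc_extW_snoc t d e le_rfl] at h2
          exact h2
      · rintro ⟨h1, h2⟩ s hs
        rcases Nat.lt_or_ge s (t + 1) with hlt | hge
        · have hs' : s ≤ t := by omega
          rw [permProc_extW_snoc t d e hs', extN_snoc_le t x a hs']
          exact h1 s hs'
        · have hseq : s = t + 1 := by omega
          subst hseq
          rw [extN_snoc_top, permProc_succ, Equiv.Perm.mul_apply, extW_snoc_top,
            permProc_extW_snoc t d e le_rfl]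
          exact h2
    have step1 : ∀ (a : Fin n) (e : Fin (n + 1)),
        (if (∀ s ≤ t + 1, permProc (extW (t + 1) (Fin.snoc d e)) s
            (extN (t + 1) (Fin.snoc x a) s).castSucc = v s) then
          μ {ω | ∀ s ≤ t + 1, Z s ω = extN (t + 1) (Fin.snoc x a) s} *
            (((n + 1 : ℕ)) : ENNReal)⁻¹ ^ (t + 1)
        else 0) =
        (if ((∀ s ≤ t, permProc (extW t d) s (extN t x s).castSucc = v s) ∧
            Equiv.swap (permProc (extW t d) t (Fin.last n)) e
              (permProc (extW t d) t a.castSucc) = v (t + 1)) then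
          μ {ω | ∀ s ≤ t, Z s ω = extN t x s} * ((n : ℕ) : ENNReal)⁻¹ *
            (((n + 1 : ℕ)) : ENNReal)⁻¹ ^ (t + 1)
        else 0) := by
      intro a e
      rw [hmeasμ a]
      exact if_congr (hcond a e) rfl rfl
    refine (Finset.sum_congr rfl fun a _ => Finset.sum_congr rfl fun e _ => step1 a e).trans ?_
    by_cases hok : (∀ s ≤ t, permProc (extW t d) s (extN t x s).castSucc = v s)
    · rw [if_pos hok]
      refine (Finset.sum_congr rfl fun a _ => Finset.sum_congr rfl fun e _ =>
        if_congr (and_iff_right hok) rfl rfl).trans ?_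
      have hsum := Fintype.sum_prod_type (f := fun p : Fin n × Fin (n + 1) =>
        if Equiv.swap (permProc (extW t d) t (Fin.last n)) p.2
            (permProc (extW t d) t p.1.castSucc) = v (t + 1) then
          μ {ω | ∀ s ≤ t, Z s ω = extN t x s} * ((n : ℕ) : ENNReal)⁻¹ *
            (((n + 1 : ℕ)) : ENNReal)⁻¹ ^ (t + 1)
        else 0)
      rw [← hsum, Finset.sum_ite, Finset.sum_const, Finset.sum_const_zero, add_zero,
        count_swap hn, nsmul_eq_mul]
      have hcancel : ((n : ℕ) : ENNReal) * ((n : ℕ) : ENNReal)⁻¹ = 1 :=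
        ENNReal.mul_inv_cancel (Nat.cast_ne_zero.mpr hn) (ENNReal.natCast_ne_top n)
      calc ((n : ℕ) : ENNReal) *
            (μ {ω | ∀ s ≤ t, Z s ω = extN t x s} * ((n : ℕ) : ENNReal)⁻¹ *
              (((n + 1 : ℕ)) : ENNReal)⁻¹ ^ (t + 1))
          = (((n : ℕ) : ENNReal) * ((n : ℕ) : ENNReal)⁻¹) *
              (μ {ω | ∀ s ≤ t, Z s ω = extN t x s} *
                (((n + 1 : ℕ)) : ENNReal)⁻¹ ^ (t + 1)) := by ring
        _ = μ {ω | ∀ s ≤ t, Z s ω = extN t x s} * (((n + 1 : ℕ)) : ENNReal)⁻¹ ^ t *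
              (((n + 1 : ℕ)) : ENNReal)⁻¹ := by
            rw [hcancel, one_mul, pow_succ, mul_assoc]
    · rw [if_neg hok]
      refine (Finset.sum_congr rfl fun a _ => Finset.sum_congr rfl fun e _ =>
        (if_neg fun hc => hok hc.1)).trans ?_
      simp
  show (μ.prod (nu n)) {p : Ω × (ℕ → Fin (n + 1)) |
      ∀ s ≤ t + 1, permProc p.2 s (Z s p.1).castSucc = v s} =
    (μ.prod (nu n)) {p : Ω × (ℕ → Fin (n + 1)) |
      ∀ s ≤ t, permProc p.2 s (Z s p.1).castSucc = v s} * (((n + 1 : ℕ)) : ENNReal)⁻¹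
  rw [key (t + 1), key t]
  rw [← Equiv.sum_comp (Equiv.prodCongr (snocEquiv (t + 1) (Fin n)) (snocEquiv t (Fin (n + 1))))]
  simp only [Equiv.prodCongr_apply, Prod.map, snocEquiv_apply, Fintype.sum_prod_type]
  rw [Finset.sum_mul]
  refine Finset.sum_congr rfl fun x _ => ?_
  rw [Finset.sum_comm, Finset.sum_mul]
  refine Finset.sum_congr rfl fun d _ => ?_
  exact inner x d

lemma measurable_lift {Ω : Type} [MeasurableSpace Ω] (Z : ℕ → Ω → Fin n)
    (hZm : ∀ s, Measurable (Z s)) (s : ℕ) :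
    Measurable fun p : Ω × (ℕ → Fin (n + 1)) => permProc p.2 s (Z s p.1).castSucc := by
  classical
  have hrep : (fun p : Ω × (ℕ → Fin (n + 1)) => permProc p.2 s (Z s p.1).castSucc) =
      (fun q : Fin n × (Fin s → Fin (n + 1)) => permProc (extW s q.2) s q.1.castSucc) ∘
        (fun p => (Z s p.1, fun i : Fin s => p.2 i.1)) := by
    funext p
    simp only [Function.comp]
    have hp : permProc p.2 s = permProc (extW s fun i : Fin s => p.2 i.1) s := by
      refine permProc_congr fun r hr => ?_
      simp [extW, hr]
    rw [hp]
  rw [hrep]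
  exact (measurable_of_countable _).comp (((hZm s).comp measurable_fst).prodMk
    (measurable_pi_lambda _ fun i => (measurable_pi_apply i.1).comp measurable_snd))

end AvoidanceAux

/-- If there is an avoidance coupling of `k` walkers on `K_n^*`, then there is
an avoidance coupling of `k` walkers on `K_{n+1}^*`. -/
theorem avoidance_coupling_looped_monotone (n k : ℕ) (hn : 2 ≤ n) (hk : 1 ≤ k)
    (h : AvoidanceCouplingLooped n k) : AvoidanceCouplingLooped (n + 1) k := by
  classical
  obtain ⟨Ω, mΩ, μ, X, hprob, hmeas, hwalk, havoid⟩ := h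
  haveI := hprob
  refine ⟨Ω × (ℕ → Fin (n + 1)), inferInstance, μ.prod (AvoidanceAux.nu n),
    fun j => fun s p => AvoidanceAux.permProc p.2 s ((X j s p.1).castSucc),
    inferInstance, ?_, ?_, ?_⟩
  · exact fun j s => AvoidanceAux.measurable_lift (X j) (hmeas j) s
  · exact fun j => AvoidanceAux.walk_lift μ (by omega) (X j) (hmeas j) (hwalk j)
  · show ∀ᵐ p ∂(μ.prod (AvoidanceAux.nu n)), _
    have h2 : ∀ᵐ p ∂(μ.prod (AvoidanceAux.nu n)),
        ((∀ i j : Fin k, i ≠ j → X i 0 p.1 ≠ X j 0 p.1) ∧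
          (∀ (t : ℕ) (i j : Fin k),
            (i < j → X j (t + 1) p.1 ≠ X i (t + 1) p.1) ∧
            (j < i → X j (t + 1) p.1 ≠ X i t p.1))) := by
      have hv : μ {ω | ¬ ((∀ i j : Fin k, i ≠ j → X i 0 ω ≠ X j 0 ω) ∧
          (∀ (t : ℕ) (i j : Fin k),
            (i < j → X j (t + 1) ω ≠ X i (t + 1) ω) ∧
            (j < i → X j (t + 1) ω ≠ X i t ω)))} = 0 := ae_iff.mp havoid
      rw [ae_iff]
      obtain ⟨N, hNsub, hNm, hN0⟩ := exists_measurable_superset_of_null hv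
      refine measure_mono_null (fun p hp => ?_) (?_ : (μ.prod (AvoidanceAux.nu n))
        (Prod.fst ⁻¹' N) = 0)
      · exact hNsub hp
      · have hN : (Prod.fst ⁻¹' N : Set (Ω × (ℕ → Fin (n + 1)))) = N ×ˢ Set.univ := by
          ext p; simp
        rw [hN, Measure.prod_prod, hN0, zero_mul]
    refine h2.mono fun p hp => ?_
    obtain ⟨h0, hstep⟩ := hp
    constructor
    · intro i j hij hc
      have hcast : (X i 0 p.1).castSucc = (X j 0 p.1).castSucc :=
        (AvoidanceAux.permProc p.2 0).injective hc
      exact h0 i j hij (Fin.castSucc_injective n hcast)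
    · intro t i j
      constructor
      · intro hij hc
        have hcast := (AvoidanceAux.permProc p.2 (t + 1)).injective hc
        exact (hstep t i j).1 hij (Fin.castSucc_injective n hcast)
      · intro hji
        exact AvoidanceAux.permProc_step_ne p.2 t ((hstep t i j).2 hji)
end

section
/- If there exists an avoidance coupling of k walkers on the looped complete graph K_n^*, then there exists a 1-avoidance coupling of k Bern(1/n) walkers. -/
open MeasureTheory ProbabilityTheory

/-- `B` is a sequence of i.i.d. Bernoulli(`p`) random variables (with values
in `Bool`, where `true` plays the role of `1`). -/
def IsBernoulliSeq {Ω : Type} [MeasurableSpace Ω] (μ : Measure Ω) (p : ℝ)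
    (B : ℕ → Ω → Bool) : Prop :=
  ∀ (t : ℕ) (v : ℕ → Bool),
    μ {ω | ∀ s ≤ t, B s ω = v s} =
      ∏ s ∈ Finset.range (t + 1), ENNReal.ofReal (if v s then p else 1 - p)

/-- The `k` Bernoulli walkers `B 0, …, B (k-1)`, taking turns in cyclic order,
almost surely are never simultaneously at `1`: at most one of the initial
values is `1`, and at every moment of the interleaved schedule (just after
walker `j` has made its move number `t+1`) at most one of the current values
is `1`. -/
def OneAvoidanceAE {Ω : Type} [MeasurableSpace Ω] (μ : Measure Ω) {k : ℕ}
    (B : Fin k → ℕ → Ω → Bool) : Prop :=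
  ∀ᵐ ω ∂μ,
    (∀ i₁ i₂ : Fin k, i₁ ≠ i₂ → ¬(B i₁ 0 ω = true ∧ B i₂ 0 ω = true)) ∧
    (∀ (t : ℕ) (j i₁ i₂ : Fin k), i₁ ≠ i₂ →
      ¬((if i₁ ≤ j then B i₁ (t + 1) ω else B i₁ t ω) = true ∧
        (if i₂ ≤ j then B i₂ (t + 1) ω else B i₂ t ω) = true))

/-- There is a 1-avoidance coupling of `k` Bernoulli(`p`) walkers. -/
def OneAvoidanceCoupling (k : ℕ) (p : ℝ) : Prop :=
  ∃ (Ω : Type) (_ : MeasurableSpace Ω) (μ : Measure Ω)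
    (B : Fin k → ℕ → Ω → Bool),
      IsProbabilityMeasure μ ∧ (∀ j t, Measurable (B j t)) ∧
      (∀ j, IsBernoulliSeq μ p (B j)) ∧ OneAvoidanceAE μ B

private lemma cyl_measurable {Ω : Type} [MeasurableSpace Ω] {n : ℕ}
    {Y : ℕ → Ω → Fin n} (hY : ∀ t, Measurable (Y t)) (T : ℕ) (w : ℕ → Fin n) :
    MeasurableSet {ω | ∀ s ≤ T, Y s ω = w s} := by
  have : {ω | ∀ s ≤ T, Y s ω = w s} = ⋂ s, ⋂ _ : s ≤ T, Y s ⁻¹' {w s} := by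
    ext ω; simp [Set.mem_iInter]
  rw [this]
  exact MeasurableSet.iInter fun s => MeasurableSet.iInter fun _ =>
    (hY s) (measurableSet_singleton _)

private lemma walk_window_measure {Ω : Type} [MeasurableSpace Ω] (μ : Measure Ω)
    [IsProbabilityMeasure μ] {n : ℕ} (hn : 0 < n)
    (Y : ℕ → Ω → Fin n) (hY : ∀ t, Measurable (Y t)) (hw : IsWalkLooped μ Y)
    (A : ℕ → Finset (Fin n)) (t : ℕ) :
    μ {ω | ∀ s ≤ t, Y (s + 1) ω ∈ A s} =
      ∏ s ∈ Finset.range (t + 1),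
        (((A s).card : ENNReal) * ((n : ℕ) : ENNReal)⁻¹) := by
  classical
  set d : Fin n := ⟨0, hn⟩ with hd
  have key : ∀ T : ℕ, ∃ S : Finset (ℕ → Fin n),
      ({ω | ∀ s < T, Y (s + 1) ω ∈ A s} = ⋃ w ∈ S, {ω | ∀ s ≤ T, Y s ω = w s}) ∧
      (∀ w ∈ S, ∀ s, T < s → w s = d) ∧
      (∑ w ∈ S, μ {ω | ∀ s ≤ T, Y s ω = w s} =
        ∏ s ∈ Finset.range T, (((A s).card : ENNReal) * ((n : ℕ) : ENNReal)⁻¹)) := by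
    intro T
    induction T with
    | zero =>
      refine ⟨(Finset.univ : Finset (Fin n)).image
        (fun v0 => fun s => if s = 0 then v0 else d), ?_, ?_, ?_⟩
      · ext ω
        simp only [Set.mem_setOf_eq, Set.mem_iUnion, Finset.mem_image,
          Finset.mem_univ, true_and]
        constructor
        · intro _
          exact ⟨fun s => if s = 0 then Y 0 ω else d, ⟨Y 0 ω, rfl⟩,
            fun s hs => by interval_cases s; simp⟩
        · intro _ s hs; omega
      · rintro w hw' s hs
        simp only [Finset.mem_image, Finset.mem_univ, true_and] at hw'
        obtain ⟨v0, rfl⟩ := hw'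
        simp [(show s ≠ 0 by omega)]
      · rw [Finset.sum_image (by
          intro a _ b _ hab
          have := congrFun hab 0
          simpa using this)]
        simp only [Finset.range_zero, Finset.prod_empty]
        have heq : ∀ v0 : Fin n,
            {ω | ∀ s ≤ 0, Y s ω = (fun s => if s = 0 then v0 else d) s}
              = Y 0 ⁻¹' {v0} := by
          intro v0; ext ω
          simp only [Set.mem_setOf_eq, Set.mem_preimage, Set.mem_singleton_iff]
          constructor
          · intro h; simpa using h 0 le_rfl
          · intro h s hs; interval_cases s; simpa using h
        calc ∑ v0 : Fin n, μ {ω | ∀ s ≤ 0,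
                Y s ω = (fun s => if s = 0 then v0 else d) s}
            = ∑ v0 : Fin n, μ (Y 0 ⁻¹' {v0}) := by
              exact Finset.sum_congr rfl fun v0 _ => by rw [heq]
          _ = μ (⋃ v0 ∈ (Finset.univ : Finset (Fin n)), Y 0 ⁻¹' {v0}) := by
              refine (measure_biUnion_finset ?_ ?_).symm
              · intro a _ b _ hab
                refine Set.disjoint_left.2 fun ω ha hb => hab ?_
                simp only [Set.mem_preimage, Set.mem_singleton_iff] at ha hb
                rw [← ha, ← hb]
              · intro v0 _; exact (hY 0) (measurableSet_singleton _)
          _ = μ Set.univ := by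
              congr 1; ext ω; simp
          _ = 1 := measure_univ
    | succ t ih =>
      obtain ⟨S, hS1, hS2, hS3⟩ := ih
      refine ⟨(S ×ˢ A t).image
        (fun p => Function.update p.1 (t + 1) p.2), ?_, ?_, ?_⟩
      · have hsplit : {ω | ∀ s < t + 1, Y (s + 1) ω ∈ A s}
            = {ω | ∀ s < t, Y (s + 1) ω ∈ A s} ∩ {ω | Y (t + 1) ω ∈ A t} := by
          ext ω
          simp only [Set.mem_setOf_eq, Set.mem_inter_iff]
          constructor
          · intro h
            exact ⟨fun s hs => h s (by omega), h t (by omega)⟩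
          · rintro ⟨h1, h2⟩ s hs
            rcases Nat.lt_succ_iff_lt_or_eq.1 hs with hs | rfl
            · exact h1 s hs
            · exact h2
        rw [hsplit, hS1]
        ext ω
        simp only [Set.mem_inter_iff, Set.mem_iUnion, Finset.mem_image,
          Finset.mem_product, Set.mem_setOf_eq]
        constructor
        · rintro ⟨⟨w, hwS, hcyl⟩, hAt⟩
          refine ⟨Function.update w (t + 1) (Y (t + 1) ω),
            ⟨⟨w, Y (t + 1) ω⟩, ⟨hwS, hAt⟩, rfl⟩, ?_⟩
          intro s hs
          rcases Nat.lt_succ_iff_lt_or_eq.1 (Nat.lt_succ_of_le hs) with hs' | rfl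
          · rw [Function.update_of_ne (by omega)]
            exact hcyl s (by omega)
          · simp [Function.update_self]
        · rintro ⟨w', ⟨⟨w, a⟩, ⟨hwS, haA⟩, rfl⟩, hcyl⟩
          constructor
          · refine ⟨w, hwS, fun s hs => ?_⟩
            have := hcyl s (by omega)
            rwa [Function.update_of_ne (by omega)] at this
          · have := hcyl (t + 1) le_rfl
            rw [Function.update_self] at this
            rwa [this]
      · rintro w' hw' s hs
        simp only [Finset.mem_image, Finset.mem_product] at hw'
        obtain ⟨⟨w, a⟩, ⟨hwS, _⟩, rfl⟩ := hw'
        rw [Function.update_of_ne (by omega)]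
        exact hS2 w hwS s (by omega)
      · rw [Finset.sum_image (by
          rintro ⟨w1, a1⟩ h1 ⟨w2, a2⟩ h2 hab
          simp only [Finset.coe_product, Set.mem_prod, Finset.mem_coe, Finset.mem_product] at h1 h2
          have ha : a1 = a2 := by
            have := congrFun hab (t + 1)
            simpa [Function.update_self] using this
          have hww : w1 = w2 := by
            funext s
            by_cases hs : s = t + 1
            · subst hs
              rw [hS2 w1 h1.1 (t + 1) (by omega), hS2 w2 h2.1 (t + 1) (by omega)]
            · have := congrFun hab s
              beta_reduce at this
              rwa [Function.update_of_ne hs, Function.update_of_ne hs] at this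
          rw [ha, hww])]
        rw [Finset.sum_product]
        have hterm : ∀ w ∈ S, ∀ a ∈ A t,
            μ {ω | ∀ s ≤ t + 1, Y s ω = Function.update w (t + 1) a s}
              = μ {ω | ∀ s ≤ t, Y s ω = w s} * ((n : ℕ) : ENNReal)⁻¹ := by
          intro w _ a _
          rw [hw t (Function.update w (t + 1) a)]
          congr 2
          ext ω
          simp only [Set.mem_setOf_eq]
          constructor
          · intro h s hs
            have := h s hs
            rwa [Function.update_of_ne (by omega)] at this
          · intro h s hs
            rw [Function.update_of_ne (by omega)]
            exact h s hs
        calc ∑ w ∈ S, ∑ a ∈ A t,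
              μ {ω | ∀ s ≤ t + 1, Y s ω = Function.update w (t + 1) a s}
            = ∑ w ∈ S, ∑ _a ∈ A t,
                μ {ω | ∀ s ≤ t, Y s ω = w s} * ((n : ℕ) : ENNReal)⁻¹ := by
              exact Finset.sum_congr rfl fun w hwS =>
                Finset.sum_congr rfl fun a haA => hterm w hwS a haA
          _ = (∑ w ∈ S, μ {ω | ∀ s ≤ t, Y s ω = w s}) *
                (((A t).card : ENNReal) * ((n : ℕ) : ENNReal)⁻¹) := by
              simp only [Finset.sum_const, nsmul_eq_mul]
              rw [Finset.sum_mul]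
              exact Finset.sum_congr rfl fun w _ => by ring
          _ = _ := by
              rw [hS3, Finset.prod_range_succ]
  obtain ⟨S, hS1, hS2, hS3⟩ := key (t + 1)
  have hev : {ω | ∀ s ≤ t, Y (s + 1) ω ∈ A s}
      = {ω | ∀ s < t + 1, Y (s + 1) ω ∈ A s} := by
    ext ω; simp only [Set.mem_setOf_eq, Nat.lt_succ_iff]
  rw [hev, hS1, measure_biUnion_finset ?_ (fun w _ => cyl_measurable hY _ w)]
  · exact hS3
  · intro w hwS w' hw'S hne
    refine Set.disjoint_left.2 fun ω hω hω' => hne ?_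
    funext s
    by_cases hs : s ≤ t + 1
    · rw [← hω s hs, ← hω' s hs]
    · rw [hS2 w hwS s (by omega), hS2 w' hw'S s (by omega)]

/-- If there is an avoidance coupling of `k` walkers on `K_n^*`, then there is
a 1-avoidance coupling of `k` Bernoulli(`1/n`) walkers. -/
theorem one_avoidance_of_avoidance_coupling_looped (n k : ℕ)
    (hn : 2 ≤ n) (hk : 1 ≤ k) (h : AvoidanceCouplingLooped n k) :
    OneAvoidanceCoupling k (1 / (n : ℝ)) := by
  classical
  obtain ⟨Ω, mΩ, μ, X, hprob, hmes, hwalk, havoid⟩ := h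
  have hn0 : 0 < n := by omega
  set z : Fin n := ⟨0, hn0⟩ with hz
  refine ⟨Ω, mΩ, μ, fun j t ω => decide (X j (t + 1) ω = z), hprob, ?_, ?_, ?_⟩
  · intro j t
    exact Measurable.comp (f := X j (t + 1))
      (g := fun x => decide (x = z)) Measurable.of_discrete (hmes j (t + 1))
  · intro j t v
    have := walk_window_measure μ hn0 (X j) (hmes j) (hwalk j)
      (fun s => if v s then ({z} : Finset (Fin n)) else ({z}ᶜ : Finset (Fin n))) t
    have hset : {ω | ∀ s ≤ t, (decide (X j (s + 1) ω = z)) = v s}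
        = {ω | ∀ s ≤ t, X j (s + 1) ω ∈
            (if v s then ({z} : Finset (Fin n)) else ({z}ᶜ : Finset (Fin n)))} := by
      ext ω
      simp only [Set.mem_setOf_eq]
      refine forall_congr' fun s => forall_congr' fun hs => ?_
      by_cases hv : v s <;> simp [hv, decide_eq_true_iff, Finset.mem_compl]
    rw [hset, this]
    refine Finset.prod_congr rfl fun s _ => ?_
    by_cases hv : v s
    · rw [if_pos hv, if_pos hv, Finset.card_singleton]
      rw [one_div, ← ENNReal.ofReal_natCast n,
        ← ENNReal.ofReal_inv_of_pos (by exact_mod_cast hn0)]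
      simp
    · rw [if_neg hv, if_neg hv, Finset.card_compl, Finset.card_singleton, Fintype.card_fin]
      have h1 : (1 : ℝ) - 1 / n = ((n - 1 : ℕ) : ℝ) / n := by
        have : ((n - 1 : ℕ) : ℝ) = (n : ℝ) - 1 := by
          push_cast [Nat.cast_sub (by omega : 1 ≤ n)]; ring
        rw [this]
        field_simp
      rw [h1, ENNReal.ofReal_div_of_pos (by exact_mod_cast hn0),
        ENNReal.ofReal_natCast, ENNReal.ofReal_natCast]
      rw [div_eq_mul_inv]
  · filter_upwards [havoid] with ω hω
    obtain ⟨-, h2⟩ := hω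
    have hdist : ∀ (t : ℕ) (i₁ i₂ : Fin k), i₁ < i₂ →
        X i₂ (t + 1) ω ≠ X i₁ (t + 1) ω := fun t i₁ i₂ hlt => (h2 t i₁ i₂).1 hlt
    have hdist2 : ∀ (t : ℕ) (i₁ i₂ : Fin k), i₁ < i₂ →
        X i₁ (t + 1) ω ≠ X i₂ t ω := fun t i₁ i₂ hlt => (h2 t i₂ i₁).2 hlt
    constructor
    · intro i₁ i₂ hne
      rintro ⟨ha, hb⟩
      rw [decide_eq_true_iff] at ha hb
      rcases hne.lt_or_gt with hlt | hlt
      · exact hdist 0 i₁ i₂ hlt (hb.trans ha.symm)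
      · exact hdist 0 i₂ i₁ hlt (ha.trans hb.symm)
    · intro t j i₁ i₂ hne
      rintro ⟨ha, hb⟩
      have hval : ∀ i : Fin k,
          (if i ≤ j then (fun ω => decide (X i (t + 1 + 1) ω = z)) ω
            else (fun ω => decide (X i (t + 1) ω = z)) ω) = true →
          (if i ≤ j then X i (t + 2) ω else X i (t + 1) ω) = z := by
        intro i hi
        by_cases hij : i ≤ j <;> simp_all [decide_eq_true_iff]
      have ha' := hval i₁ ha
      have hb' := hval i₂ hb
      have hcol : (if i₁ ≤ j then X i₁ (t + 2) ω else X i₁ (t + 1) ω)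
          = (if i₂ ≤ j then X i₂ (t + 2) ω else X i₂ (t + 1) ω) := by
        rw [ha', hb']
      -- derive contradiction by cases
      by_cases h1 : i₁ ≤ j <;> by_cases hcase : i₂ ≤ j
      · rw [if_pos h1, if_pos hcase] at hcol
        rcases hne.lt_or_gt with hlt | hlt
        · exact hdist (t + 1) i₁ i₂ hlt hcol.symm
        · exact hdist (t + 1) i₂ i₁ hlt hcol
      · rw [if_pos h1, if_neg hcase] at hcol
        have hlt : i₁ < i₂ := lt_of_le_of_lt h1 (lt_of_not_ge hcase)
        exact hdist2 (t + 1) i₁ i₂ hlt hcol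
      · rw [if_neg h1, if_pos hcase] at hcol
        have hlt : i₂ < i₁ := lt_of_le_of_lt hcase (lt_of_not_ge h1)
        exact hdist2 (t + 1) i₂ i₁ hlt hcol.symm
      · rw [if_neg h1, if_neg hcase] at hcol
        rcases hne.lt_or_gt with hlt | hlt
        · exact hdist t i₁ i₂ hlt hcol.symm
        · exact hdist t i₂ i₁ hlt hcol
end

section
/- Let m, n ≥ 2 and r, s ≥ 1 be integers. If there exist avoidance couplings of r walkers on the looped complete graph K_m^* and of s walkers on the looped complete graph K_n^*, then for every k with r + s − 1 ≤ k ≤ r·s there exists an avoidance coupling of k walkers on K_{mn}^*; moreover, if the two given couplings are Markovian, then the resulting coupling can be taken to be Markovian. -/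
open MeasureTheory ProbabilityTheory

private lemma profile_exists (r s k : ℕ) (hr : 1 ≤ r) (hs : 1 ≤ s)
    (hk1 : r + s - 1 ≤ k) (hk2 : k ≤ r * s) :
    ∃ c : ℕ → ℕ, c 0 = s ∧ (∀ a, a < r → 1 ≤ c a ∧ c a ≤ s) ∧
      ∑ a ∈ Finset.range r, c a = k := by
  have inner : ∀ r' k', r' ≤ k' → k' ≤ r' * s →
      ∃ c : ℕ → ℕ, (∀ a, a < r' → 1 ≤ c a ∧ c a ≤ s) ∧
        ∑ a ∈ Finset.range r', c a = k' := by
    intro r'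
    induction r' with
    | zero =>
      intro k' h1 h2
      simp only [Nat.zero_mul, Nat.le_zero] at h2
      exact ⟨fun _ => 1, fun a ha => absurd ha (by omega), by simp [h2]⟩
    | succ r ih =>
      intro k' h1 h2
      have hmul : (r + 1) * s = r * s + s := by ring
      have hle : k' - min s (k' - r) ≤ r * s := by
        rcases le_total s (k' - r) with h | h
        · omega
        · have : r ≤ r * s := Nat.le_mul_of_pos_right r (by omega)
          omega
      obtain ⟨c, hc, hsum⟩ := ih (k' - min s (k' - r)) (by omega) hle
      refine ⟨fun a => if a < r then c a else min s (k' - r), ?_, ?_⟩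
      · intro a ha
        by_cases h : a < r
        · simpa [h] using hc a h
        · simp only [h, if_false]; omega
      · rw [Finset.sum_range_succ]
        have heq : ∑ a ∈ Finset.range r, (if a < r then c a else min s (k' - r))
            = ∑ a ∈ Finset.range r, c a :=
          Finset.sum_congr rfl (fun a ha => if_pos (Finset.mem_range.mp ha))
        rw [heq, hsum, if_neg (lt_irrefl r)]
        omega
  have hms : (r - 1) * s = r * s - s := by
    cases r with
    | zero => omega
    | succ r => simp [Nat.succ_sub_one, Nat.succ_mul]
  obtain ⟨c, hc, hsum⟩ := inner (r - 1) (k - s) (by omega) (by omega)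
  refine ⟨fun a => if a = 0 then s else c (a - 1), by simp, ?_, ?_⟩
  · intro a ha
    by_cases h : a = 0
    · simp [h]; omega
    · simpa [h] using hc (a - 1) (by omega)
  · rw [show r = (r - 1) + 1 by omega, Finset.sum_range_succ']
    have heq : ∑ i ∈ Finset.range (r - 1), (if i + 1 = 0 then s else c (i + 1 - 1))
        = ∑ i ∈ Finset.range (r - 1), c i :=
      Finset.sum_congr rfl (fun i _ => by simp)
    rw [heq, hsum]
    have h0 : (if (0:ℕ) = 0 then s else c (0 - 1)) = s := if_pos rfl
    rw [h0]
    omega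

private lemma emb_exists (r s k : ℕ) (hr : 1 ≤ r) (hs : 1 ≤ s)
    (hk1 : r + s - 1 ≤ k) (hk2 : k ≤ r * s) :
    ∃ (row : Fin k → Fin r) (col : Fin k → Fin s),
      (∀ p q : Fin k, p < q ↔ (row p < row q ∨ (row p = row q ∧ col p < col q))) ∧
      (∀ a : Fin r, ∃ p, row p = a ∧ (col p : ℕ) = 0) ∧
      (∀ b : Fin s, ∃ p, (row p : ℕ) = 0 ∧ col p = b) := by
  classical
  obtain ⟨c, hc0, hcb, hsum⟩ := profile_exists r s k hr hs hk1 hk2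
  set S : Finset (Lex (Fin r × Fin s)) :=
    Finset.univ.filter (fun z => ((ofLex z).2 : ℕ) < c ((ofLex z).1 : ℕ)) with hS
  have hmem : ∀ z : Fin r × Fin s, toLex z ∈ S ↔ ((z.2 : ℕ) < c (z.1 : ℕ)) := by
    intro z; simp [hS]
  -- cardinality
  set T : Finset (Fin r × Fin s) :=
    Finset.univ.filter (fun z => (z.2 : ℕ) < c (z.1 : ℕ)) with hT
  have hST : S.card = T.card := by
    refine Finset.card_bij (fun z _ => ofLex z) ?_ ?_ ?_
    · intro z hz; simp [hS, hT] at hz ⊢; exact hz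
    · intro z1 _ z2 _ h
      exact (ofLex.injective h)
    · intro z hz
      refine ⟨toLex z, ?_, rfl⟩
      simp [hS, hT] at hz ⊢; exact hz
  have hfil : ∀ t', t' ≤ s →
      (Finset.univ.filter (fun b : Fin s => (b : ℕ) < t')).card = t' := by
    intro t' ht'
    have : (Finset.univ.filter (fun b : Fin s => (b : ℕ) < t')).card
        = (Finset.range t').card := by
      refine Finset.card_bij (fun b _ => (b : ℕ)) ?_ ?_ ?_
      · intro b hb; simp at hb ⊢; exact hb
      · intro b1 _ b2 _ h; exact Fin.val_injective h
      · intro x hx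
        refine ⟨⟨x, lt_of_lt_of_le (Finset.mem_range.mp hx) ht'⟩, by simpa using Finset.mem_range.mp hx, rfl⟩
    rw [this, Finset.card_range]
  have hTcard : T.card = k := by
    have hTb : T = Finset.univ.biUnion (fun a : Fin r =>
        (Finset.univ.filter (fun b : Fin s => (b : ℕ) < c (a : ℕ))).image (fun b => (a, b))) := by
      ext ⟨a, b⟩
      simp [hT]
    rw [hTb, Finset.card_biUnion]
    · have : ∀ a : Fin r,
          ((Finset.univ.filter (fun b : Fin s => (b : ℕ) < c (a : ℕ))).image (fun b => (a, b))).card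
          = c (a : ℕ) := by
        intro a
        rw [Finset.card_image_of_injective _ (fun b1 b2 h => (Prod.mk.injEq _ _ _ _).mp h |>.2)]
        exact hfil _ (hcb a (a.isLt)).2
      rw [Finset.sum_congr rfl (fun a _ => this a), Fin.sum_univ_eq_sum_range, hsum]
    · intro a _ a' _ hne
      simp only [Finset.disjoint_left]
      rintro ⟨x, y⟩ hx hy
      simp only [Finset.mem_image] at hx hy
      obtain ⟨b1, _, hb1⟩ := hx
      obtain ⟨b2, _, hb2⟩ := hy
      apply hne
      have h1 : a = x := congrArg Prod.fst hb1
      have h2 : a' = x := congrArg Prod.fst hb2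
      rw [h1, h2]
  have hcard : S.card = k := hST.trans hTcard
  set e := S.orderIsoOfFin hcard with he
  set E : Fin k → Fin r × Fin s := fun j => ofLex ((e j : Lex (Fin r × Fin s))) with hE
  have hlt : ∀ p q : Fin k,
      p < q ↔ ((E p).1 < (E q).1 ∨ ((E p).1 = (E q).1 ∧ (E p).2 < (E q).2)) := by
    intro p q
    rw [show ((E p).1 < (E q).1 ∨ ((E p).1 = (E q).1 ∧ (E p).2 < (E q).2)) ↔ toLex (E p) < toLex (E q) from Prod.Lex.lt_iff.symm]
    have h1 : toLex (E p) = ((e p : Lex (Fin r × Fin s))) := toLex_ofLex _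
    have h2 : toLex (E q) = ((e q : Lex (Fin r × Fin s))) := toLex_ofLex _
    rw [h1, h2]
    rw [Subtype.coe_lt_coe]
    exact (e.lt_iff_lt).symm
  have hsurj : ∀ z : Fin r × Fin s, (z.2 : ℕ) < c (z.1 : ℕ) → ∃ j, E j = z := by
    intro z hz
    refine ⟨e.symm ⟨toLex z, (hmem z).mpr hz⟩, ?_⟩
    simp [hE]
  refine ⟨fun j => (E j).1, fun j => (E j).2, hlt, ?_, ?_⟩
  · intro a
    obtain ⟨j, hj⟩ := hsurj (a, ⟨0, hs⟩) (by simpa using Nat.lt_of_lt_of_le Nat.zero_lt_one (hcb (a : ℕ) a.isLt).1)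
    exact ⟨j, by show (E j).1 = a; rw [hj], by show ((E j).2 : ℕ) = 0; rw [hj]⟩
  · intro b
    obtain ⟨j, hj⟩ := hsurj (⟨0, hr⟩, b) (by simpa [hc0] using b.isLt)
    exact ⟨j, by show ((E j).1 : ℕ) = 0; rw [hj], by show (E j).2 = b; rw [hj]⟩

/-- Choice of a representative product-walker for each base-walker index. -/
noncomputable def sigF {kk d : ℕ} (ρ : Fin kk → Fin d) (σ : Fin d → Fin kk)
    (j : Fin kk) (i : Fin d) : Fin kk :=
  if h : ∃ p, p < j ∧ ρ p = i then h.choose else if ρ j = i then j else σ i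

/-- One-coordinate transition rule for the product coupling. -/
noncomputable def gBranch {kk d mm : ℕ} (ρ : Fin kk → Fin d) (σ : Fin d → Fin kk)
    (f : Fin d → (Fin d → Fin mm) → PMF (Fin mm))
    (j : Fin kk) (cc : Fin kk → Fin mm) : PMF (Fin mm) :=
  if h : ∃ p, p < j ∧ ρ p = ρ j then PMF.pure (cc h.choose)
  else f (ρ j) (fun i => cc (sigF ρ σ j i))

private lemma markov_core {W : Type} [MeasurableSpace W] (ν : Measure W) {d mm kk : ℕ}
    (U : Fin d → ℕ → W → Fin mm) (f : Fin d → (Fin d → Fin mm) → PMF (Fin mm))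
    (hM : ∀ (t : ℕ) (a : Fin d) (v : Fin d → ℕ → Fin mm) (w : Fin mm),
      ν {ω | ((∀ i : Fin d, ∀ s ≤ t, U i s ω = v i s) ∧
              (∀ i < a, U i (t + 1) ω = v i (t + 1))) ∧ U a (t + 1) ω = w} =
        ν {ω | (∀ i : Fin d, ∀ s ≤ t, U i s ω = v i s) ∧
               (∀ i < a, U i (t + 1) ω = v i (t + 1))} *
          f a (fun i => if i < a then v i (t + 1) else v i t) w)
    (t : ℕ) (j : Fin kk) (ρ : Fin kk → Fin d) (σ : Fin d → Fin kk)
    (hσ : ∀ i, ρ (σ i) = i)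
    (hun : (¬ ∃ p, p < j ∧ ρ p = ρ j) →
        (∀ i, i < ρ j → ∃ p, p < j ∧ ρ p = i) ∧ (∀ p, p < j → ρ p ≤ ρ j))
    (vv : Fin kk → ℕ → Fin mm) (x : Fin mm) :
    ν {ω | ((∀ p : Fin kk, ∀ s ≤ t, U (ρ p) s ω = vv p s) ∧
            (∀ p < j, U (ρ p) (t + 1) ω = vv p (t + 1))) ∧ U (ρ j) (t + 1) ω = x} =
      ν {ω | (∀ p : Fin kk, ∀ s ≤ t, U (ρ p) s ω = vv p s) ∧
             (∀ p < j, U (ρ p) (t + 1) ω = vv p (t + 1))} *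
        gBranch ρ σ f j (fun p => if p < j then vv p (t + 1) else vv p t) x := by
  classical
  have hρF : ∀ i, ρ (sigF ρ σ j i) = i := by
    intro i
    unfold sigF
    split_ifs with h1 h2
    · exact h1.choose_spec.2
    · rw [h2]
    · exact hσ i
  unfold gBranch
  split_ifs with hcon
  · -- constrained (pure) branch
    obtain ⟨hlt', hρ'⟩ := hcon.choose_spec
    have hval : ((fun p => if p < j then vv p (t + 1) else vv p t) hcon.choose)
        = vv hcon.choose (t + 1) := by simp only [if_pos hlt']
    rw [hval, PMF.pure_apply]
    by_cases hx : x = vv hcon.choose (t + 1)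
    · have hset : {ω | ((∀ p : Fin kk, ∀ s ≤ t, U (ρ p) s ω = vv p s) ∧
            (∀ p < j, U (ρ p) (t + 1) ω = vv p (t + 1))) ∧ U (ρ j) (t + 1) ω = x}
          = {ω | (∀ p : Fin kk, ∀ s ≤ t, U (ρ p) s ω = vv p s) ∧
             (∀ p < j, U (ρ p) (t + 1) ω = vv p (t + 1))} := by
        ext ω
        simp only [Set.mem_setOf_eq, and_iff_left_iff_imp]
        intro h
        have h4 := h.2 hcon.choose hlt'
        rw [hρ'] at h4
        rw [h4, hx]
      rw [hset, if_pos hx, mul_one]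
    · have hset : {ω | ((∀ p : Fin kk, ∀ s ≤ t, U (ρ p) s ω = vv p s) ∧
            (∀ p < j, U (ρ p) (t + 1) ω = vv p (t + 1))) ∧ U (ρ j) (t + 1) ω = x}
          = (∅ : Set W) := by
        ext ω
        simp only [Set.mem_setOf_eq, Set.mem_empty_iff_false, iff_false]
        rintro ⟨⟨_, h2⟩, h3⟩
        have h4 := h2 hcon.choose hlt'
        rw [hρ'] at h4
        exact hx (h3.symm.trans h4)
      rw [hset, if_neg hx, mul_zero, measure_empty]
  · -- unconstrained branch
    obtain ⟨H1, H2⟩ := hun hcon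
    have hcrit : ∀ i : Fin d, (i < ρ j ↔ sigF ρ σ j i < j) := by
      intro i
      rcases lt_trichotomy i (ρ j) with hi | hi | hi
      · obtain ⟨p0, hp1, hp2⟩ := H1 i hi
        have hex : ∃ p, p < j ∧ ρ p = i := ⟨p0, hp1, hp2⟩
        simp only [sigF, dif_pos hex]
        exact iff_of_true hi hex.choose_spec.1
      · have hnex : ¬ ∃ p, p < j ∧ ρ p = i := by rw [hi]; exact hcon
        simp only [sigF, dif_neg hnex, if_pos hi.symm]
        exact iff_of_false (by rw [hi]; exact lt_irrefl _) (lt_irrefl j)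
      · have hnex : ¬ ∃ p, p < j ∧ ρ p = i := by
          rintro ⟨p, hpj, hpi⟩
          exact absurd (H2 p hpj) (by rw [hpi]; exact not_le.mpr hi)
        simp only [sigF, dif_neg hnex, if_neg (ne_of_lt hi)]
        exact iff_of_false (not_lt.mpr hi.le)
          (fun hlt => absurd (H2 (σ i) hlt) (by rw [hσ i]; exact not_le.mpr hi))
    by_cases hc : (∀ p q : Fin kk, ρ p = ρ q → ∀ s ≤ t, vv p s = vv q s) ∧
        (∀ p q : Fin kk, p < j → q < j → ρ p = ρ q → vv p (t + 1) = vv q (t + 1))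
    · -- consistent
      have hEeq : {ω | (∀ p : Fin kk, ∀ s ≤ t, U (ρ p) s ω = vv p s) ∧
             (∀ p < j, U (ρ p) (t + 1) ω = vv p (t + 1))}
          = {ω | (∀ i : Fin d, ∀ s ≤ t, U i s ω = vv (sigF ρ σ j i) s) ∧
             (∀ i < ρ j, U i (t + 1) ω = vv (sigF ρ σ j i) (t + 1))} := by
        ext ω
        simp only [Set.mem_setOf_eq]
        constructor
        · rintro ⟨ha, hb⟩
          constructor
          · intro i s hst
            have h' := ha (sigF ρ σ j i) s hst
            rwa [hρF i] at h'
          · intro i hi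
            have h' := hb (sigF ρ σ j i) ((hcrit i).mp hi)
            rwa [hρF i] at h'
        · rintro ⟨ha, hb⟩
          constructor
          · intro p s hst
            rw [ha (ρ p) s hst]
            exact hc.1 (sigF ρ σ j (ρ p)) p (hρF (ρ p)) s hst
          · intro p hp
            rcases lt_or_eq_of_le (H2 p hp) with h' | h'
            · rw [hb (ρ p) h']
              exact hc.2 (sigF ρ σ j (ρ p)) p ((hcrit (ρ p)).mp h') hp (hρF (ρ p))
            · exact absurd ⟨p, hp, h'⟩ hcon
      have hEeq2 : {ω | ((∀ p : Fin kk, ∀ s ≤ t, U (ρ p) s ω = vv p s) ∧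
            (∀ p < j, U (ρ p) (t + 1) ω = vv p (t + 1))) ∧ U (ρ j) (t + 1) ω = x}
          = {ω | ((∀ i : Fin d, ∀ s ≤ t, U i s ω = vv (sigF ρ σ j i) s) ∧
             (∀ i < ρ j, U i (t + 1) ω = vv (sigF ρ σ j i) (t + 1))) ∧
             U (ρ j) (t + 1) ω = x} := by
        ext ω
        have h' := Set.ext_iff.mp hEeq ω
        simp only [Set.mem_setOf_eq] at h' ⊢
        exact and_congr_left (fun _ => h')
      rw [hEeq, hEeq2]
      have hMk := hM t (ρ j) (fun i s' => vv (sigF ρ σ j i) s') x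
      rw [hMk]
      congr 1
      have hcfg : (fun i => if i < ρ j then vv (sigF ρ σ j i) (t + 1) else vv (sigF ρ σ j i) t)
          = (fun i => if sigF ρ σ j i < j then vv (sigF ρ σ j i) (t + 1)
              else vv (sigF ρ σ j i) t) := by
        funext i
        exact if_congr (hcrit i) rfl rfl
      rw [hcfg]
    · -- inconsistent: base event is empty
      have hEempty : {ω | (∀ p : Fin kk, ∀ s ≤ t, U (ρ p) s ω = vv p s) ∧
             (∀ p < j, U (ρ p) (t + 1) ω = vv p (t + 1))} = (∅ : Set W) := by
        rw [Set.eq_empty_iff_forall_notMem]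
        intro ω hω
        apply hc
        constructor
        · intro p q hρpq s hst
          rw [← hω.1 p s hst, ← hω.1 q s hst, hρpq]
        · intro p q hpj hqj hρpq
          rw [← hω.2 p hpj, ← hω.2 q hqj, hρpq]
      have hsub : {ω | ((∀ p : Fin kk, ∀ s ≤ t, U (ρ p) s ω = vv p s) ∧
            (∀ p < j, U (ρ p) (t + 1) ω = vv p (t + 1))) ∧ U (ρ j) (t + 1) ω = x}
          ⊆ {ω | (∀ p : Fin kk, ∀ s ≤ t, U (ρ p) s ω = vv p s) ∧
             (∀ p < j, U (ρ p) (t + 1) ω = vv p (t + 1))} := fun ω h => h.1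
      rw [measure_mono_null hsub (by rw [hEempty]; exact measure_empty),
        hEempty, measure_empty, zero_mul]

/-- Product of two PMFs, seen on `Fin (m*n)`. -/
noncomputable def pairPMF {m n : ℕ} (p : PMF (Fin m)) (q : PMF (Fin n)) :
    PMF (Fin (m * n)) :=
  PMF.ofFintype (fun w => p (finProdFinEquiv.symm w).1 * q (finProdFinEquiv.symm w).2)
    (by
      have h1 : ∑ w : Fin (m * n), p (finProdFinEquiv.symm w).1 * q (finProdFinEquiv.symm w).2
          = ∑ z : Fin m × Fin n, p z.1 * q z.2 :=
        Fintype.sum_equiv finProdFinEquiv.symm _ _ (fun w => rfl)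
      rw [h1, Fintype.sum_prod_type, ← Finset.sum_mul_sum]
      have hp : ∑ a : Fin m, p a = 1 := by have h := p.tsum_coe; rwa [tsum_fintype] at h
      have hq : ∑ b : Fin n, q b = 1 := by have h := q.tsum_coe; rwa [tsum_fintype] at h
      rw [hp, hq, one_mul])

lemma pairPMF_apply {m n : ℕ} (p : PMF (Fin m)) (q : PMF (Fin n)) (w : Fin (m * n)) :
    pairPMF p q w = p (finProdFinEquiv.symm w).1 * q (finProdFinEquiv.symm w).2 :=
  PMF.ofFintype_apply _ _

private lemma ae_prod_fst {Ω1 Ω2 : Type} [MeasurableSpace Ω1] [MeasurableSpace Ω2]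
    (μ1 : Measure Ω1) (μ2 : Measure Ω2) [SFinite μ2] {p : Ω1 → Prop}
    (h : ∀ᵐ ω ∂μ1, p ω) : ∀ᵐ ω ∂(μ1.prod μ2), p ω.1 := by
  rw [ae_iff] at h ⊢
  refine measure_mono_null (t := {a | ¬ p a} ×ˢ (Set.univ : Set Ω2))
    (fun ω hω => Set.mk_mem_prod hω (Set.mem_univ ω.2)) ?_
  rw [Measure.prod_prod, h, zero_mul]

private lemma ae_prod_snd {Ω1 Ω2 : Type} [MeasurableSpace Ω1] [MeasurableSpace Ω2]
    (μ1 : Measure Ω1) (μ2 : Measure Ω2) [SFinite μ2] {p : Ω2 → Prop}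
    (h : ∀ᵐ ω ∂μ2, p ω) : ∀ᵐ ω ∂(μ1.prod μ2), p ω.2 := by
  rw [ae_iff] at h ⊢
  refine measure_mono_null (t := (Set.univ : Set Ω1) ×ˢ {a | ¬ p a})
    (fun ω hω => Set.mk_mem_prod (Set.mem_univ ω.1) hω) ?_
  rw [Measure.prod_prod, h, mul_zero]

private lemma build {m n r s k : ℕ}
    (row : Fin k → Fin r) (col : Fin k → Fin s)
    (hlt : ∀ p q : Fin k, p < q ↔ (row p < row q ∨ (row p = row q ∧ col p < col q)))
    (hcov1 : ∀ a : Fin r, ∃ p, row p = a ∧ (col p : ℕ) = 0)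
    (hcov2 : ∀ b : Fin s, ∃ p, (row p : ℕ) = 0 ∧ col p = b)
    {Ω1 Ω2 : Type} [MeasurableSpace Ω1] [MeasurableSpace Ω2]
    (μ1 : Measure Ω1) (μ2 : Measure Ω2)
    [IsProbabilityMeasure μ1] [IsProbabilityMeasure μ2]
    (X : Fin r → ℕ → Ω1 → Fin m) (Y : Fin s → ℕ → Ω2 → Fin n)
    (hXm : ∀ j t, Measurable (X j t)) (hYm : ∀ j t, Measurable (Y j t))
    (hXw : ∀ j, IsWalkLooped μ1 (X j)) (hYw : ∀ j, IsWalkLooped μ2 (Y j))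
    (hXa : AvoidsAE μ1 X) (hYa : AvoidsAE μ2 Y) :
    ∃ Z : Fin k → ℕ → (Ω1 × Ω2) → Fin (m * n),
      (∀ j t, Measurable (Z j t)) ∧
      (∀ j, IsWalkLooped (μ1.prod μ2) (Z j)) ∧
      AvoidsAE (μ1.prod μ2) Z ∧
      (IsMarkovianCoupling μ1 X → IsMarkovianCoupling μ2 Y →
        IsMarkovianCoupling (μ1.prod μ2) Z) := by
  classical
  have hZiff : ∀ (jj : Fin k) (tt : ℕ) (ω : Ω1 × Ω2) (u : Fin (m * n)),
      (finProdFinEquiv (X (row jj) tt ω.1, Y (col jj) tt ω.2) = u) ↔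
        (X (row jj) tt ω.1 = (finProdFinEquiv.symm u).1 ∧
         Y (col jj) tt ω.2 = (finProdFinEquiv.symm u).2) := by
    intro jj tt ω u
    rw [Equiv.apply_eq_iff_eq_symm_apply, Prod.ext_iff]
  refine ⟨fun j t ω => finProdFinEquiv (X (row j) t ω.1, Y (col j) t ω.2),
    ?_, ?_, ?_, ?_⟩
  · -- measurability
    intro j t
    exact (measurable_of_countable _).comp
      (((hXm _ _).comp measurable_fst).prodMk ((hYm _ _).comp measurable_snd))
  · -- faithfulness
    intro j t v
    have hfa : ∀ T : ℕ,
        {ω : Ω1 × Ω2 | ∀ s ≤ T, finProdFinEquiv (X (row j) s ω.1, Y (col j) s ω.2) = v s}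
        = {ω1 | ∀ s ≤ T, X (row j) s ω1 = (finProdFinEquiv.symm (v s)).1} ×ˢ
          {ω2 | ∀ s ≤ T, Y (col j) s ω2 = (finProdFinEquiv.symm (v s)).2} := by
      intro T
      ext ω
      simp only [Set.mem_setOf_eq, Set.mem_prod]
      constructor
      · intro h
        exact ⟨fun s hs => ((hZiff j s ω (v s)).mp (h s hs)).1,
               fun s hs => ((hZiff j s ω (v s)).mp (h s hs)).2⟩
      · rintro ⟨h1, h2⟩ s hs
        exact (hZiff j s ω (v s)).mpr ⟨h1 s hs, h2 s hs⟩
    show (μ1.prod μ2)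
        {ω : Ω1 × Ω2 | ∀ s ≤ t + 1, finProdFinEquiv (X (row j) s ω.1, Y (col j) s ω.2) = v s}
      = (μ1.prod μ2)
        {ω : Ω1 × Ω2 | ∀ s ≤ t, finProdFinEquiv (X (row j) s ω.1, Y (col j) s ω.2) = v s}
        * ((m * n : ℕ) : ENNReal)⁻¹
    rw [hfa (t + 1), hfa t, Measure.prod_prod, Measure.prod_prod,
      hXw (row j) t (fun s => (finProdFinEquiv.symm (v s)).1),
      hYw (col j) t (fun s => (finProdFinEquiv.symm (v s)).2)]
    have hc : ((m * n : ℕ) : ENNReal)⁻¹ = ((m : ℕ) : ENNReal)⁻¹ * ((n : ℕ) : ENNReal)⁻¹ := by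
      rw [Nat.cast_mul, ENNReal.mul_inv (Or.inr (ENNReal.natCast_ne_top n))
        (Or.inl (ENNReal.natCast_ne_top m))]
    rw [hc]
    ring
  · -- avoidance
    refine Filter.Eventually.mono ((ae_prod_fst μ1 μ2 hXa).and (ae_prod_snd μ1 μ2 hYa)) ?_
    rintro ω ⟨⟨hX0, hXt⟩, ⟨hY0, hYt⟩⟩
    have hnei : ∀ p q : Fin k, p ≠ q → row p = row q → col p ≠ col q := by
      intro p q hne hrow hcol
      rcases lt_trichotomy p q with h | h | h
      · rcases (hlt p q).mp h with h' | ⟨_, h'⟩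
        · exact absurd h' (by rw [hrow]; exact lt_irrefl _)
        · exact absurd h' (by rw [hcol]; exact lt_irrefl _)
      · exact hne h
      · rcases (hlt q p).mp h with h' | ⟨_, h'⟩
        · exact absurd h' (by rw [hrow]; exact lt_irrefl _)
        · exact absurd h' (by rw [hcol]; exact lt_irrefl _)
    constructor
    · intro i j' hne heq
      have hpair := finProdFinEquiv.injective heq
      have hx := congrArg Prod.fst hpair
      have hy := congrArg Prod.snd hpair
      by_cases hrow : row i = row j'
      · exact hY0 _ _ (hnei i j' hne hrow) hy
      · exact hX0 _ _ hrow hx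
    · intro tt i j'
      have hnewX : ∀ a b : Fin r, a ≠ b → X a (tt + 1) ω.1 ≠ X b (tt + 1) ω.1 := by
        intro a b hab
        rcases lt_or_gt_of_ne hab with h | h
        · exact fun he => (hXt tt a b).1 h he.symm
        · exact (hXt tt b a).1 h
      have hnewY : ∀ a b : Fin s, a ≠ b → Y a (tt + 1) ω.2 ≠ Y b (tt + 1) ω.2 := by
        intro a b hab
        rcases lt_or_gt_of_ne hab with h | h
        · exact fun he => (hYt tt a b).1 h he.symm
        · exact (hYt tt b a).1 h
      constructor
      · intro hij heq
        have hpair := finProdFinEquiv.injective heq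
        have hx := congrArg Prod.fst hpair
        have hy := congrArg Prod.snd hpair
        by_cases hrow : row j' = row i
        · exact hnewY _ _ (hnei j' i (ne_of_gt hij) hrow) hy
        · exact hnewX _ _ hrow hx
      · intro hij heq
        have hpair := finProdFinEquiv.injective heq
        have hx := congrArg Prod.fst hpair
        have hy := congrArg Prod.snd hpair
        rcases (hlt j' i).mp hij with h | ⟨h1, h2⟩
        · exact (hXt tt (row i) (row j')).2 h hx
        · exact (hYt tt (col i) (col j')).2 h2 hy
  · -- Markov
    rintro ⟨fX, hfX⟩ ⟨fY, hfY⟩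
    choose σX hσXrow hσXcol using hcov1
    choose σY hσYrow hσYcol using hcov2
    refine ⟨fun j cc =>
      pairPMF (gBranch row σX fX j (fun p => (finProdFinEquiv.symm (cc p)).1))
              (gBranch col σY fY j (fun p => (finProdFinEquiv.symm (cc p)).2)), ?_⟩
    intro t j v w
    have hfact1 :
        {ω : Ω1 × Ω2 | ((∀ i : Fin k, ∀ s ≤ t,
              finProdFinEquiv (X (row i) s ω.1, Y (col i) s ω.2) = v i s) ∧
            (∀ i < j, finProdFinEquiv (X (row i) (t + 1) ω.1, Y (col i) (t + 1) ω.2)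
              = v i (t + 1))) ∧
            finProdFinEquiv (X (row j) (t + 1) ω.1, Y (col j) (t + 1) ω.2) = w}
        = {ω1 | ((∀ p : Fin k, ∀ s ≤ t, X (row p) s ω1 = (finProdFinEquiv.symm (v p s)).1) ∧
              (∀ p < j, X (row p) (t + 1) ω1 = (finProdFinEquiv.symm (v p (t + 1))).1)) ∧
              X (row j) (t + 1) ω1 = (finProdFinEquiv.symm w).1} ×ˢ
          {ω2 | ((∀ p : Fin k, ∀ s ≤ t, Y (col p) s ω2 = (finProdFinEquiv.symm (v p s)).2) ∧
              (∀ p < j, Y (col p) (t + 1) ω2 = (finProdFinEquiv.symm (v p (t + 1))).2)) ∧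
              Y (col j) (t + 1) ω2 = (finProdFinEquiv.symm w).2} := by
      ext ω
      simp only [Set.mem_setOf_eq, Set.mem_prod]
      constructor
      · rintro ⟨⟨h1, h2⟩, h3⟩
        exact ⟨⟨⟨fun p s' hs => ((hZiff p s' ω (v p s')).mp (h1 p s' hs)).1,
                fun p hp => ((hZiff p (t + 1) ω (v p (t + 1))).mp (h2 p hp)).1⟩,
                ((hZiff j (t + 1) ω w).mp h3).1⟩,
              ⟨⟨fun p s' hs => ((hZiff p s' ω (v p s')).mp (h1 p s' hs)).2,
                fun p hp => ((hZiff p (t + 1) ω (v p (t + 1))).mp (h2 p hp)).2⟩,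
                ((hZiff j (t + 1) ω w).mp h3).2⟩⟩
      · rintro ⟨⟨⟨ha1, hb1⟩, hc1⟩, ⟨⟨ha2, hb2⟩, hc2⟩⟩
        exact ⟨⟨fun p s' hs => (hZiff p s' ω (v p s')).mpr ⟨ha1 p s' hs, ha2 p s' hs⟩,
                fun p hp => (hZiff p (t + 1) ω (v p (t + 1))).mpr ⟨hb1 p hp, hb2 p hp⟩⟩,
               (hZiff j (t + 1) ω w).mpr ⟨hc1, hc2⟩⟩
    have hfact2 :
        {ω : Ω1 × Ω2 | (∀ i : Fin k, ∀ s ≤ t,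
              finProdFinEquiv (X (row i) s ω.1, Y (col i) s ω.2) = v i s) ∧
            (∀ i < j, finProdFinEquiv (X (row i) (t + 1) ω.1, Y (col i) (t + 1) ω.2)
              = v i (t + 1))}
        = {ω1 | (∀ p : Fin k, ∀ s ≤ t, X (row p) s ω1 = (finProdFinEquiv.symm (v p s)).1) ∧
              (∀ p < j, X (row p) (t + 1) ω1 = (finProdFinEquiv.symm (v p (t + 1))).1)} ×ˢ
          {ω2 | (∀ p : Fin k, ∀ s ≤ t, Y (col p) s ω2 = (finProdFinEquiv.symm (v p s)).2) ∧
              (∀ p < j, Y (col p) (t + 1) ω2 = (finProdFinEquiv.symm (v p (t + 1))).2)} := by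
      ext ω
      simp only [Set.mem_setOf_eq, Set.mem_prod]
      constructor
      · rintro ⟨h1, h2⟩
        exact ⟨⟨fun p s' hs => ((hZiff p s' ω (v p s')).mp (h1 p s' hs)).1,
                fun p hp => ((hZiff p (t + 1) ω (v p (t + 1))).mp (h2 p hp)).1⟩,
              ⟨fun p s' hs => ((hZiff p s' ω (v p s')).mp (h1 p s' hs)).2,
                fun p hp => ((hZiff p (t + 1) ω (v p (t + 1))).mp (h2 p hp)).2⟩⟩
      · rintro ⟨⟨ha1, hb1⟩, ⟨ha2, hb2⟩⟩
        exact ⟨fun p s' hs => (hZiff p s' ω (v p s')).mpr ⟨ha1 p s' hs, ha2 p s' hs⟩,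
               fun p hp => (hZiff p (t + 1) ω (v p (t + 1))).mpr ⟨hb1 p hp, hb2 p hp⟩⟩
    have hunX : (¬ ∃ p, p < j ∧ row p = row j) →
        (∀ a, a < row j → ∃ p, p < j ∧ row p = a) ∧ (∀ p, p < j → row p ≤ row j) := by
      intro _
      constructor
      · intro a ha
        exact ⟨σX a, (hlt (σX a) j).mpr (Or.inl (by rw [hσXrow]; exact ha)), hσXrow a⟩
      · intro p hp
        rcases (hlt p j).mp hp with h | ⟨h1, _⟩
        · exact le_of_lt h
        · exact le_of_eq h1
    have hunY : (¬ ∃ p, p < j ∧ col p = col j) →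
        (∀ b, b < col j → ∃ p, p < j ∧ col p = b) ∧ (∀ p, p < j → col p ≤ col j) := by
      intro hne
      have hr0 : (row j : ℕ) = 0 := by
        by_contra h0
        refine hne ⟨σY (col j), ?_, hσYcol (col j)⟩
        refine (hlt _ _).mpr (Or.inl ?_)
        rw [Fin.lt_def, hσYrow (col j)]
        omega
      constructor
      · intro b hb
        refine ⟨σY b, (hlt _ _).mpr (Or.inr ⟨?_, ?_⟩), hσYcol b⟩
        · exact Fin.ext (by rw [hσYrow b, hr0])
        · rw [hσYcol b]; exact hb
      · intro p hp
        rcases (hlt p j).mp hp with h | ⟨h1, h2⟩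
        · exact absurd (Fin.lt_def.mp h) (by rw [hr0]; omega)
        · exact le_of_lt h2
    have hX1 := markov_core μ1 X fX hfX t j row σX hσXrow hunX
      (fun p s' => (finProdFinEquiv.symm (v p s')).1) ((finProdFinEquiv.symm w).1)
    have hY1 := markov_core μ2 Y fY hfY t j col σY
      (fun b => Fin.ext (by rw [hσYcol b]) : ∀ b, col (σY b) = b) hunY
      (fun p s' => (finProdFinEquiv.symm (v p s')).2) ((finProdFinEquiv.symm w).2)
    show (μ1.prod μ2)
        {ω : Ω1 × Ω2 | ((∀ i : Fin k, ∀ s ≤ t,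
              finProdFinEquiv (X (row i) s ω.1, Y (col i) s ω.2) = v i s) ∧
            (∀ i < j, finProdFinEquiv (X (row i) (t + 1) ω.1, Y (col i) (t + 1) ω.2)
              = v i (t + 1))) ∧
            finProdFinEquiv (X (row j) (t + 1) ω.1, Y (col j) (t + 1) ω.2) = w}
      = (μ1.prod μ2)
        {ω : Ω1 × Ω2 | (∀ i : Fin k, ∀ s ≤ t,
              finProdFinEquiv (X (row i) s ω.1, Y (col i) s ω.2) = v i s) ∧
            (∀ i < j, finProdFinEquiv (X (row i) (t + 1) ω.1, Y (col i) (t + 1) ω.2)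
              = v i (t + 1))} *
        (pairPMF
          (gBranch row σX fX j
            (fun p => (finProdFinEquiv.symm (if p < j then v p (t + 1) else v p t)).1))
          (gBranch col σY fY j
            (fun p => (finProdFinEquiv.symm (if p < j then v p (t + 1) else v p t)).2))) w
    rw [hfact1, hfact2, Measure.prod_prod, Measure.prod_prod, hX1, hY1, pairPMF_apply]
    have hccx : (fun p => (finProdFinEquiv.symm (if p < j then v p (t + 1) else v p t)).1)
        = (fun p => if p < j then (finProdFinEquiv.symm (v p (t + 1))).1
            else (finProdFinEquiv.symm (v p t)).1) := by
      funext p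
      by_cases h : p < j <;> simp [h]
    have hccy : (fun p => (finProdFinEquiv.symm (if p < j then v p (t + 1) else v p t)).2)
        = (fun p => if p < j then (finProdFinEquiv.symm (v p (t + 1))).2
            else (finProdFinEquiv.symm (v p t)).2) := by
      funext p
      by_cases h : p < j <;> simp [h]
    rw [hccx, hccy]
    ring

/-- Product lemma: from avoidance couplings of `r` walkers on `K_m^*` and of
`s` walkers on `K_n^*` one obtains an avoidance coupling of `k` walkers on
`K_{mn}^*` for any `r + s - 1 ≤ k ≤ r * s`; moreover, if the given couplings
are Markovian then so is the resulting one. -/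
theorem avoidance_coupling_looped_product (m n r s k : ℕ)
    (hm : 2 ≤ m) (hn : 2 ≤ n) (hr : 1 ≤ r) (hs : 1 ≤ s)
    (hk1 : r + s - 1 ≤ k) (hk2 : k ≤ r * s) :
    (AvoidanceCouplingLooped m r → AvoidanceCouplingLooped n s →
      AvoidanceCouplingLooped (m * n) k) ∧
    (MarkovianAvoidanceCouplingLooped m r → MarkovianAvoidanceCouplingLooped n s →
      MarkovianAvoidanceCouplingLooped (m * n) k) := by
  obtain ⟨row, col, hlt, hcov1, hcov2⟩ := emb_exists r s k hr hs hk1 hk2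
  constructor
  · rintro ⟨Ω1, m1, μ1, X, hP1, hXm, hXw, hXa⟩ ⟨Ω2, m2, μ2, Y, hP2, hYm, hYw, hYa⟩
    haveI := hP1; haveI := hP2
    obtain ⟨Z, hZm, hZw, hZa, -⟩ :=
      build row col hlt hcov1 hcov2 μ1 μ2 X Y hXm hYm hXw hYw hXa hYa
    exact ⟨Ω1 × Ω2, inferInstance, μ1.prod μ2, Z, inferInstance, hZm, hZw, hZa⟩
  · rintro ⟨Ω1, m1, μ1, X, hP1, hXm, hXw, hXa, hXmk⟩ ⟨Ω2, m2, μ2, Y, hP2, hYm, hYw, hYa, hYmk⟩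
    haveI := hP1; haveI := hP2
    obtain ⟨Z, hZm, hZw, hZa, hmk⟩ :=
      build row col hlt hcov1 hcov2 μ1 μ2 X Y hXm hYm hXw hYw hXa hYa
    exact ⟨Ω1 × Ω2, inferInstance, μ1.prod μ2, Z, inferInstance, hZm, hZw, hZa, hmk hXmk hYmk⟩
end

section
/- For every integer n ≥ 4, there is no avoidance coupling of n − 1 walkers on the looped complete graph K_n^*. -/
open MeasureTheory ProbabilityTheory

section AuxNoAvoid

variable {Ω : Type} [MeasurableSpace Ω]

lemma aux_measurableSet_eq {n : ℕ} {f g : Ω → Fin n} (hf : Measurable f)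
    (hg : Measurable g) : MeasurableSet {ω | f ω = g ω} := by
  have h : {ω | f ω = g ω} = ⋃ a : Fin n, f ⁻¹' {a} ∩ g ⁻¹' {a} := by
    ext ω
    simp only [Set.mem_setOf_eq, Set.mem_iUnion, Set.mem_inter_iff, Set.mem_preimage,
      Set.mem_singleton_iff]
    exact ⟨fun h => ⟨g ω, h, rfl⟩, fun ⟨a, h1, h2⟩ => h1.trans h2.symm⟩
  rw [h]
  exact MeasurableSet.iUnion fun a =>
    (hf (measurableSet_singleton a)).inter (hg (measurableSet_singleton a))

lemma aux_sum_fiber {σ : Type} [MeasurableSpace σ] [Fintype σ] [MeasurableSingletonClass σ]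
    (μ : Measure Ω) (Y : Ω → σ) (hY : Measurable Y) (S : Set Ω) (hS : MeasurableSet S) :
    μ S = ∑ a : σ, μ (S ∩ Y ⁻¹' {a}) := by
  have hdisj : Set.PairwiseDisjoint (↑(Finset.univ : Finset σ))
      (fun a => S ∩ Y ⁻¹' {a}) := by
    intro a _ b _ hab
    refine Set.disjoint_left.2 fun ω h1 h2 => hab ?_
    have e1 : Y ω = a := h1.2
    have e2 : Y ω = b := h2.2
    rw [← e1, e2]
  have hmeas : ∀ a ∈ (Finset.univ : Finset σ), MeasurableSet (S ∩ Y ⁻¹' {a}) :=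
    fun a _ => hS.inter (hY (measurableSet_singleton a))
  have hunion : ⋃ a ∈ (Finset.univ : Finset σ), S ∩ Y ⁻¹' {a} = S := by
    ext ω
    simp only [Set.mem_iUnion, Set.mem_inter_iff, Set.mem_preimage, Set.mem_singleton_iff,
      Finset.mem_univ, exists_prop, true_and]
    exact ⟨fun ⟨a, hω, _⟩ => hω, fun hω => ⟨Y ω, hω, rfl⟩⟩
  rw [← hunion, measure_biUnion_finset hdisj hmeas, hunion]

lemma aux_sum_le_union {ι : Type} (μ : Measure Ω) (s : Finset ι) (E : ι → Set Ω)
    (hE : ∀ i, MeasurableSet (E i))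
    (hnull : ∀ i ∈ s, ∀ j ∈ s, i ≠ j → μ (E i ∩ E j) = 0) :
    ∑ i ∈ s, μ (E i) ≤ μ (⋃ i ∈ s, E i) := by
  classical
  induction s using Finset.induction_on with
  | empty => simp
  | @insert a s ha ih =>
    rw [Finset.sum_insert ha]
    have hU : MeasurableSet (⋃ i ∈ s, E i) :=
      Finset.measurableSet_biUnion s fun i _ => hE i
    have hzero : μ (E a ∩ ⋃ i ∈ s, E i) = 0 := by
      have he : E a ∩ ⋃ i ∈ s, E i = ⋃ i ∈ s, E a ∩ E i := by
        ext ω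
        simp only [Set.mem_inter_iff, Set.mem_iUnion]
        tauto
      rw [he]
      refine le_antisymm ?_ zero_le
      calc μ (⋃ i ∈ s, E a ∩ E i) ≤ ∑ i ∈ s, μ (E a ∩ E i) :=
            measure_biUnion_finset_le s _
        _ = 0 := Finset.sum_eq_zero fun i hi =>
            hnull a (Finset.mem_insert_self a s) i (Finset.mem_insert_of_mem hi)
              (fun h => ha (h ▸ hi))
    have key : μ (E a) + μ (⋃ i ∈ s, E i) = μ (E a ∪ ⋃ i ∈ s, E i) := by
      rw [← measure_union_add_inter (E a) hU, hzero, add_zero]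
    calc μ (E a) + ∑ i ∈ s, μ (E i)
        ≤ μ (E a) + μ (⋃ i ∈ s, E i) := by
          gcongr
          exact ih fun i hi j hj hij =>
            hnull i (Finset.mem_insert_of_mem hi) j (Finset.mem_insert_of_mem hj) hij
      _ = μ (E a ∪ ⋃ i ∈ s, E i) := key
      _ = μ (⋃ i ∈ insert a s, E i) := by rw [Finset.set_biUnion_insert]

lemma aux_pigeon {n k : ℕ} (hk : k + 1 = n) (f : Fin k → Fin n)
    (hf : Function.Injective f) {a b : Fin n}
    (ha : ∀ l, a ≠ f l) (hb : ∀ l, b ≠ f l) : a = b := by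
  by_contra hab
  have himg : (Finset.univ.image f).card = k := by
    rw [Finset.card_image_of_injective _ hf, Finset.card_univ, Fintype.card_fin]
  have hbm : b ∉ Finset.univ.image f := by
    simp only [Finset.mem_image, Finset.mem_univ, true_and, not_exists]
    exact fun l h => hb l h.symm
  have ham : a ∉ insert b (Finset.univ.image f) := by
    simp only [Finset.mem_insert, Finset.mem_image, Finset.mem_univ, true_and, not_or,
      not_exists]
    exact ⟨hab, fun l h => ha l h.symm⟩
  have hcard : (insert a (insert b (Finset.univ.image f))).card = k + 2 := by
    rw [Finset.card_insert_of_notMem ham, Finset.card_insert_of_notMem hbm, himg]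
  have hle := Finset.card_le_univ (insert a (insert b (Finset.univ.image f)))
  rw [hcard, Fintype.card_fin] at hle
  omega

lemma aux_walk_cyl {n : ℕ} (μ : Measure Ω) [IsProbabilityMeasure μ]
    (X : ℕ → Ω → Fin n) (hX : ∀ t, Measurable (X t)) (hW : IsWalkLooped μ X)
    (a b c : Fin n) :
    μ {ω | X 1 ω = a ∧ X 2 ω = b ∧ X 3 ω = c} = ((n : ENNReal))⁻¹ ^ 3 := by
  have hS : MeasurableSet {ω | X 1 ω = a ∧ X 2 ω = b ∧ X 3 ω = c} := by
    have h : {ω | X 1 ω = a ∧ X 2 ω = b ∧ X 3 ω = c} =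
        (X 1 ⁻¹' {a}) ∩ ((X 2 ⁻¹' {b}) ∩ (X 3 ⁻¹' {c})) := by
      ext ω; simp [Set.mem_preimage]
    rw [h]
    exact ((hX 1) (measurableSet_singleton a)).inter
      (((hX 2) (measurableSet_singleton b)).inter ((hX 3) (measurableSet_singleton c)))
  have key : ∀ v0 : Fin n,
      μ ({ω | X 1 ω = a ∧ X 2 ω = b ∧ X 3 ω = c} ∩ (X 0) ⁻¹' {v0}) =
        μ ((X 0) ⁻¹' {v0}) * ((n : ENNReal))⁻¹ ^ 3 := by
    intro v0
    set v : ℕ → Fin n := fun s => if s = 0 then v0 else if s = 1 then a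
      else if s = 2 then b else c with hv
    have e3 : {ω | X 1 ω = a ∧ X 2 ω = b ∧ X 3 ω = c} ∩ (X 0) ⁻¹' {v0} =
        {ω | ∀ s ≤ 3, X s ω = v s} := by
      ext ω
      simp only [Set.mem_inter_iff, Set.mem_setOf_eq, Set.mem_preimage,
        Set.mem_singleton_iff]
      constructor
      · rintro ⟨⟨h1, h2, h3⟩, h0⟩ s hs
        interval_cases s
        · simpa [hv] using h0
        · simpa [hv] using h1
        · simpa [hv] using h2
        · simpa [hv] using h3
      · intro h
        refine ⟨⟨?_, ?_, ?_⟩, ?_⟩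
        · simpa [hv] using h 1 (by norm_num)
        · simpa [hv] using h 2 (by norm_num)
        · simpa [hv] using h 3 le_rfl
        · simpa [hv] using h 0 (by norm_num)
    have e0 : {ω | ∀ s ≤ 0, X s ω = v s} = (X 0) ⁻¹' {v0} := by
      ext ω
      simp [Nat.le_zero, hv]
    have h2 : μ {ω | ∀ s ≤ 3, X s ω = v s} =
        μ {ω | ∀ s ≤ 2, X s ω = v s} * ((n : ℕ) : ENNReal)⁻¹ := hW 2 v
    have h1 : μ {ω | ∀ s ≤ 2, X s ω = v s} =
        μ {ω | ∀ s ≤ 1, X s ω = v s} * ((n : ℕ) : ENNReal)⁻¹ := hW 1 v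
    have h0 : μ {ω | ∀ s ≤ 1, X s ω = v s} =
        μ {ω | ∀ s ≤ 0, X s ω = v s} * ((n : ℕ) : ENNReal)⁻¹ := hW 0 v
    rw [e3, h2, h1, h0, e0]
    ring
  rw [aux_sum_fiber μ (X 0) (hX 0) _ hS]
  rw [Finset.sum_congr rfl fun v0 _ => key v0, ← Finset.sum_mul]
  have htot : ∑ v0 : Fin n, μ ((X 0) ⁻¹' {v0}) = 1 := by
    have h := aux_sum_fiber μ (X 0) (hX 0) Set.univ MeasurableSet.univ
    simp only [Set.univ_inter] at h
    rw [← h, measure_univ]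
  rw [htot, one_mul]

lemma aux_main (μ : Measure Ω) (hPr : IsProbabilityMeasure μ)
    {n k : ℕ} (hn : 4 ≤ n) (hk : k + 1 = n) (X : Fin k → ℕ → Ω → Fin n)
    (hM : ∀ j t, Measurable (X j t)) (hW : ∀ j, IsWalkLooped μ (X j))
    (Good : Ω → Prop) (hGae : ∀ᵐ ω ∂μ, Good ω)
    (hGprop : ∀ ω, Good ω → ∀ (t : ℕ) (i j : Fin k),
      (i < j → X j (t + 1) ω ≠ X i (t + 1) ω) ∧ (j < i → X j (t + 1) ω ≠ X i t ω)) :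
    False := by
  haveI := hPr
  have hbad : μ {ω | ¬ Good ω} = 0 := ae_iff.mp hGae
  have hzero_pos : 0 < k := by omega
  have hzero_lt : ∀ l : Fin k, l ≠ ⟨0, hzero_pos⟩ → (⟨0, hzero_pos⟩ : Fin k) < l := by
    intro l hl
    rw [Fin.lt_def]
    have hv : l.val ≠ 0 := fun h => hl (Fin.ext h)
    have h0 : ((⟨0, hzero_pos⟩ : Fin k) : ℕ) = 0 := rfl
    omega
  -- the events
  have hBmeas : ∀ j : Fin k,
      MeasurableSet {ω | X j 3 ω = X j 1 ω ∧ ¬ X j 2 ω = X j 1 ω} := by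
    intro j
    have h : {ω | X j 3 ω = X j 1 ω ∧ ¬ X j 2 ω = X j 1 ω} =
        {ω | X j 3 ω = X j 1 ω} ∩ {ω | X j 2 ω = X j 1 ω}ᶜ := by
      ext ω
      simp [Set.mem_inter_iff]
    rw [h]
    exact (aux_measurableSet_eq (hM j 3) (hM j 1)).inter
      (aux_measurableSet_eq (hM j 2) (hM j 1)).compl
  -- pointwise combinatorics
  have hInj : ∀ ω, Good ω → Function.Injective fun l : Fin k => X l 2 ω := by
    intro ω hG l l' h
    by_contra hne
    rcases lt_or_gt_of_ne hne with hlt | hlt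
    · exact (hGprop ω hG 1 l l').1 hlt h.symm
    · exact (hGprop ω hG 1 l' l).1 hlt h
  have hKey : ∀ ω, Good ω → ∀ j : Fin k, X j 3 ω = X j 1 ω → ¬ X j 2 ω = X j 1 ω →
      ∀ l : Fin k, X j 1 ω ≠ (fun l : Fin k => X l 2 ω) l := by
    intro ω hG j h31 h21 l
    rcases lt_trichotomy l j with hlj | rfl | hjl
    · exact fun h => (hGprop ω hG 1 j l).2 hlj h.symm
    · exact fun h => h21 h.symm
    · exact fun h => (hGprop ω hG 2 l j).2 hjl (h31.symm ▸ h)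
  have hKey0 : ∀ ω, Good ω → ¬ X ⟨0, hzero_pos⟩ 3 ω = X ⟨0, hzero_pos⟩ 2 ω →
      ∀ l : Fin k, X ⟨0, hzero_pos⟩ 3 ω ≠ (fun l : Fin k => X l 2 ω) l := by
    intro ω hG hmv l
    rcases eq_or_ne l ⟨0, hzero_pos⟩ with rfl | hl
    · exact hmv
    · exact (hGprop ω hG 2 l ⟨0, hzero_pos⟩).2 (hzero_lt l hl)
  -- disjointness (up to the bad null set)
  have hBB : ∀ i j : Fin k, i ≠ j →
      {ω | X i 3 ω = X i 1 ω ∧ ¬ X i 2 ω = X i 1 ω} ∩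
        {ω | X j 3 ω = X j 1 ω ∧ ¬ X j 2 ω = X j 1 ω} ⊆ {ω | ¬ Good ω} := by
    intro i j hij ω hω hG
    obtain ⟨⟨hi31, hi21⟩, ⟨hj31, hj21⟩⟩ := hω
    have heq : X i 1 ω = X j 1 ω :=
      aux_pigeon hk _ (hInj ω hG) (hKey ω hG i hi31 hi21) (hKey ω hG j hj31 hj21)
    rcases lt_or_gt_of_ne hij with hlt | hlt
    · exact (hGprop ω hG 0 i j).1 hlt heq.symm
    · exact (hGprop ω hG 0 j i).1 hlt heq
  have hAB : ∀ j : Fin k, j ≠ ⟨0, hzero_pos⟩ →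
      {ω | X j 3 ω = X j 1 ω ∧ ¬ X j 2 ω = X j 1 ω} ∩
        {ω | X ⟨0, hzero_pos⟩ 3 ω = X ⟨0, hzero_pos⟩ 2 ω}ᶜ ⊆ {ω | ¬ Good ω} := by
    intro j hj ω hω hG
    obtain ⟨⟨h31, h21⟩, hmv⟩ := hω
    have hmv' : ¬ X ⟨0, hzero_pos⟩ 3 ω = X ⟨0, hzero_pos⟩ 2 ω := hmv
    have heq : X ⟨0, hzero_pos⟩ 3 ω = X j 1 ω :=
      aux_pigeon hk _ (hInj ω hG) (hKey0 ω hG hmv') (hKey ω hG j h31 h21)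
    exact (hGprop ω hG 2 ⟨0, hzero_pos⟩ j).1 (hzero_lt j hj) (h31.trans heq.symm)
  -- measure of the return events
  have hBval : ∀ j : Fin k, μ {ω | X j 3 ω = X j 1 ω ∧ ¬ X j 2 ω = X j 1 ω} =
      (n : ENNReal) * ((↑(n - 1) : ENNReal) * ((n : ENNReal))⁻¹ ^ 3) := by
    intro j
    have hY : Measurable fun ω => (X j 1 ω, X j 2 ω) := (hM j 1).prodMk (hM j 2)
    rw [aux_sum_fiber μ (fun ω => (X j 1 ω, X j 2 ω)) hY _ (hBmeas j)]
    have hfib : ∀ p : Fin n × Fin n,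
        μ ({ω | X j 3 ω = X j 1 ω ∧ ¬ X j 2 ω = X j 1 ω} ∩
          (fun ω => (X j 1 ω, X j 2 ω)) ⁻¹' {p}) =
          if p.1 = p.2 then 0 else ((n : ENNReal))⁻¹ ^ 3 := by
      rintro ⟨a, b⟩
      by_cases hab : a = b
      · subst hab
        have he : {ω | X j 3 ω = X j 1 ω ∧ ¬ X j 2 ω = X j 1 ω} ∩
            (fun ω => (X j 1 ω, X j 2 ω)) ⁻¹' {(a, a)} = ∅ := by
          apply Set.eq_empty_iff_forall_notMem.mpr
          rintro ω ⟨⟨h31, h21⟩, hp⟩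
          simp only [Set.mem_preimage, Set.mem_singleton_iff, Prod.mk.injEq] at hp
          exact h21 (hp.2.trans hp.1.symm)
        simp [he]
      · have he : {ω | X j 3 ω = X j 1 ω ∧ ¬ X j 2 ω = X j 1 ω} ∩
            (fun ω => (X j 1 ω, X j 2 ω)) ⁻¹' {(a, b)} =
            {ω | X j 1 ω = a ∧ X j 2 ω = b ∧ X j 3 ω = a} := by
          ext ω
          simp only [Set.mem_inter_iff, Set.mem_setOf_eq, Set.mem_preimage,
            Set.mem_singleton_iff, Prod.mk.injEq]
          constructor
          · rintro ⟨⟨h31, h21⟩, h1, h2⟩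
            exact ⟨h1, h2, h31.trans h1⟩
          · rintro ⟨h1, h2, h3⟩
            refine ⟨⟨h3.trans h1.symm, ?_⟩, h1, h2⟩
            intro h
            exact hab (h1.symm.trans (h.symm.trans h2))
        rw [he, aux_walk_cyl μ (X j) (hM j) (hW j) a b a]
        simp [hab]
    rw [Finset.sum_congr rfl fun p _ => hfib p]
    rw [Fintype.sum_prod_type]
    have hinner : ∀ a : Fin n,
        (∑ b : Fin n, if a = b then (0 : ENNReal) else ((n : ENNReal))⁻¹ ^ 3) =
          (↑(n - 1) : ENNReal) * ((n : ENNReal))⁻¹ ^ 3 := by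
      intro a
      rw [Finset.sum_ite]
      have hfilter : (Finset.univ.filter fun b : Fin n => ¬ a = b) =
          Finset.univ.erase a := by
        ext b
        simp [Finset.mem_erase, eq_comm]
      simp only [Finset.sum_const_zero, zero_add, Finset.sum_const, hfilter,
        Finset.card_erase_of_mem (Finset.mem_univ a), Finset.card_univ, Fintype.card_fin,
        nsmul_eq_mul]
    rw [Finset.sum_congr rfl fun a _ => hinner a, Finset.sum_const, Finset.card_univ,
      Fintype.card_fin, nsmul_eq_mul]
  -- measure of the stay event for walker 0
  have hAval : μ {ω | X ⟨0, hzero_pos⟩ 3 ω = X ⟨0, hzero_pos⟩ 2 ω} =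
      (n : ENNReal) * ((n : ENNReal) * ((n : ENNReal))⁻¹ ^ 3) := by
    have hY : Measurable fun ω => (X ⟨0, hzero_pos⟩ 1 ω, X ⟨0, hzero_pos⟩ 2 ω) :=
      (hM _ 1).prodMk (hM _ 2)
    have hAmeas : MeasurableSet {ω | X ⟨0, hzero_pos⟩ 3 ω = X ⟨0, hzero_pos⟩ 2 ω} :=
      aux_measurableSet_eq (hM _ 3) (hM _ 2)
    rw [aux_sum_fiber μ (fun ω => (X ⟨0, hzero_pos⟩ 1 ω, X ⟨0, hzero_pos⟩ 2 ω)) hY _ hAmeas]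
    have hfib : ∀ p : Fin n × Fin n,
        μ ({ω | X ⟨0, hzero_pos⟩ 3 ω = X ⟨0, hzero_pos⟩ 2 ω} ∩
          (fun ω => (X ⟨0, hzero_pos⟩ 1 ω, X ⟨0, hzero_pos⟩ 2 ω)) ⁻¹' {p}) =
          ((n : ENNReal))⁻¹ ^ 3 := by
      rintro ⟨a, b⟩
      have he : {ω | X ⟨0, hzero_pos⟩ 3 ω = X ⟨0, hzero_pos⟩ 2 ω} ∩
          (fun ω => (X ⟨0, hzero_pos⟩ 1 ω, X ⟨0, hzero_pos⟩ 2 ω)) ⁻¹' {(a, b)} =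
          {ω | X ⟨0, hzero_pos⟩ 1 ω = a ∧ X ⟨0, hzero_pos⟩ 2 ω = b ∧
            X ⟨0, hzero_pos⟩ 3 ω = b} := by
        ext ω
        simp only [Set.mem_inter_iff, Set.mem_setOf_eq, Set.mem_preimage,
          Set.mem_singleton_iff, Prod.mk.injEq]
        constructor
        · rintro ⟨h32, h1, h2⟩
          exact ⟨h1, h2, h32.trans h2⟩
        · rintro ⟨h1, h2, h3⟩
          exact ⟨h3.trans h2.symm, h1, h2⟩
      rw [he, aux_walk_cyl μ (X ⟨0, hzero_pos⟩) (hM _) (hW _) a b b]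
    rw [Finset.sum_congr rfl fun p _ => hfib p, Finset.sum_const, Finset.card_univ,
      Fintype.card_prod, Fintype.card_fin, nsmul_eq_mul]
    push_cast
    ring
  -- the main estimate
  have hchain : ∑ j ∈ Finset.univ.erase (⟨0, hzero_pos⟩ : Fin k),
      μ {ω | X j 3 ω = X j 1 ω ∧ ¬ X j 2 ω = X j 1 ω} ≤
      μ {ω | X ⟨0, hzero_pos⟩ 3 ω = X ⟨0, hzero_pos⟩ 2 ω} := by
    have h1 : ∑ j ∈ Finset.univ.erase (⟨0, hzero_pos⟩ : Fin k),
        μ {ω | X j 3 ω = X j 1 ω ∧ ¬ X j 2 ω = X j 1 ω} ≤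
        μ (⋃ j ∈ Finset.univ.erase (⟨0, hzero_pos⟩ : Fin k),
          {ω | X j 3 ω = X j 1 ω ∧ ¬ X j 2 ω = X j 1 ω}) := by
      refine aux_sum_le_union μ _ _ hBmeas ?_
      intro i _ j _ hij
      exact measure_mono_null (hBB i j hij) hbad
    have h2 : μ (⋃ j ∈ Finset.univ.erase (⟨0, hzero_pos⟩ : Fin k),
        {ω | X j 3 ω = X j 1 ω ∧ ¬ X j 2 ω = X j 1 ω}) ≤
        μ ({ω | X ⟨0, hzero_pos⟩ 3 ω = X ⟨0, hzero_pos⟩ 2 ω} ∪ {ω | ¬ Good ω}) := by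
      refine measure_mono ?_
      intro ω hω
      simp only [Set.mem_iUnion, exists_prop] at hω
      obtain ⟨j, hj, hBj⟩ := hω
      by_cases hG : Good ω
      · by_cases hAω : ω ∈ {ω | X ⟨0, hzero_pos⟩ 3 ω = X ⟨0, hzero_pos⟩ 2 ω}
        · exact Set.mem_union_left _ hAω
        · exact absurd hG (hAB j (Finset.ne_of_mem_erase hj) ⟨hBj, hAω⟩)
      · exact Set.mem_union_right _ hG
    have h3 : μ ({ω | X ⟨0, hzero_pos⟩ 3 ω = X ⟨0, hzero_pos⟩ 2 ω} ∪ {ω | ¬ Good ω}) ≤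
        μ {ω | X ⟨0, hzero_pos⟩ 3 ω = X ⟨0, hzero_pos⟩ 2 ω} + μ {ω | ¬ Good ω} :=
      measure_union_le _ _
    rw [hbad, add_zero] at h3
    exact le_trans h1 (le_trans h2 h3)
  -- plug in values
  have hcarderase : (Finset.univ.erase (⟨0, hzero_pos⟩ : Fin k)).card = k - 1 := by
    rw [Finset.card_erase_of_mem (Finset.mem_univ _), Finset.card_univ, Fintype.card_fin]
  rw [Finset.sum_congr rfl fun j _ => hBval j, Finset.sum_const, hcarderase, hAval,
    nsmul_eq_mul] at hchain
  -- arithmetic contradiction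
  have hC0 : ((n : ENNReal))⁻¹ ^ 3 ≠ 0 := by
    apply pow_ne_zero
    simp only [ne_eq, ENNReal.inv_eq_zero]
    exact ENNReal.natCast_ne_top n
  have hCtop : ((n : ENNReal))⁻¹ ^ 3 ≠ ⊤ := by
    apply ENNReal.pow_ne_top
    rw [ENNReal.inv_ne_top]
    exact_mod_cast (by omega : n ≠ 0)
  have hcast : ((↑((k - 1) * (n * (n - 1))) : ENNReal)) * ((n : ENNReal))⁻¹ ^ 3 ≤
      ((↑(n * n) : ENNReal)) * ((n : ENNReal))⁻¹ ^ 3 := by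
    calc ((↑((k - 1) * (n * (n - 1))) : ENNReal)) * ((n : ENNReal))⁻¹ ^ 3
        = (↑(k - 1) : ENNReal) *
            ((n : ENNReal) * ((↑(n - 1) : ENNReal) * ((n : ENNReal))⁻¹ ^ 3)) := by
          push_cast
          ring
      _ ≤ (n : ENNReal) * ((n : ENNReal) * ((n : ENNReal))⁻¹ ^ 3) := hchain
      _ = ((↑(n * n) : ENNReal)) * ((n : ENNReal))⁻¹ ^ 3 := by
          push_cast
          ring
  have hnat : (k - 1) * (n * (n - 1)) ≤ n * n := by
    have h := (ENNReal.mul_le_mul_iff_left hC0 hCtop).mp hcast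
    exact_mod_cast h
  obtain ⟨m, rfl⟩ : ∃ m, n = m + 4 := ⟨n - 4, by omega⟩
  have e1 : k - 1 = m + 2 := by omega
  have e2 : m + 4 - 1 = m + 3 := by omega
  rw [e1, e2] at hnat
  nlinarith [hnat]

end AuxNoAvoid

/-- For every `n ≥ 4`, there is no avoidance coupling of `n - 1` walkers on
the looped complete graph `K_n^*`. -/
theorem no_avoidance_coupling_looped_n_sub_one (n : ℕ) (hn : 4 ≤ n) :
    ¬ AvoidanceCouplingLooped n (n - 1) := by
  rintro ⟨Ω, mΩ, μ, X, hP, hM, hW, hA⟩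
  have hk : (n - 1) + 1 = n := by omega
  have hA' : ∀ᵐ ω ∂μ,
      (∀ i j : Fin (n - 1), i ≠ j → X i 0 ω ≠ X j 0 ω) ∧
      (∀ (t : ℕ) (i j : Fin (n - 1)),
        (i < j → X j (t + 1) ω ≠ X i (t + 1) ω) ∧
        (j < i → X j (t + 1) ω ≠ X i t ω)) := hA
  exact aux_main μ hP hn hk X hM hW _ hA' (fun ω hG => hG.2)
end
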